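/- arXiv:math/0505689 — 7 statements merged into one kernel-verified Lean document; each statement's English description precedes it below -/
import Mathlib

section
/- Let M be a finite matroid. For any two cyclic flats A and B of M: (a) the closure cl(A ∪ B) is a cyclic flat of M, and it is the least cyclic flat of M containing both A and B; (b) the union of all circuits of M contained in A ∩ B is a cyclic flat of M, and it is the greatest cyclic flat of M contained in both A and B. Consequently, the cyclic flats of M, ordered by inclusion, form a lattice. -/
namespace Matroid

variable {α β : Type*}

/-- A circuit of a matroid: a minimal dependent set. -/
def IsCircuit' (M : Matroid α) (C : Set α) : Prop :=
  M.Dep C ∧ ∀ D, D ⊂ C → M.Indep D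

/-- A cyclic flat: a flat that is a (possibly empty) union of circuits. -/
def CyclicFlat (M : Matroid α) (X : Set α) : Prop :=
  M.IsFlat X ∧ ∀ e ∈ X, ∃ C, M.IsCircuit' C ∧ C ⊆ X ∧ e ∈ C

/-- The rank of a set: the maximum size of an independent subset. -/
noncomputable def rk (M : Matroid α) (X : Set α) : ℕ :=
  sSup {n | ∃ I, M.Indep I ∧ I ⊆ X ∧ I.ncard = n}

/-- Deletion of a set from a matroid. -/
def del (M : Matroid α) (D : Set α) : Matroid α := M ↾ (M.E \ D)

/-- Contraction of a set in a matroid. -/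
def con (M : Matroid α) (C : Set α) : Matroid α := (M✶ ↾ (M.E \ C))✶

/-- `N` is a minor of `M` if it is obtained from `M` by a contraction and a deletion. -/
def IsMinorOf (N M : Matroid α) : Prop := ∃ C D, N = (M.con C).del D

/-- Matroid isomorphism: a bijection of ground sets preserving independence. -/
def IsIsoTo (M : Matroid α) (N : Matroid β) : Prop :=
  ∃ e : M.E ≃ N.E, ∀ I : Set M.E,
    M.Indep (Subtype.val '' I) ↔ N.Indep (Subtype.val '' (e '' I))

lemma aux_closure_flat (M : Matroid α) (X : Set α) : M.IsFlat (M.closure X) := by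
  rw [closure_def]
  have hne : (M.E : Set α) ∈ {F | M.IsFlat F ∧ X ∩ M.E ⊆ F} :=
    ⟨M.ground_isFlat, Set.inter_subset_right⟩
  rw [Set.sInter_eq_iInter]
  haveI : Nonempty {F // F ∈ {F | M.IsFlat F ∧ X ∩ M.E ⊆ F}} := ⟨⟨M.E, hne⟩⟩
  exact IsFlat.iInter fun F => F.2.1

lemma aux_exists_circuit_subset (M : Matroid α) [M.Finite] {X : Set α} (hX : M.Dep X) :
    ∃ C, M.IsCircuit' C ∧ C ⊆ X := by
  have hfin : X.Finite := M.set_finite X hX.subset_ground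
  induction' hn : X.ncard using Nat.strong_induction_on with n ih generalizing X
  by_cases h : ∀ D, D ⊂ X → M.Indep D
  · exact ⟨X, ⟨hX, h⟩, subset_rfl⟩
  push_neg at h
  obtain ⟨D, hDX, hDind⟩ := h
  have hDdep : M.Dep D := dep_of_not_indep hDind (hDX.subset.trans hX.subset_ground)
  obtain ⟨C, hC, hCD⟩ := ih D.ncard
    (by exact Set.ncard_lt_ncard hDX hfin |>.trans_eq hn) hDdep
    (hfin.subset hDX.subset) rfl
  exact ⟨C, hC, hCD.trans hDX.subset⟩

lemma aux_fund_circuit (M : Matroid α) [M.Finite] {X : Set α} {e : α}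
    (hX : X ⊆ M.E) (he : e ∈ M.closure X) (heX : e ∉ X) :
    ∃ C, M.IsCircuit' C ∧ C ⊆ insert e X ∧ e ∈ C := by
  obtain ⟨I, hI⟩ := M.exists_isBasis X hX
  have heI : e ∈ M.closure I := by rwa [hI.closure_eq_closure]
  have hdep : M.Dep (insert e I) := by
    rw [hI.indep.insert_dep_iff]
    exact ⟨heI, fun h => heX (hI.subset h)⟩
  obtain ⟨C, hC, hCsub⟩ := M.aux_exists_circuit_subset hdep
  have heC : e ∈ C := by
    by_contra heC
    have : C ⊆ I := fun x hx => (hCsub hx).resolve_left (fun h => heC (h ▸ hx))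
    exact hC.1.not_indep (hI.indep.subset this)
  exact ⟨C, hC, hCsub.trans (Set.insert_subset_insert hI.subset), heC⟩

lemma IsCircuit'.aux_mem_closure_diff {M : Matroid α} {C : Set α} {e : α}
    (hC : M.IsCircuit' C) (he : e ∈ C) : e ∈ M.closure (C \ {e}) := by
  have hind : M.Indep (C \ {e}) := hC.2 _ (Set.sdiff_singleton_ssubset.2 he)
  have hd : M.Dep (insert e (C \ {e})) := by
    rw [Set.insert_diff_singleton, Set.insert_eq_self.2 he]; exact hC.1
  rw [hind.insert_dep_iff] at hd
  exact hd.1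

end Matroid

/-- For cyclic flats `A` and `B` of a finite matroid `M`: `cl (A ∪ B)` is a cyclic flat and is
the least cyclic flat containing both `A` and `B`; the union of all circuits contained in
`A ∩ B` is a cyclic flat and is the greatest cyclic flat contained in both `A` and `B`.
Consequently the cyclic flats of `M`, ordered by inclusion, form a lattice. -/
theorem cyclicFlats_form_lattice {α : Type*} (M : Matroid α) [M.Finite]
    (A B : Set α) (hA : M.CyclicFlat A) (hB : M.CyclicFlat B) :
    (M.CyclicFlat (M.closure (A ∪ B)) ∧
      A ⊆ M.closure (A ∪ B) ∧ B ⊆ M.closure (A ∪ B) ∧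
      ∀ Z, M.CyclicFlat Z → A ⊆ Z → B ⊆ Z → M.closure (A ∪ B) ⊆ Z) ∧
    (M.CyclicFlat (⋃₀ {C | M.IsCircuit' C ∧ C ⊆ A ∩ B}) ∧
      ⋃₀ {C | M.IsCircuit' C ∧ C ⊆ A ∩ B} ⊆ A ∧
      ⋃₀ {C | M.IsCircuit' C ∧ C ⊆ A ∩ B} ⊆ B ∧
      ∀ Z, M.CyclicFlat Z → Z ⊆ A → Z ⊆ B → Z ⊆ ⋃₀ {C | M.IsCircuit' C ∧ C ⊆ A ∩ B}) := by
  obtain ⟨hAflat, hAcyc⟩ := hA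
  obtain ⟨hBflat, hBcyc⟩ := hB
  have hAE : A ⊆ M.E := hAflat.subset_ground
  have hBE : B ⊆ M.E := hBflat.subset_ground
  have hABE : A ∪ B ⊆ M.E := Set.union_subset hAE hBE
  set F := M.closure (A ∪ B) with hF
  have hABF : A ∪ B ⊆ F := M.subset_closure _ hABE
  have hAF : A ⊆ F := Set.subset_union_left.trans hABF
  have hBF : B ⊆ F := Set.subset_union_right.trans hABF
  have hFE : F ⊆ M.E := M.closure_subset_ground _
  constructor
  · refine ⟨⟨M.aux_closure_flat _, ?_⟩, hAF, hBF, ?_⟩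
    · intro e he
      have key : e ∈ M.closure (F \ {e}) := by
        by_cases heA : e ∈ A
        · obtain ⟨C, hC, hCA, heC⟩ := hAcyc e heA
          exact M.closure_subset_closure
            (Set.diff_subset_diff_left (hCA.trans hAF)) (hC.aux_mem_closure_diff heC)
        by_cases heB : e ∈ B
        · obtain ⟨C, hC, hCB, heC⟩ := hBcyc e heB
          exact M.closure_subset_closure
            (Set.diff_subset_diff_left (hCB.trans hBF)) (hC.aux_mem_closure_diff heC)
        · refine M.closure_subset_closure_of_subset_closure ?_ he
          refine (Set.subset_diff_singleton hABF ?_).trans (M.subset_closure _ ?_)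
          · simp [heA, heB]
          · exact Set.diff_subset.trans hFE
      obtain ⟨C, hC, hCsub, heC⟩ :=
        M.aux_fund_circuit (Set.diff_subset.trans hFE) key (by simp)
      refine ⟨C, hC, ?_, heC⟩
      rwa [Set.insert_diff_singleton, Set.insert_eq_self.2 he] at hCsub
    · intro Z hZ hAZ hBZ
      have := M.closure_subset_closure (Set.union_subset hAZ hBZ)
      rwa [hZ.1.closure] at this
  · set D := ⋃₀ {C | M.IsCircuit' C ∧ C ⊆ A ∩ B} with hD
    have hDAB : D ⊆ A ∩ B := Set.sUnion_subset fun C hC => hC.2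
    have hDE : D ⊆ M.E := hDAB.trans (Set.inter_subset_left.trans hAE)
    have hclD : M.closure D = D := by
      refine Set.Subset.antisymm ?_ (M.subset_closure _ hDE)
      intro e he
      by_contra heD
      have heA : e ∈ A := by
        have := M.closure_subset_closure (hDAB.trans Set.inter_subset_left) he
        rwa [hAflat.closure] at this
      have heB : e ∈ B := by
        have := M.closure_subset_closure (hDAB.trans Set.inter_subset_right) he
        rwa [hBflat.closure] at this
      obtain ⟨C, hC, hCsub, heC⟩ := M.aux_fund_circuit hDE he heD
      have hCAB : C ⊆ A ∩ B :=
        hCsub.trans (Set.insert_subset ⟨heA, heB⟩ hDAB)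
      exact heD ⟨C, ⟨hC, hCAB⟩, heC⟩
    refine ⟨⟨?_, ?_⟩, hDAB.trans Set.inter_subset_left, hDAB.trans Set.inter_subset_right, ?_⟩
    · rw [← hclD]; exact M.aux_closure_flat _
    · rintro e ⟨C, hC, heC⟩
      exact ⟨C, hC.1, Set.subset_sUnion_of_mem hC, heC⟩
    · intro Z hZ hZA hZB e heZ
      obtain ⟨C, hC, hCZ, heC⟩ := hZ.2 e heZ
      exact ⟨C, ⟨hC, hCZ.trans (Set.subset_inter hZA hZB)⟩, heC⟩
end

section
/- For every finite lattice L there exists a finite matroid M such that L is order-isomorphic to the set of cyclic flats of M ordered by inclusion. -/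
open Set

section Aux

variable {L : Type*} [Lattice L] [Fintype L] [Nonempty L]

/-- ground type -/
abbrev GS (L : Type*) [Fintype L] : Type := Fin (Fintype.card L) × Fin (Fintype.card L + 1)

noncomputable def lab (L : Type*) [Fintype L] (p : GS L) : L := (Fintype.equivFin L).symm p.1

noncomputable def FF (x : L) : Set (GS L) := {p | lab L p ≤ x}

noncomputable def rr (x : L) : ℕ := {v : L | ¬ x ≤ v}.ncard

noncomputable def Fib (v : L) : Set (GS L) := {p | lab L p = v}

lemma rr_mono {x y : L} (h : x ≤ y) : rr x ≤ rr y :=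
  Set.ncard_le_ncard (fun v hv hyv => hv (h.trans hyv)) (Set.toFinite _)

lemma rr_lt_card (x : L) : rr x < Fintype.card L := by
  have h : {v : L | ¬ x ≤ v} ⊂ Set.univ := by
    refine ssubset_of_subset_of_ne (subset_univ _) ?_
    intro h
    have : x ∈ {v : L | ¬ x ≤ v} := h ▸ mem_univ x
    exact this le_rfl
  have := Set.ncard_lt_ncard h (Set.toFinite _)
  simpa [rr, Set.ncard_univ, Nat.card_eq_fintype_card] using this

lemma rr_strictMono {x y : L} (h : x < y) : rr x < rr y := by
  refine Set.ncard_lt_ncard ?_ (Set.toFinite _)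
  constructor
  · exact fun v hv hyv => hv (h.le.trans hyv)
  · intro hsub
    exact (hsub (show x ∈ {v : L | ¬ y ≤ v} from fun hyx => absurd (le_antisymm hyx h.le).symm h.ne)) le_rfl

lemma rr_submod (x y : L) : rr (x ⊔ y) + rr (x ⊓ y) ≤ rr x + rr y := by
  have hU : {v : L | ¬ x ⊔ y ≤ v} = {v : L | ¬ x ≤ v} ∪ {v : L | ¬ y ≤ v} := by
    ext v; simp [sup_le_iff]; tauto
  have hI : {v : L | ¬ x ⊓ y ≤ v} ⊆ {v : L | ¬ x ≤ v} ∩ {v : L | ¬ y ≤ v} :=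
    fun v hv => ⟨fun h => hv (inf_le_left.trans h), fun h => hv (inf_le_right.trans h)⟩
  have key := Set.ncard_union_add_ncard_inter {v : L | ¬ x ≤ v} {v : L | ¬ y ≤ v}
    (Set.toFinite _) (Set.toFinite _)
  have h2 : ({v : L | ¬ x ⊓ y ≤ v}).ncard ≤ ({v : L | ¬ x ≤ v} ∩ {v : L | ¬ y ≤ v}).ncard :=
    Set.ncard_le_ncard hI (Set.toFinite _)
  unfold rr
  rw [hU]
  omega


lemma FF_mono {x y : L} (h : x ≤ y) : FF x ⊆ FF y := fun p hp => le_trans hp h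

lemma FF_inter (x y : L) : FF x ∩ FF y = FF (x ⊓ y) := by
  ext p; simp [FF, le_inf_iff]

noncomputable def pt (x : L) : GS L := (Fintype.equivFin L x, 0)

lemma lab_pt (x : L) : lab L (pt x) = x := Equiv.symm_apply_apply _ _

lemma pt_mem_FF (x : L) : pt x ∈ FF x := by
  show lab L (pt x) ≤ x
  rw [lab_pt]

lemma FF_subset_iff {x y : L} : FF x ⊆ FF y ↔ x ≤ y := by
  refine ⟨fun h => ?_, FF_mono⟩
  have := h (pt_mem_FF x)
  rwa [show (pt x ∈ FF y) = (lab L (pt x) ≤ y) from rfl, lab_pt] at this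

lemma Fib_subset_FF {v x : L} (h : v ≤ x) : Fib v ⊆ FF x := by
  intro p hp
  show lab L p ≤ x
  rw [show lab L p = v from hp]
  exact h

lemma Fib_disjoint_FF {v y : L} (h : ¬ v ≤ y) : Fib v ∩ FF y = ∅ := by
  ext p
  simp only [Set.mem_inter_iff, Set.mem_empty_iff_false, iff_false]
  rintro ⟨h1, h2⟩
  exact h ((show lab L p = v from h1) ▸ h2)

lemma ncard_Fib (v : L) : (Fib v : Set (GS L)).ncard = Fintype.card L + 1 := by
  have : (Fib v : Set (GS L)) =
      (fun j : Fin (Fintype.card L + 1) => ((Fintype.equivFin L) v, j)) '' Set.univ := by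
    ext p
    simp only [Set.image_univ, Set.mem_range]
    constructor
    · intro hp
      refine ⟨p.2, ?_⟩
      have : p.1 = (Fintype.equivFin L) v := by
        have := (show lab L p = v from hp)
        rw [← this]
        simp [lab]
      rw [← this]
    · rintro ⟨j, rfl⟩
      show lab L _ = v
      simp [lab]
  rw [this, Set.ncard_image_of_injective _ (fun a b hab => by simpa [Prod.ext_iff] using hab),
    Set.ncard_univ]
  simp

/-- Key counting inequality. -/
lemma KI (z w y : L) : rr (z ⊔ w) ≤ rr y + ((FF z ∪ FF w : Set (GS L)) \ FF y).ncard := by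
  by_cases h : z ≤ y ∧ w ≤ y
  · exact le_trans (rr_mono (sup_le h.1 h.2)) (Nat.le_add_right _ _)
  · have : ∃ v : L, (FF v ⊆ FF z ∪ FF w) ∧ ¬ v ≤ y ∧ (Fib v ⊆ FF z ∪ FF w) := by
      rcases not_and_or.1 h with h' | h'
      · exact ⟨z, Set.subset_union_left, h', (Fib_subset_FF le_rfl).trans Set.subset_union_left⟩
      · exact ⟨w, Set.subset_union_right, h', (Fib_subset_FF le_rfl).trans Set.subset_union_right⟩
    obtain ⟨v, -, hvy, hvsub⟩ := this
    have hsub : Fib v ⊆ (FF z ∪ FF w : Set (GS L)) \ FF y := by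
      intro p hp
      refine ⟨hvsub hp, fun hpy => ?_⟩
      exact hvy ((show lab L p = v from hp) ▸ hpy)
    have h1 := Set.ncard_le_ncard hsub (Set.toFinite _)
    rw [ncard_Fib] at h1
    have h2 := rr_lt_card (z ⊔ w)
    omega

/-- Independence predicate of the matroid. -/
def IndepP (L : Type*) [Lattice L] [Fintype L] [Nonempty L] (I : Set (GS L)) : Prop :=
  ∀ x : L, (I ∩ FF x).ncard ≤ rr x


lemma indepP_empty : IndepP L ∅ := by
  intro x; simp

lemma indepP_subset {I J : Set (GS L)} (hJ : IndepP L J) (hIJ : I ⊆ J) : IndepP L I :=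
  fun x => le_trans (Set.ncard_le_ncard (Set.inter_subset_inter_left _ hIJ) (Set.toFinite _)) (hJ x)

lemma tight_sup {I : Set (GS L)} (hI : IndepP L I) {y1 y2 : L}
    (h1 : (I ∩ FF y1).ncard = rr y1) (h2 : (I ∩ FF y2).ncard = rr y2) :
    (I ∩ FF (y1 ⊔ y2)).ncard = rr (y1 ⊔ y2) := by
  have key := Set.ncard_union_add_ncard_inter (I ∩ FF y1) (I ∩ FF y2)
    (Set.toFinite _) (Set.toFinite _)
  have hU : (I ∩ FF y1) ∪ (I ∩ FF y2) = I ∩ (FF y1 ∪ FF y2) := (Set.inter_union_distrib_left _ _ _).symm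
  have hI2 : (I ∩ FF y1) ∩ (I ∩ FF y2) = I ∩ FF (y1 ⊓ y2) := by
    rw [← FF_inter]
    ext p; simp only [Set.mem_inter_iff]; tauto
  rw [hU, hI2, h1, h2] at key
  have e1 : (I ∩ FF (y1 ⊓ y2)).ncard ≤ rr (y1 ⊓ y2) := hI _
  have e2 : (I ∩ (FF y1 ∪ FF y2)).ncard ≤ (I ∩ FF (y1 ⊔ y2)).ncard :=
    Set.ncard_le_ncard (Set.inter_subset_inter_right _
      (Set.union_subset (FF_mono le_sup_left) (FF_mono le_sup_right))) (Set.toFinite _)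
  have e3 : (I ∩ FF (y1 ⊔ y2)).ncard ≤ rr (y1 ⊔ y2) := hI _
  have e4 := rr_submod y1 y2
  omega

lemma exists_tight {I A : Set (GS L)} (hI : IndepP L I) (hne : (A \ I).Nonempty)
    (hblock : ∀ e ∈ A \ I, ¬ IndepP L (insert e I)) :
    ∃ y : L, (I ∩ FF y).ncard = rr y ∧ A \ I ⊆ FF y := by
  have H : ∀ e, e ∈ A \ I → ∃ y : L, (I ∩ FF y).ncard = rr y ∧ e ∈ FF y := by
    intro e he
    have hb := hblock e he
    unfold IndepP at hb
    push_neg at hb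
    obtain ⟨x, hx⟩ := hb
    have heF : e ∈ FF x := by
      by_contra heF
      have : insert e I ∩ FF x = I ∩ FF x := by
        ext p
        simp only [Set.mem_inter_iff, Set.mem_insert_iff]
        constructor
        · rintro ⟨rfl | hpI, hpF⟩
          · exact absurd hpF heF
          · exact ⟨hpI, hpF⟩
        · rintro ⟨hpI, hpF⟩; exact ⟨Or.inr hpI, hpF⟩
      rw [this] at hx
      exact absurd (hI x) (not_le.2 hx)
    have hsub : insert e I ∩ FF x ⊆ insert e (I ∩ FF x) := by
      rintro p ⟨hp1 | hp1, hp2⟩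
      · exact Or.inl hp1
      · exact Or.inr ⟨hp1, hp2⟩
    have := Set.ncard_le_ncard hsub (Set.toFinite _)
    have hins := Set.ncard_insert_le e (I ∩ FF x)
    have := hI x
    exact ⟨x, by omega, heF⟩
  choose! f hf1 hf2 using H
  have hfin : (A \ I).Finite := Set.toFinite _
  have hne' : hfin.toFinset.Nonempty := by
    rwa [Set.Finite.toFinset_nonempty]
  refine ⟨hfin.toFinset.sup' hne' f, ?_, ?_⟩
  · exact Finset.sup'_induction (p := fun y : L => (I ∩ FF y).ncard = rr y) hne' f
      (fun a ha b hb => tight_sup hI ha hb)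
      (fun b hb => hf1 b (hfin.mem_toFinset.1 hb))
  · intro e he
    exact FF_mono (Finset.le_sup' f (hfin.mem_toFinset.2 he)) (hf2 e he)

lemma indepP_aug {I J : Set (GS L)} (hI : IndepP L I) (hJ : IndepP L J)
    (hlt : I.ncard < J.ncard) : ∃ e ∈ J, e ∉ I ∧ IndepP L (insert e I) := by
  by_contra hcon
  push_neg at hcon
  have hne : (J \ I).Nonempty := Set.diff_nonempty_of_ncard_lt_ncard hlt (Set.toFinite _)
  obtain ⟨y, hty, hsub⟩ := exists_tight hI hne (fun e he => hcon e he.1 he.2)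
  have c1 : (J ∩ FF y).ncard ≤ rr y := hJ y
  have c2 : (J \ I) ∪ (J ∩ I ∩ FF y) ⊆ J ∩ FF y := by
    rintro p (hp | hp)
    · exact ⟨hp.1, hsub hp⟩
    · exact ⟨hp.1.1, hp.2⟩
  have c3 : Disjoint (J \ I) (J ∩ I ∩ FF y) := by
    rw [Set.disjoint_left]
    rintro p hp hq
    exact hp.2 hq.1.2
  have c4 := Set.ncard_union_eq c3 (Set.toFinite _) (Set.toFinite _)
  have c5 := Set.ncard_le_ncard c2 (Set.toFinite _)
  have c6 : (I ∩ FF y) ⊆ (I \ J) ∪ (J ∩ I ∩ FF y) := by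
    rintro p ⟨hpI, hpF⟩
    by_cases hpJ : p ∈ J
    · exact Or.inr ⟨⟨hpJ, hpI⟩, hpF⟩
    · exact Or.inl ⟨hpI, hpJ⟩
  have c7 := Set.ncard_le_ncard c6 (Set.toFinite _)
  have c8 := Set.ncard_union_le (I \ J) (J ∩ I ∩ FF y)
  have c9 := Set.ncard_diff_add_ncard_of_subset (Set.inter_subset_left (s := I) (t := J)) (Set.toFinite _)
  have c10 := Set.ncard_diff_add_ncard_of_subset (Set.inter_subset_left (s := J) (t := I)) (Set.toFinite _)
  have c11 : I \ (I ∩ J) = I \ J := by ext p; simp only [Set.mem_diff, Set.mem_inter_iff]; tauto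
  have c12 : J \ (J ∩ I) = J \ I := by ext p; simp only [Set.mem_diff, Set.mem_inter_iff]; tauto
  have c13 : (I ∩ J).ncard = (J ∩ I).ncard := by rw [Set.inter_comm]
  rw [c11] at c9
  rw [c12] at c10
  omega

/-- The matroid. -/
noncomputable def MM (L : Type*) [Lattice L] [Fintype L] [Nonempty L] : Matroid (GS L) :=
  (IndepMatroid.ofFinite (Set.finite_univ)
    (IndepP L) indepP_empty (fun _ _ hJ h => indepP_subset hJ h)
    (fun _ _ hI hJ hlt => indepP_aug hI hJ hlt)
    (fun I _ => Set.subset_univ I)).matroid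

@[simp] lemma MM_indep {I : Set (GS L)} : (MM L).Indep I ↔ IndepP L I := by
  simp [MM]

@[simp] lemma MM_ground : (MM L).E = Set.univ := rfl


lemma MM_dep {D : Set (GS L)} : (MM L).Dep D ↔ ¬ IndepP L D := by
  rw [Matroid.dep_iff, MM_indep]
  simp [Set.subset_univ]

lemma flat_of_closure_eq {α : Type*} {M : Matroid α} {F : Set α} (h : M.closure F = F) :
    M.IsFlat F := by
  constructor
  · intro I X hIF hIX
    have hX : X ⊆ M.closure I := hIX.subset_closure
    rwa [hIF.closure_eq_closure, h] at hX
  · rw [← h]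
    exact M.closure_subset_ground F

/-- Any independent subset of `FF x` can be extended by any point outside `FF x`. -/
lemma indepP_insert_of_not_mem_FF {x : L} {I : Set (GS L)} (hI : IndepP L I)
    (hIF : I ⊆ FF x) {t : GS L} (ht : t ∉ FF x) : IndepP L (insert t I) := by
  intro y
  by_cases hty : t ∈ FF y
  · have hxy : x ⊓ y < y := by
      refine lt_of_le_of_ne inf_le_right (fun heq => ?_)
      have : y ≤ x := heq ▸ inf_le_left
      exact ht (FF_mono this hty)
    have hsub : I ∩ FF y ⊆ I ∩ FF (x ⊓ y) := by
      intro p hp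
      exact ⟨hp.1, (FF_inter x y) ▸ (⟨hIF hp.1, hp.2⟩ : p ∈ FF x ∩ FF y)⟩
    have h1 : (I ∩ FF y).ncard ≤ rr (x ⊓ y) :=
      le_trans (Set.ncard_le_ncard hsub (Set.toFinite _)) (hI _)
    have h2 := rr_strictMono hxy
    have hsub2 : insert t I ∩ FF y ⊆ insert t (I ∩ FF y) := by
      rintro p ⟨hp1 | hp1, hp2⟩
      · exact Or.inl hp1
      · exact Or.inr ⟨hp1, hp2⟩
    have h3 := Set.ncard_le_ncard hsub2 (Set.toFinite _)
    have h4 := Set.ncard_insert_le t (I ∩ FF y)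
    omega
  · have : insert t I ∩ FF y = I ∩ FF y := by
      ext p
      simp only [Set.mem_inter_iff, Set.mem_insert_iff]
      constructor
      · rintro ⟨rfl | hp, hpF⟩
        · exact absurd hpF hty
        · exact ⟨hp, hpF⟩
      · rintro ⟨hp, hpF⟩; exact ⟨Or.inr hp, hpF⟩
    rw [this]
    exact hI y

lemma flat_FF (x : L) : (MM L).IsFlat (FF x) := by
  apply flat_of_closure_eq
  refine subset_antisymm ?_ ((MM L).subset_closure (FF x) (Set.subset_univ _))
  obtain ⟨I, hIb⟩ := (MM L).exists_isBasis (FF x) (Set.subset_univ _)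
  rw [← hIb.closure_eq_closure]
  intro t ht
  by_contra htx
  have htI : t ∉ I := fun h => htx (hIb.subset h)
  have hins : (MM L).Indep (insert t I) :=
    MM_indep.2 (indepP_insert_of_not_mem_FF (MM_indep.1 hIb.indep) hIb.subset htx)
  exact ((hIb.indep.notMem_closure_iff (by simp)).2 ⟨hins, htI⟩) ht

/-- Each point lies on a circuit contained in the corresponding principal flat. -/
lemma exists_circuit_pt (e : GS L) :
    ∃ C, (MM L).IsCircuit' C ∧ C ⊆ FF (lab L e) ∧ e ∈ C := by
  set z := lab L e with hz
  have hcard : rr z ≤ (Fib z \ ({e} : Set (GS L))).ncard := by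
    have h1 : (Fib z : Set (GS L)).ncard ≤ (Fib z \ ({e} : Set (GS L))).ncard + 1 := by
      have : (Fib z : Set (GS L)) ⊆ insert e (Fib z \ {e}) := by
        intro p hp
        by_cases hpe : p = e
        · exact Or.inl hpe
        · exact Or.inr ⟨hp, hpe⟩
      exact le_trans (Set.ncard_le_ncard this (Set.toFinite _)) (Set.ncard_insert_le _ _)
    have h2 := ncard_Fib (L := L) z
    have h3 := rr_lt_card (L := L) z
    omega
  obtain ⟨T, hTsub, hTcard⟩ := Set.exists_subset_card_eq hcard
  have heT : e ∉ T := fun h => (hTsub h).2 rfl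
  have hTfib : T ⊆ Fib z := fun p hp => (hTsub hp).1
  set C : Set (GS L) := insert e T with hC
  have hCfib : C ⊆ Fib z := by
    intro p hp
    rcases hp with rfl | hp
    · exact hz.symm
    · exact hTfib hp
  have hCcard : C.ncard = rr z + 1 := by
    rw [hC, Set.ncard_insert_of_notMem heT (Set.toFinite _), hTcard]
  have hCFF : C ⊆ FF z := hCfib.trans (Fib_subset_FF le_rfl)
  have hCdep : ¬ IndepP L C := by
    intro h
    have := h z
    rw [Set.inter_eq_self_of_subset_left hCFF] at this
    omega
  have hproper : ∀ D, D ⊂ C → IndepP L D := by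
    intro D hD
    have hDcard : D.ncard < C.ncard := Set.ncard_lt_ncard hD (Set.toFinite _)
    intro y
    by_cases hzy : z ≤ y
    · have := Set.ncard_le_ncard (Set.inter_subset_left (s := D) (t := FF y)) (Set.toFinite _)
      have := rr_mono hzy
      omega
    · have : D ∩ FF y = ∅ := by
        rw [← Set.subset_empty_iff, ← Fib_disjoint_FF hzy]
        exact Set.inter_subset_inter_left _ (hD.subset.trans hCfib)
      rw [this]
      simp
  refine ⟨C, ⟨MM_dep.2 hCdep, fun D hD => MM_indep.2 (hproper D hD)⟩, hCFF, Or.inl rfl⟩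

lemma cyclicFlat_FF (x : L) : (MM L).CyclicFlat (FF x) := by
  refine ⟨flat_FF x, fun e he => ?_⟩
  obtain ⟨C, hC, hCsub, heC⟩ := exists_circuit_pt e
  exact ⟨C, hC, hCsub.trans (FF_mono he), heC⟩


lemma circuit_shape {C : Set (GS L)} (hC : (MM L).IsCircuit' C) :
    ∃ y : L, C ⊆ FF y ∧ C.ncard = rr y + 1 ∧ ∀ y', C ⊆ FF y' → y ≤ y' := by
  classical
  set s : Finset L := Finset.univ.filter (fun y => C ⊆ FF y) with hs
  have htop : Finset.univ.sup' Finset.univ_nonempty (id : L → L) ∈ s := by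
    rw [hs, Finset.mem_filter]
    refine ⟨Finset.mem_univ _, fun p _ => ?_⟩
    exact Finset.le_sup' id (Finset.mem_univ _)
  have hsne : s.Nonempty := ⟨_, htop⟩
  set y := s.inf' hsne id with hy
  have hysub : C ⊆ FF y := by
    refine Finset.inf'_induction (p := fun y : L => C ⊆ FF y) hsne id ?_ ?_
    · intro a ha b hb
      rw [← FF_inter]
      exact Set.subset_inter ha hb
    · intro b hb
      exact (Finset.mem_filter.1 hb).2
  have hymin : ∀ y', C ⊆ FF y' → y ≤ y' := fun y' h =>
    Finset.inf'_le id (show y' ∈ s from Finset.mem_filter.2 ⟨Finset.mem_univ _, h⟩)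
  have hCdep : ¬ IndepP L C := MM_dep.1 hC.1
  unfold IndepP at hCdep
  push_neg at hCdep
  obtain ⟨y0, hy0⟩ := hCdep
  have hCy0 : C ⊆ FF y0 := by
    intro c hc
    by_contra hcF
    have hind := MM_indep.1 (hC.2 _ (Set.sdiff_singleton_ssubset.2 hc)) y0
    have heq : (C \ {c}) ∩ FF y0 = C ∩ FF y0 := by
      ext p
      simp only [Set.mem_inter_iff, Set.mem_diff, Set.mem_singleton_iff]
      constructor
      · rintro ⟨⟨h1, -⟩, h2⟩; exact ⟨h1, h2⟩
      · rintro ⟨h1, h2⟩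
        exact ⟨⟨h1, fun h => hcF (h ▸ h2)⟩, h2⟩
    rw [heq] at hind
    omega
  have hle := rr_mono (hymin y0 hCy0)
  have h7 : C ∩ FF y0 = C := Set.inter_eq_self_of_subset_left hCy0
  rw [h7] at hy0
  have hCne : C.Nonempty := by
    rw [← Set.ncard_pos (Set.toFinite _)]
    omega
  obtain ⟨c, hc⟩ := hCne
  have hind := MM_indep.1 (hC.2 _ (Set.sdiff_singleton_ssubset.2 hc)) y
  have h5 : (C \ {c}) ∩ FF y = C \ {c} :=
    Set.inter_eq_self_of_subset_left ((Set.diff_subset).trans hysub)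
  rw [h5] at hind
  have h6 : (C \ {c}).ncard + 1 = C.ncard := Set.ncard_diff_singleton_add_one hc (Set.toFinite _)
  exact ⟨y, hysub, by omega, hymin⟩

lemma FF_subset_of_circuit {X : Set (GS L)} (hX : (MM L).IsFlat X)
    {C : Set (GS L)} (hC : (MM L).IsCircuit' C) (hCX : C ⊆ X) {y : L}
    (hCy : C ⊆ FF y) (hcard : C.ncard = rr y + 1) : FF y ⊆ X := by
  intro f hf
  by_cases hfC : f ∈ C
  · exact hCX hfC
  have hCne : C.Nonempty := by
    rw [← Set.ncard_pos (Set.toFinite _)]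
    omega
  obtain ⟨c, hc⟩ := hCne
  set I0 : Set (GS L) := C \ {c} with hI0def
  have hI0 : (MM L).Indep I0 := hC.2 _ (Set.sdiff_singleton_ssubset.2 hc)
  have hfI0 : f ∉ I0 := fun h => hfC h.1
  have h6 : I0.ncard + 1 = C.ncard := Set.ncard_diff_singleton_add_one hc (Set.toFinite _)
  have hdep : (MM L).Dep (insert f I0) := by
    rw [MM_dep]
    intro hind
    have hval := hind y
    have heq : insert f I0 ∩ FF y = insert f I0 :=
      Set.inter_eq_self_of_subset_left
        (Set.insert_subset hf ((Set.diff_subset).trans hCy))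
    rw [heq, Set.ncard_insert_of_notMem hfI0 (Set.toFinite _)] at hval
    omega
  have hfcl : f ∈ (MM L).closure I0 := (hI0.mem_closure_iff_of_notMem hfI0).2 hdep
  have hmono := (MM L).closure_subset_closure (show I0 ⊆ X from (Set.diff_subset).trans hCX)
  exact hX.closure ▸ (hmono hfcl)

lemma FF_bot_subset_flat {X : Set (GS L)} (hX : (MM L).IsFlat X) :
    FF (Finset.univ.inf' Finset.univ_nonempty (id : L → L)) ⊆ X := by
  set b : L := Finset.univ.inf' Finset.univ_nonempty (id : L → L) with hb
  have hrrb : rr b = 0 := by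
    have : {v : L | ¬ b ≤ v} = ∅ := by
      ext v
      simp only [Set.mem_setOf_eq, Set.mem_empty_iff_false, iff_false, not_not]
      exact Finset.inf'_le id (Finset.mem_univ v)
    rw [rr, this, Set.ncard_empty]
  intro p hp
  have hdep : (MM L).Dep (insert p (∅ : Set (GS L))) := by
    rw [MM_dep]
    intro hind
    have hval := hind b
    have heq : insert p (∅ : Set (GS L)) ∩ FF b = {p} := by
      have h0 : insert p (∅ : Set (GS L)) = {p} := by ext q; simp
      rw [h0]
      exact Set.inter_eq_self_of_subset_left (Set.singleton_subset_iff.2 hp)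
    rw [heq, Set.ncard_singleton, hrrb] at hval
    omega
  have hcl : p ∈ (MM L).closure ∅ :=
    ((MM L).empty_indep.mem_closure_iff_of_notMem (Set.notMem_empty p)).2 hdep
  exact hX.closure ▸ ((MM L).closure_subset_closure (Set.empty_subset X) hcl)

lemma FF_sup_subset {X : Set (GS L)} (hX : (MM L).IsFlat X) {z w : L}
    (hz : FF z ⊆ X) (hw : FF w ⊆ X) : FF (z ⊔ w) ⊆ X := by
  set A : Set (GS L) := FF z ∪ FF w with hA
  have hAX : A ⊆ X := Set.union_subset hz hw
  have hAsub : A ⊆ FF (z ⊔ w) := Set.union_subset (FF_mono le_sup_left) (FF_mono le_sup_right)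
  suffices hcl : FF (z ⊔ w) ⊆ (MM L).closure A by
    intro f hf
    exact hX.closure ▸ (((MM L).closure_subset_closure hAX) (hcl hf))
  intro f hf
  by_cases hfA : f ∈ A
  · exact (MM L).subset_closure A (Set.subset_univ _) hfA
  obtain ⟨I, hIb⟩ := (MM L).exists_isBasis A (Set.subset_univ _)
  rw [← hIb.closure_eq_closure]
  by_contra hfcl
  have hfI : f ∉ I := fun h => hfA (hIb.subset h)
  have hins : (MM L).Indep (insert f I) :=
    ((hIb.indep.notMem_closure_iff (by simp)).1 hfcl).1
  have hIi : IndepP L I := MM_indep.1 hIb.indep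
  have hsize : I.ncard + 1 ≤ rr (z ⊔ w) := by
    have hval := (MM_indep.1 hins) (z ⊔ w)
    have heq : insert f I ∩ FF (z ⊔ w) = insert f I :=
      Set.inter_eq_self_of_subset_left
        (Set.insert_subset hf (hIb.subset.trans hAsub))
    rw [heq, Set.ncard_insert_of_notMem hfI (Set.toFinite _)] at hval
    omega
  have hne : (A \ I).Nonempty := by
    by_contra h
    rw [Set.not_nonempty_iff_eq_empty, Set.diff_eq_empty] at h
    have h1 : (Fib z : Set (GS L)).ncard ≤ I.ncard :=
      Set.ncard_le_ncard (((Fib_subset_FF le_rfl).trans Set.subset_union_left).trans h)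
        (Set.toFinite _)
    rw [ncard_Fib] at h1
    have := rr_lt_card (z ⊔ w)
    omega
  have hblock : ∀ e ∈ A \ I, ¬ IndepP L (insert e I) := by
    intro e he hind
    exact he.2 (hIb.mem_of_insert_indep he.1 (MM_indep.2 hind))
  obtain ⟨y, hty, hsub⟩ := exists_tight hIi hne hblock
  have hAy : A \ FF y ⊆ I \ FF y := by
    intro p hp
    refine ⟨?_, hp.2⟩
    by_contra hpI
    exact hp.2 (hsub ⟨hp.1, hpI⟩)
  have c1 := Set.ncard_le_ncard hAy (Set.toFinite _)
  have c2 : (I \ (I ∩ FF y)).ncard + (I ∩ FF y).ncard = I.ncard :=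
    Set.ncard_diff_add_ncard_of_subset Set.inter_subset_left (Set.toFinite _)
  have c2' : I \ (I ∩ FF y) = I \ FF y := by
    ext p
    simp only [Set.mem_diff, Set.mem_inter_iff]
    tauto
  rw [c2'] at c2
  have c3 := KI z w y
  rw [← hA] at c3
  omega

lemma cyclicFlat_eq_FF {X : Set (GS L)} (hX : (MM L).CyclicFlat X) : ∃ x : L, X = FF x := by
  classical
  set s : Finset L := Finset.univ.filter (fun z => FF z ⊆ X) with hs
  have hbot : Finset.univ.inf' Finset.univ_nonempty (id : L → L) ∈ s :=
    Finset.mem_filter.2 ⟨Finset.mem_univ _, FF_bot_subset_flat hX.1⟩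
  have hsne : s.Nonempty := ⟨_, hbot⟩
  set x := s.sup' hsne id with hx
  have hxsub : FF x ⊆ X := by
    refine Finset.sup'_induction (p := fun z : L => FF z ⊆ X) hsne id ?_ ?_
    · intro a ha b hb
      exact FF_sup_subset hX.1 ha hb
    · intro b hb
      exact (Finset.mem_filter.1 hb).2
  have hXsub : X ⊆ FF x := by
    intro e he
    obtain ⟨C, hC, hCX, heC⟩ := hX.2 e he
    obtain ⟨y, hCy, hycard, hymin⟩ := circuit_shape hC
    have hyX : FF y ⊆ X := FF_subset_of_circuit hX.1 hC hCX hCy hycard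
    have hyx : y ≤ x :=
      Finset.le_sup' id (show y ∈ s from Finset.mem_filter.2 ⟨Finset.mem_univ _, hyX⟩)
    exact FF_mono hyx (hCy heC)
  exact ⟨x, subset_antisymm hXsub hxsub⟩

end Aux

/-- Every finite lattice is order-isomorphic to the lattice of cyclic flats of a finite
matroid, ordered by inclusion. -/
theorem exists_matroid_cyclicFlats_orderIso (L : Type*) [Lattice L] [Fintype L] [Nonempty L] :
    ∃ (α : Type) (M : Matroid α), M.Finite ∧
      Nonempty (L ≃o {X : Set α // M.CyclicFlat X}) := by
  refine ⟨GS L, MM L, ⟨Set.finite_univ⟩, ⟨?_⟩⟩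
  have hbij : Function.Bijective
      (fun x : L => (⟨FF x, cyclicFlat_FF x⟩ : {X : Set (GS L) // (MM L).CyclicFlat X})) := by
    constructor
    · intro a b hab
      have h : FF a = FF b := congrArg Subtype.val hab
      exact le_antisymm (FF_subset_iff.1 (h ▸ subset_rfl)) (FF_subset_iff.1 (h ▸ subset_rfl))
    · rintro ⟨X, hXcf⟩
      obtain ⟨x, rfl⟩ := cyclicFlat_eq_FF hXcf
      exact ⟨x, rfl⟩
  exact { toEquiv := Equiv.ofBijective _ hbij,
          map_rel_iff' := by
            intro a b
            show (FF a ⊆ FF b) ↔ a ≤ b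
            exact FF_subset_iff }
end

section
/- For every finite lattice L there exists a finite matroid M such that L is order-isomorphic to the set of cyclic flats of M ordered by inclusion, and moreover the intersection of any two cyclic flats of M is again a cyclic flat of M (so the lattice of cyclic flats of M is a sublattice of the lattice of flats of M). -/
open Set

set_option linter.unusedSectionVars false
set_option maxHeartbeats 1000000

namespace CFC


open scoped Classical

variable {L : Type*} [Lattice L] [Fintype L] [Nonempty L]

noncomputable def bt (L : Type*) [Lattice L] [Fintype L] [Nonempty L] : L :=
  Finset.univ.inf' Finset.univ_nonempty id

lemma bt_le (z : L) : bt L ≤ z := Finset.inf'_le id (Finset.mem_univ z)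

noncomputable def ff (z : L) : ℕ := (Finset.univ.filter (fun w => ¬ z ≤ w)).card

lemma ff_bt : ff (bt L) = 0 := by
  simp only [ff, Finset.card_eq_zero, Finset.filter_eq_empty_iff]
  intro x _
  simp [bt_le x]

lemma ff_mono {z w : L} (h : z ≤ w) : ff z ≤ ff w := by
  apply Finset.card_le_card
  intro x hx
  simp only [Finset.mem_filter, Finset.mem_univ, true_and] at *
  exact fun hwx => hx (h.trans hwx)

lemma ff_strictMono {z w : L} (h : z < w) : ff z < ff w := by
  apply Finset.card_lt_card
  rw [Finset.ssubset_iff_of_subset]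
  · refine ⟨z, ?_, ?_⟩ <;> simp [h.not_ge, le_refl]
  · intro x hx
    simp only [Finset.mem_filter, Finset.mem_univ, true_and] at *
    exact fun hwx => hx (h.le.trans hwx)

lemma ff_submod (z w : L) : ff (z ⊔ w) + ff (z ⊓ w) ≤ ff z + ff w := by
  have h1 : Finset.univ.filter (fun x => ¬ (z ⊔ w) ≤ x)
      = Finset.univ.filter (fun x => ¬ z ≤ x) ∪ Finset.univ.filter (fun x => ¬ w ≤ x) := by
    ext x
    simp only [Finset.mem_filter, Finset.mem_univ, true_and, Finset.mem_union, sup_le_iff]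
    tauto
  have h2 : Finset.univ.filter (fun x => ¬ (z ⊓ w) ≤ x)
      ⊆ Finset.univ.filter (fun x => ¬ z ≤ x) ∩ Finset.univ.filter (fun x => ¬ w ≤ x) := by
    intro x
    simp only [Finset.mem_filter, Finset.mem_univ, true_and, Finset.mem_inter]
    intro hx
    exact ⟨fun h => hx (inf_le_left.trans h), fun h => hx (inf_le_right.trans h)⟩
  have h3 := Finset.card_union_add_card_inter
    (Finset.univ.filter (fun x : L => ¬ z ≤ x)) (Finset.univ.filter (fun x : L => ¬ w ≤ x))
  have h4 := Finset.card_le_card h2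
  unfold ff
  rw [h1]
  omega

lemma ff_lt_card (z : L) : ff z < Fintype.card L := by
  have h : Finset.univ.filter (fun w : L => ¬ z ≤ w) ⊂ Finset.univ := by
    rw [Finset.ssubset_iff_of_subset (Finset.filter_subset _ _)]
    exact ⟨z, Finset.mem_univ z, by simp⟩
  simpa [ff] using Finset.card_lt_card h

/-! ### The ground type -/

abbrev Amb (L : Type*) [Fintype L] : Type :=
  Fin (Fintype.card L) × Fin (Fintype.card L + 1)

noncomputable def gl (p : Amb L) : L := (Fintype.equivFin L).symm p.1

noncomputable def FF (z : L) : Set (Amb L) := {p | gl p ≠ bt L ∧ gl p ≤ z}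

noncomputable def fib (w : L) : Set (Amb L) := {p | gl p = w}

lemma mem_FF_iff {p : Amb L} {z : L} : p ∈ FF z ↔ (gl p ≠ bt L ∧ gl p ≤ z) := Iff.rfl

lemma mem_fib (p : Amb L) : p ∈ fib (gl p) := rfl

lemma FF_mono {z w : L} (h : z ≤ w) : FF z ⊆ FF w := fun _ hp => ⟨hp.1, hp.2.trans h⟩

lemma FF_inter (z w : L) : FF z ∩ FF w = FF (z ⊓ w) := by
  ext p
  simp only [FF, mem_inter_iff, mem_setOf_eq, le_inf_iff]
  tauto

lemma FF_union (z w : L) : FF z ∪ FF w ⊆ FF (z ⊔ w) :=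
  union_subset (FF_mono le_sup_left) (FF_mono le_sup_right)

lemma FF_bt : FF (bt L) = (∅ : Set (Amb L)) := by
  ext p
  simp only [FF, mem_setOf_eq, mem_empty_iff_false, iff_false, not_and]
  intro h1 h2
  exact h1 (le_antisymm h2 (bt_le _))

lemma fib_subset_FF {w z : L} (hw : w ≠ bt L) (hz : w ≤ z) : fib w ⊆ FF z := by
  intro p hp
  rw [mem_FF_iff]
  rw [fib, mem_setOf_eq] at hp
  rw [hp]
  exact ⟨hw, hz⟩

lemma fib_inter_FF {w z : L} (h : ¬ w ≤ z) : fib w ∩ FF z = ∅ := by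
  ext p
  simp only [fib, FF, mem_inter_iff, mem_setOf_eq, mem_empty_iff_false, iff_false, not_and]
  intro hp _ hle
  exact h (hp ▸ hle)

lemma fib_ncard (w : L) : (fib w).ncard = Fintype.card L + 1 := by
  have h : fib (L := L) w
      = (fun i : Fin (Fintype.card L + 1) => ((Fintype.equivFin L) w, i)) '' univ := by
    ext p
    simp only [fib, gl, mem_setOf_eq, Equiv.symm_apply_eq, image_univ, mem_range]
    constructor
    · intro h
      exact ⟨p.2, Prod.ext h.symm rfl⟩
    · rintro ⟨i, rfl⟩
      rfl
  rw [h, ncard_image_of_injective _ (fun a b hab => by simpa using hab), ncard_univ]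
  simp

/-! ### Independence -/

def IndepP (X : Set (Amb L)) : Prop := ∀ z : L, (X ∩ FF z).ncard ≤ ff z

lemma indepP_empty : IndepP (∅ : Set (Amb L)) := by
  intro z
  simp

lemma indepP_subset {I J : Set (Amb L)} (hJ : IndepP J) (h : I ⊆ J) : IndepP I :=
  fun z => le_trans (ncard_le_ncard (inter_subset_inter_left _ h)) (hJ z)

def TightP (X : Set (Amb L)) (z : L) : Prop := (X ∩ FF z).ncard = ff z

lemma tight_bt (X : Set (Amb L)) : TightP X (bt L) := by
  simp [TightP, FF_bt, ff_bt]

lemma tight_sup {X : Set (Amb L)} (hX : IndepP X) {z w : L}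
    (hz : TightP X z) (hw : TightP X w) : TightP X (z ⊔ w) := by
  have h1 : (X ∩ FF z) ∪ (X ∩ FF w) = X ∩ (FF z ∪ FF w) := (inter_union_distrib_left _ _ _).symm
  have h2 : (X ∩ FF z) ∩ (X ∩ FF w) = X ∩ FF (z ⊓ w) := by
    rw [← FF_inter]
    ext x
    simp only [mem_inter_iff]
    tauto
  have key := ncard_union_add_ncard_inter (X ∩ FF z) (X ∩ FF w)
  rw [h1, h2] at key
  have h3 : (X ∩ (FF z ∪ FF w)).ncard ≤ (X ∩ FF (z ⊔ w)).ncard :=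
    ncard_le_ncard (inter_subset_inter_right _ (FF_union _ _))
  have h4 := hX (z ⊔ w)
  have h5 := hX (z ⊓ w)
  have h6 := ff_submod z w
  unfold TightP at hz hw ⊢
  rw [hz, hw] at key
  omega

lemma exists_tight {X : Set (Amb L)} (hX : IndepP X) {e : Amb L}
    (he : ¬ IndepP (insert e X)) : ∃ z, TightP X z ∧ e ∈ FF z := by
  unfold IndepP at he
  push_neg at he
  obtain ⟨z, hz⟩ := he
  have hin : e ∈ FF z := by
    by_contra h
    have heq : insert e X ∩ FF z = X ∩ FF z := by
      ext x
      simp only [mem_inter_iff, mem_insert_iff]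
      constructor
      · rintro ⟨(rfl | hx), hf⟩
        · exact absurd hf h
        · exact ⟨hx, hf⟩
      · exact fun ⟨hx, hf⟩ => ⟨Or.inr hx, hf⟩
    rw [heq] at hz
    exact absurd (hX z) (not_le.mpr hz)
  have hsub : insert e X ∩ FF z ⊆ insert e (X ∩ FF z) := by
    intro x
    simp only [mem_inter_iff, mem_insert_iff]
    tauto
  have hc1 := ncard_le_ncard hsub
  have hc2 := ncard_insert_le e (X ∩ FF z)
  have hc3 := hX z
  exact ⟨z, by unfold TightP; omega, hin⟩

lemma exists_tight_sup {X D : Set (Amb L)} (hX : IndepP X)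
    (hD : ∀ e ∈ D, ¬ IndepP (insert e X)) :
    ∃ z : L, (X ∩ FF z).ncard = ff z ∧ D ⊆ FF z := by
  have h : ∀ e : Amb L, ∃ z : L, e ∈ D → (TightP X z ∧ e ∈ FF z) := by
    intro e
    by_cases he : e ∈ D
    · obtain ⟨z, hz⟩ := exists_tight hX (hD e he)
      exact ⟨z, fun _ => hz⟩
    · exact ⟨bt L, fun h' => absurd h' he⟩
  choose zf hzf using h
  set s : Finset L := insert (bt L) (D.toFinite.toFinset.image zf) with hs
  have hne : s.Nonempty := ⟨bt L, Finset.mem_insert_self _ _⟩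
  refine ⟨s.sup' hne id, ?_, ?_⟩
  · show TightP X (s.sup' hne id)
    apply Finset.sup'_induction
    · exact fun a ha b hb => tight_sup hX ha hb
    · intro b hb
      rcases Finset.mem_insert.mp hb with rfl | hb
      · exact tight_bt X
      · obtain ⟨e, he, rfl⟩ := Finset.mem_image.mp hb
        rw [Set.Finite.mem_toFinset] at he
        exact (hzf e he).1
  · intro e he
    have hmem : zf e ∈ s := Finset.mem_insert_of_mem
      (Finset.mem_image_of_mem zf (by rwa [Set.Finite.mem_toFinset]))
    exact FF_mono (Finset.le_sup' id hmem) ((hzf e he).2)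

lemma indepP_aug : ∀ ⦃I J : Set (Amb L)⦄, IndepP I → IndepP J → I.ncard < J.ncard →
    ∃ e ∈ J, e ∉ I ∧ IndepP (insert e I) := by
  intro X Y hX hY hlt
  by_contra hcon
  push_neg at hcon
  have hD : ∀ e ∈ Y \ X, ¬ IndepP (insert e X) := fun e he => hcon e he.1 he.2
  obtain ⟨z, hzT, hzF⟩ := exists_tight_sup hX hD
  have h1 : (Y \ X) ∪ (X ∩ Y ∩ FF z) ⊆ Y ∩ FF z := by
    rintro x (hx | hx)
    · exact ⟨hx.1, hzF hx⟩
    · exact ⟨hx.1.2, hx.2⟩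
  have hdisj : Disjoint (Y \ X) (X ∩ Y ∩ FF z) :=
    Disjoint.mono_right (inter_subset_left.trans inter_subset_left) disjoint_sdiff_left
  have e1 : (Y \ X).ncard + (X ∩ Y ∩ FF z).ncard ≤ (Y ∩ FF z).ncard := by
    rw [← ncard_union_eq hdisj]
    exact ncard_le_ncard h1
  have e2 : (Y ∩ FF z).ncard ≤ ff z := hY z
  have e3 : (X ∩ FF z).ncard = ff z := hzT
  have h4 : X ∩ FF z ⊆ (X \ Y) ∪ (X ∩ Y ∩ FF z) := by
    intro x hx
    by_cases hxY : x ∈ Y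
    · exact Or.inr ⟨⟨hx.1, hxY⟩, hx.2⟩
    · exact Or.inl ⟨hx.1, hxY⟩
  have e4 : (X ∩ FF z).ncard ≤ (X \ Y).ncard + (X ∩ Y ∩ FF z).ncard :=
    le_trans (ncard_le_ncard h4) (ncard_union_le _ _)
  have e5 := ncard_inter_add_ncard_diff_eq_ncard X Y
  have e6 := ncard_inter_add_ncard_diff_eq_ncard Y X
  rw [inter_comm Y X] at e6
  omega


/-! ### The matroid -/


noncomputable def theM (L : Type*) [Lattice L] [Fintype L] [Nonempty L] : Matroid (Amb L) :=
  (IndepMatroid.ofFinite (Set.finite_univ) IndepP indepP_empty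
    (fun _ _ hJ h => indepP_subset hJ h) indepP_aug (fun I _ => subset_univ I)).matroid

lemma M_E : (theM L).E = univ := rfl

lemma M_indep {X : Set (Amb L)} : (theM L).Indep X ↔ IndepP X := by
  rw [theM, IndepMatroid.matroid_indep_iff, IndepMatroid.ofFinite_indep]

lemma M_dep {X : Set (Amb L)} : (theM L).Dep X ↔ ¬ IndepP X := by
  rw [Matroid.dep_iff, M_indep, M_E]
  simp [subset_univ]

instance : (theM L).Finite := ⟨by rw [M_E]; exact finite_univ⟩

/-! ### Maximum-size independent subsets -/

lemma exists_indep_ncard (Y : Set (Amb L)) (z₀ : L) (hY : Y ⊆ FF z₀)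
    (hbig : ∀ z : L, ¬ z₀ ≤ z → ff z₀ ≤ (Y \ FF z).ncard) :
    ∃ I, IndepP I ∧ I ⊆ Y ∧ I.ncard = ff z₀ := by
  have hfin : {I : Set (Amb L) | IndepP I ∧ I ⊆ Y}.Finite :=
    (Y.toFinite.finite_subsets).subset (fun I hI => hI.2)
  obtain ⟨I, hIS, hImax⟩ := Set.Finite.exists_maximalFor Set.ncard _ hfin
    ⟨∅, indepP_empty, empty_subset _⟩
  refine ⟨I, hIS.1, hIS.2, ?_⟩
  have hle : I.ncard ≤ ff z₀ := by
    have h' : I ∩ FF z₀ = I := inter_eq_self_of_subset_left (hIS.2.trans hY)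
    have := hIS.1 z₀
    rwa [h'] at this
  by_contra hne
  have hlt : I.ncard < ff z₀ := lt_of_le_of_ne hle hne
  have hD : ∀ e ∈ Y \ I, ¬ IndepP (insert e I) := by
    intro e he hi
    have hmemS : insert e I ∈ {I : Set (Amb L) | IndepP I ∧ I ⊆ Y} :=
      ⟨hi, insert_subset he.1 hIS.2⟩
    have hcard : I.ncard ≤ (insert e I).ncard := by
      rw [ncard_insert_of_notMem he.2]
      omega
    have := hImax hmemS hcard
    rw [ncard_insert_of_notMem he.2] at this
    omega
  obtain ⟨z, hzT, hzF⟩ := exists_tight_sup hIS.1 hD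
  by_cases hz : z₀ ≤ z
  · have h' : I ∩ FF z = I :=
      inter_eq_self_of_subset_left (hIS.2.trans (hY.trans (FF_mono hz)))
    rw [h'] at hzT
    have := ff_mono (L := L) hz
    omega
  · have h1 := hbig z hz
    have h2 : Y \ FF z ⊆ I := by
      intro x hx
      by_contra hxI
      exact hx.2 (hzF ⟨hx.1, hxI⟩)
    have := ncard_le_ncard h2
    omega

/-! ### Flats -/

lemma indepP_insert_of_not_mem_FF {I : Set (Amb L)} {z : L} (hI : IndepP I) (hIF : I ⊆ FF z)
    {x : Amb L} (hx : x ∉ FF z) : IndepP (insert x I) := by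
  intro w
  by_cases hxw : x ∈ FF w
  · have hlt : z ⊓ w < w := by
      refine lt_of_le_of_ne inf_le_right (fun h => ?_)
      exact hx ⟨hxw.1, by rw [← h] at hxw; exact hxw.2.trans inf_le_left⟩
    have h1 : insert x I ∩ FF w ⊆ insert x (I ∩ FF (z ⊓ w)) := by
      rintro y ⟨(rfl | hyI), hyF⟩
      · exact mem_insert _ _
      · refine mem_insert_of_mem _ ⟨hyI, ?_⟩
        rw [← FF_inter]
        exact ⟨hIF hyI, hyF⟩
    calc (insert x I ∩ FF w).ncard ≤ (I ∩ FF (z ⊓ w)).ncard + 1 :=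
          le_trans (ncard_le_ncard h1) (ncard_insert_le _ _)
      _ ≤ ff (z ⊓ w) + 1 := by have := hI (z ⊓ w); omega
      _ ≤ ff w := ff_strictMono hlt
  · have heq : insert x I ∩ FF w = I ∩ FF w := by
      ext y
      simp only [mem_inter_iff, mem_insert_iff]
      constructor
      · rintro ⟨(rfl | hy), hf⟩
        · exact absurd hf hxw
        · exact ⟨hy, hf⟩
      · exact fun ⟨hy, hf⟩ => ⟨Or.inr hy, hf⟩
    rw [heq]
    exact hI w

lemma FF_flat (z : L) : (theM L).IsFlat (FF z) := by
  refine ⟨?_, by rw [M_E]; exact subset_univ _⟩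
  intro I X hIF hIX
  have hIind : IndepP I := M_indep.mp hIF.indep
  have hIsub : I ⊆ FF z := hIF.subset
  intro x hxX
  by_contra hxF
  have hxcl : x ∈ (theM L).closure I := hIX.subset_closure hxX
  have hind : IndepP (insert x I) := indepP_insert_of_not_mem_FF hIind hIsub hxF
  rw [hIF.indep.mem_closure_iff] at hxcl
  rcases hxcl with hdep | hxI
  · exact (M_dep.mp hdep) hind
  · exact hxF (hIsub hxI)

/-! ### Circuits -/

lemma exists_circuit {I : Set (Amb L)} {e : Amb L} (hI : IndepP I) (heI : e ∉ I)
    (hdep : ¬ IndepP (insert e I)) :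
    ∃ C, (theM L).IsCircuit' C ∧ C ⊆ insert e I ∧ e ∈ C := by
  have hfin : {D : Set (Amb L) | D ⊆ insert e I ∧ ¬ IndepP D}.Finite :=
    ((insert e I).toFinite.finite_subsets).subset fun D hD => hD.1
  obtain ⟨C, hCT, hCmin⟩ := Set.Finite.exists_minimalFor Set.ncard _ hfin
    ⟨insert e I, Subset.rfl, hdep⟩
  have hCcirc : (theM L).IsCircuit' C := by
    constructor
    · exact M_dep.mpr hCT.2
    · intro D hD
      by_contra hDind
      have hDdep : ¬ IndepP D := fun h => hDind (M_indep.mpr h)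
      have hmem : D ∈ {D : Set (Amb L) | D ⊆ insert e I ∧ ¬ IndepP D} :=
        ⟨hD.subset.trans hCT.1, hDdep⟩
      have hlt : D.ncard < C.ncard := ncard_lt_ncard hD
      have := hCmin hmem (le_of_lt hlt)
      omega
  refine ⟨C, hCcirc, hCT.1, ?_⟩
  by_contra heC
  have hsub : C ⊆ I := by
    intro x hx
    rcases hCT.1 hx with rfl | h
    · exact absurd hx heC
    · exact h
  exact hCT.2 (indepP_subset hI hsub)

lemma FF_cyclic (z : L) : ∀ e ∈ FF z, ∃ C, (theM L).IsCircuit' C ∧ C ⊆ FF z ∧ e ∈ C := by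
  intro e he
  have hwbt : gl e ≠ bt L := he.1
  have hwz : gl e ≤ z := he.2
  have hYsub : fib (gl e) \ {e} ⊆ FF (gl e) :=
    diff_subset.trans (fib_subset_FF hwbt le_rfl)
  have hbig : ∀ z', ¬ gl e ≤ z' → ff (gl e) ≤ ((fib (gl e) \ {e}) \ FF z').ncard := by
    intro z' hz'
    have hnone : (fib (gl e) \ {e}) \ FF z' = fib (gl e) \ {e} := by
      rw [sdiff_eq_self_iff_disjoint]
      rw [Set.disjoint_left]
      intro x hx1 hx
      have : x ∈ fib (gl e) ∩ FF z' := ⟨hx.1, hx1⟩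
      rw [fib_inter_FF hz'] at this
      exact absurd this (notMem_empty x)
    rw [hnone]
    have hcard : (fib (gl e) \ {e}).ncard = Fintype.card L := by
      rw [ncard_diff_singleton_of_mem (mem_fib e), fib_ncard]
      omega
    rw [hcard]
    exact le_of_lt (ff_lt_card (gl e))
  obtain ⟨I, hI, hIsub, hIcard⟩ := exists_indep_ncard _ (gl e) hYsub hbig
  have heI : e ∉ I := fun h => (hIsub h).2 rfl
  have hins : insert e I ⊆ FF (gl e) :=
    insert_subset (fib_subset_FF hwbt le_rfl (mem_fib e)) (hIsub.trans hYsub)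
  have hdep : ¬ IndepP (insert e I) := by
    intro h
    have h2 := h (gl e)
    rw [inter_eq_self_of_subset_left hins, ncard_insert_of_notMem heI, hIcard] at h2
    omega
  obtain ⟨C, hC, hCsub, heC⟩ := exists_circuit hI heI hdep
  exact ⟨C, hC, hCsub.trans (hins.trans (FF_mono hwz)), heC⟩


/-! ### Clone swaps -/


lemma swap_image_FF {e e' : Amb L} (h : gl e = gl e') (z : L) :
    (Equiv.swap e e') '' FF z = FF z := by
  have hmem : ∀ x, x ∈ FF z → (Equiv.swap e e') x ∈ FF z := by
    intro x hx
    rcases eq_or_ne x e with rfl | hxe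
    · rw [Equiv.swap_apply_left]
      exact ⟨h ▸ hx.1, h ▸ hx.2⟩
    rcases eq_or_ne x e' with rfl | hxe'
    · rw [Equiv.swap_apply_right]
      exact ⟨h.symm ▸ hx.1, h.symm ▸ hx.2⟩
    · rw [Equiv.swap_apply_of_ne_of_ne hxe hxe']
      exact hx
  apply Subset.antisymm
  · rintro _ ⟨x, hx, rfl⟩
    exact hmem x hx
  · intro x hx
    exact ⟨(Equiv.swap e e') x, hmem x hx, Equiv.swap_apply_self _ _ _⟩

lemma indepP_swap {e e' : Amb L} (h : gl e = gl e') (D : Set (Amb L)) :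
    IndepP ((Equiv.swap e e') '' D) ↔ IndepP D := by
  have haux : ∀ D : Set (Amb L), IndepP D → IndepP ((Equiv.swap e e') '' D) := by
    intro D hD z
    rw [← swap_image_FF h z, ← image_inter (Equiv.injective _),
      ncard_image_of_injective _ (Equiv.injective _)]
    exact hD z
  constructor
  · intro h1
    have h2 := haux _ h1
    rwa [image_image, funext (fun x => Equiv.swap_apply_self e e' x), image_id'] at h2
  · exact haux D

lemma circuit_swap {e e' : Amb L} (h : gl e = gl e') {C : Set (Amb L)}
    (hC : (theM L).IsCircuit' C) : (theM L).IsCircuit' ((Equiv.swap e e') '' C) := by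
  obtain ⟨hCd, hCmin⟩ := hC
  constructor
  · rw [M_dep] at hCd ⊢
    intro hi
    exact hCd ((indepP_swap h C).mp hi)
  · intro D hD
    have himg : (Equiv.swap e e') '' ((Equiv.swap e e') '' C) = C := by
      rw [image_image, funext (fun x => Equiv.swap_apply_self e e' x), image_id']
    have hD' : (Equiv.swap e e') '' D ⊂ C := by
      rw [← himg]
      exact ((Equiv.injective (Equiv.swap e e')).injOn.image_ssubset_image_iff (subset_univ _) (subset_univ _)).mpr hD
    have := hCmin _ hD'
    rw [M_indep] at this ⊢
    exact (indepP_swap h D).mp this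

/-! ### Every cyclic flat is some `FF z` -/

lemma cyclicFlat_eq_FF {X : Set (Amb L)} (hX : (theM L).CyclicFlat X) : ∃ z, X = FF z := by
  obtain ⟨hXflat, hXcyc⟩ := hX
  have hbt : ∀ e ∈ X, gl e ≠ bt L := by
    intro e he hbe
    obtain ⟨C, hC, hCX, heC⟩ := hXcyc e he
    have heF : ∀ z : L, e ∉ FF z := fun z hz => hz.1 hbe
    have hCd : ¬ IndepP C := M_dep.mp hC.1
    have hCe : ¬ IndepP (C \ {e}) := by
      intro hind
      apply hCd
      intro z
      have heq : C ∩ FF z = (C \ {e}) ∩ FF z := by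
        ext x
        simp only [mem_inter_iff, mem_diff, mem_singleton_iff]
        constructor
        · rintro ⟨hx1, hx2⟩
          refine ⟨⟨hx1, ?_⟩, hx2⟩
          rintro rfl
          exact heF z hx2
        · exact fun ⟨hx1, hx2⟩ => ⟨hx1.1, hx2⟩
      rw [heq]
      exact hind z
    exact hCe (M_indep.mp (hC.2 _ (sdiff_singleton_ssubset.mpr heC)))
  have hfib : ∀ e ∈ X, ∀ e', gl e' = gl e → e' ∈ X := by
    intro e he e' hge
    by_cases hee : e' = e
    · rwa [hee]
    obtain ⟨C, hC, hCX, heC⟩ := hXcyc e he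
    by_cases heC' : e' ∈ C
    · exact hCX heC'
    have hC' : (theM L).IsCircuit' ((Equiv.swap e e') '' C) := circuit_swap hge.symm hC
    have he'C' : e' ∈ (Equiv.swap e e') '' C := ⟨e, heC, Equiv.swap_apply_left e e'⟩
    have hJ : (Equiv.swap e e') '' C \ {e'} ⊆ X := by
      rintro x ⟨⟨y, hyC, rfl⟩, hx2⟩
      rcases eq_or_ne y e with rfl | hy
      · exact absurd (Equiv.swap_apply_left y e') hx2
      rcases eq_or_ne y e' with rfl | hy'
      · exact absurd hyC heC'
      · rw [Equiv.swap_apply_of_ne_of_ne hy hy']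
        exact hCX hyC
    have hJind : (theM L).Indep ((Equiv.swap e e') '' C \ {e'}) :=
      hC'.2 _ (sdiff_singleton_ssubset.mpr he'C')
    have hdep : (theM L).Dep (insert e' ((Equiv.swap e e') '' C \ {e'})) := by
      rw [insert_diff_singleton, insert_eq_of_mem he'C']
      exact hC'.1
    have hmemcl : e' ∈ (theM L).closure ((Equiv.swap e e') '' C \ {e'}) := by
      rw [hJind.mem_closure_iff]
      exact Or.inl hdep
    have hcl : (theM L).closure ((Equiv.swap e e') '' C \ {e'}) ⊆ X := by
      have := (theM L).closure_subset_closure hJ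
      rwa [hXflat.closure] at this
    exact hcl hmemcl
  set S : Finset L := Finset.univ.filter (fun w => fib w ⊆ X) with hS
  have hXrep : ∀ e ∈ X, gl e ∈ S := by
    intro e he
    simp only [hS, Finset.mem_filter, Finset.mem_univ, true_and]
    intro x hx
    exact hfib e he x hx
  by_cases hXe : X = ∅
  · exact ⟨bt L, by rw [hXe, FF_bt]⟩
  have hSne : S.Nonempty := by
    obtain ⟨e, he⟩ := nonempty_iff_ne_empty.mpr hXe
    exact ⟨gl e, hXrep e he⟩
  set z₀ := S.sup' hSne id with hz₀
  have hwS : ∀ w ∈ S, fib w ⊆ X := by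
    intro w hw
    simpa [hS] using hw
  have hXsub : X ⊆ FF z₀ := by
    intro e he
    exact ⟨hbt e he, Finset.le_sup' id (hXrep e he)⟩
  have hbig : ∀ z, ¬ z₀ ≤ z → ff z₀ ≤ (X \ FF z).ncard := by
    intro z hz
    have hex : ∃ w ∈ S, ¬ w ≤ z := by
      by_contra hcon
      push_neg at hcon
      exact hz (Finset.sup'_le hSne id hcon)
    obtain ⟨w, hwSm, hwz⟩ := hex
    have h1 : fib w ⊆ X \ FF z := by
      intro p hp
      refine ⟨hwS w hwSm hp, fun hpF => ?_⟩
      have : p ∈ fib w ∩ FF z := ⟨hp, hpF⟩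
      rw [fib_inter_FF hwz] at this
      exact absurd this (notMem_empty p)
    have h2 := ncard_le_ncard h1 (X \ FF z).toFinite
    rw [fib_ncard] at h2
    have := ff_lt_card (L := L) z₀
    omega
  obtain ⟨I, hI, hIsub, hIcard⟩ := exists_indep_ncard X z₀ hXsub hbig
  refine ⟨z₀, Subset.antisymm hXsub ?_⟩
  intro x hx
  by_cases hxI : x ∈ I
  · exact hIsub hxI
  have hdep : ¬ IndepP (insert x I) := by
    intro h
    have h2 := h z₀
    have hsub : insert x I ⊆ FF z₀ := insert_subset hx (hIsub.trans hXsub)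
    rw [inter_eq_self_of_subset_left hsub, ncard_insert_of_notMem hxI, hIcard] at h2
    omega
  have hmemcl : x ∈ (theM L).closure I := by
    rw [(M_indep.mpr hI).mem_closure_iff]
    exact Or.inl (M_dep.mpr hdep)
  have hcl : (theM L).closure I ⊆ X := by
    have := (theM L).closure_subset_closure hIsub
    rwa [hXflat.closure] at this
  exact hcl hmemcl

lemma FF_subset_iff {z w : L} : FF z ⊆ FF w ↔ z ≤ w := by
  constructor
  · intro h
    by_cases hz : z = bt L
    · rw [hz]; exact bt_le w
    have hgl : gl (((Fintype.equivFin L) z, 0) : Amb L) = z := by simp [gl]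
    have hp : (((Fintype.equivFin L) z, 0) : Amb L) ∈ FF z := by
      rw [FF, mem_setOf_eq, hgl]
      exact ⟨hz, le_rfl⟩
    have := h hp
    rw [FF, mem_setOf_eq, hgl] at this
    exact this.2
  · exact FF_mono


end CFC

/-- Every finite lattice is order-isomorphic to the lattice of cyclic flats of a finite
matroid in which, moreover, the intersection of any two cyclic flats is again a cyclic flat
(so the lattice of cyclic flats is a sublattice of the lattice of flats). -/
theorem exists_matroid_cyclicFlats_orderIso_inter_closed
    (L : Type*) [Lattice L] [Fintype L] [Nonempty L] :
    ∃ (α : Type) (M : Matroid α), M.Finite ∧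
      Nonempty (L ≃o {X : Set α // M.CyclicFlat X}) ∧
      ∀ X Y : Set α, M.CyclicFlat X → M.CyclicFlat Y → M.CyclicFlat (X ∩ Y) := by
  classical
  refine ⟨CFC.Amb L, CFC.theM L, ⟨by rw [CFC.M_E]; exact Set.finite_univ⟩, ?_, ?_⟩
  · have hcyc : ∀ z : L, (CFC.theM L).CyclicFlat (CFC.FF z) :=
      fun z => ⟨CFC.FF_flat z, CFC.FF_cyclic z⟩
    have hbij : Function.Bijective
        (fun z : L => (⟨CFC.FF z, hcyc z⟩ : {X : Set (CFC.Amb L) // (CFC.theM L).CyclicFlat X})) := by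
      constructor
      · intro a b hab
        have h : CFC.FF a = CFC.FF b := congrArg Subtype.val hab
        exact le_antisymm (CFC.FF_subset_iff.mp h.le) (CFC.FF_subset_iff.mp h.ge)
      · rintro ⟨X, hX⟩
        obtain ⟨z, hz⟩ := CFC.cyclicFlat_eq_FF hX
        exact ⟨z, Subtype.ext hz.symm⟩
    exact ⟨{ toEquiv := Equiv.ofBijective _ hbij,
             map_rel_iff' := by
               intro a b
               simp only [Equiv.ofBijective_apply, Subtype.mk_le_mk, Set.le_iff_subset]
               exact CFC.FF_subset_iff }⟩
  · intro X Y hX hY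
    obtain ⟨z, rfl⟩ := CFC.cyclicFlat_eq_FF hX
    obtain ⟨w, rfl⟩ := CFC.cyclicFlat_eq_FF hY
    rw [CFC.FF_inter]
    exact ⟨CFC.FF_flat _, CFC.FF_cyclic _⟩
end

section
/- Let M be a finite matroid with rank function r, and let X and Y be cyclic flats of M with X ⊊ Y. Then 0 < r(Y) − r(X) < |Y \ X|. -/
open Set

namespace Matroid

variable {α : Type*} {M : Matroid α} {I X : Set α}

lemma rk_le_of_indep [M.Finite] (hI : M.Indep I) (hIX : I ⊆ X) : I.ncard ≤ M.rk X := by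
  apply le_csSup
  · exact ⟨M.E.ncard, fun n ⟨J, hJ, _, hn⟩ ↦ hn ▸
      ncard_le_ncard hJ.subset_ground M.ground_finite⟩
  · exact ⟨I, hI, hIX, rfl⟩

lemma rk_eq_of_basis [M.Finite] (hI : M.IsBasis I X) : M.rk X = I.ncard := by
  refine le_antisymm (csSup_le ⟨0, ∅, M.empty_indep, empty_subset _, by simp⟩ ?_)
    (rk_le_of_indep hI.indep hI.subset)
  rintro n ⟨J, hJ, hJX, rfl⟩
  obtain ⟨J', hJ', hJJ'⟩ := hJ.subset_isBasis_of_subset hJX hI.subset_ground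
  have hcard := hJ'.encard_eq_encard hI
  have hJ'fin : J'.Finite := M.set_finite J' hJ'.indep.subset_ground
  have hIfin : I.Finite := M.set_finite I hI.indep.subset_ground
  calc J.ncard ≤ J'.ncard := ncard_le_ncard hJJ' hJ'fin
    _ = I.ncard := by rw [ncard_def, hcard, ← ncard_def]

end Matroid

/-- For cyclic flats `X ⊊ Y` of a finite matroid `M`, `0 < r Y - r X < |Y \ X|`. -/
theorem cyclicFlat_rank_strict {α : Type*} (M : Matroid α) [M.Finite]
    (X Y : Set α) (hX : M.CyclicFlat X) (hY : M.CyclicFlat Y) (hXY : X ⊂ Y) :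
    0 < (M.rk Y : ℤ) - (M.rk X : ℤ) ∧
      (M.rk Y : ℤ) - (M.rk X : ℤ) < ((Y \ X).ncard : ℤ) := by
  have hYE : Y ⊆ M.E := hY.1.subset_ground
  have hXE : X ⊆ M.E := hX.1.subset_ground
  have hYfin : Y.Finite := M.set_finite Y
  obtain ⟨e, heY, heX⟩ := exists_of_ssubset hXY
  -- Part 1 : M.rk X < M.rk Y
  obtain ⟨I, hI⟩ := M.exists_isBasis X hXE
  have hIcl : M.closure I = X := by rw [hI.closure_eq_closure, hX.1.closure]
  have heI : e ∉ I := fun h => heX (hI.subset h)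
  have hins : M.Indep (insert e I) := by
    rw [hI.indep.insert_indep_iff_of_notMem heI]
    exact ⟨hYE heY, by rw [hIcl]; exact heX⟩
  have hinsY : insert e I ⊆ Y := insert_subset heY (hI.subset.trans hXY.subset)
  obtain ⟨J, hJ, hJsub⟩ := hins.subset_isBasis_of_subset hinsY hYE
  have h1 : M.rk X < M.rk Y := by
    rw [Matroid.rk_eq_of_basis hI, Matroid.rk_eq_of_basis hJ]
    calc I.ncard < (insert e I).ncard := by
          rw [Set.ncard_insert_of_notMem heI (hYfin.subset (hI.subset.trans hXY.subset))]
          omega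
      _ ≤ J.ncard := Set.ncard_le_ncard hJsub (hYfin.subset hJ.subset)
  -- Part 2 : M.rk Y < M.rk X + (Y \ X).ncard
  obtain ⟨C, hC, hCY, heC⟩ := hY.2 e heY
  have hCe : M.Indep (C \ {e}) :=
    hC.2 _ ((Set.ssubset_iff_of_subset Set.diff_subset).mpr ⟨e, heC, fun h => h.2 rfl⟩)
  have hecl : e ∈ M.closure (C \ {e}) := by
    rw [hCe.mem_closure_iff]
    left
    rw [Set.insert_diff_singleton, Set.insert_eq_self.mpr heC]; exact hC.1
  have hYcl : Y ⊆ M.closure (Y \ {e}) := by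
    intro f hf
    rcases eq_or_ne f e with rfl | hfe
    · exact M.closure_mono (Set.diff_subset_diff_left hCY) hecl
    · exact M.mem_closure_of_mem ⟨hf, hfe⟩ (Set.diff_subset.trans hYE)
  obtain ⟨K, hK⟩ := M.exists_isBasis (Y \ {e}) (Set.diff_subset.trans hYE)
  have hKY : M.IsBasis K Y :=
    hK.indep.isBasis_of_subset_of_subset_closure (hK.subset.trans Set.diff_subset)
      (hYcl.trans (M.closure_subset_closure_of_subset_closure hK.subset_closure))
  have hKfin : K.Finite := hYfin.subset hKY.subset
  have h2 : M.rk Y < M.rk X + (Y \ X).ncard := by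
    rw [Matroid.rk_eq_of_basis hKY]
    have hsplit : K.ncard ≤ (K ∩ X).ncard + (K \ X).ncard := by
      nth_rewrite 1 [← Set.inter_union_diff K X]
      exact Set.ncard_union_le _ _
    have hKX : (K ∩ X).ncard ≤ M.rk X :=
      Matroid.rk_le_of_indep (hKY.indep.subset Set.inter_subset_left) Set.inter_subset_right
    have hKd : (K \ X).ncard < (Y \ X).ncard := by
      refine Set.ncard_lt_ncard ⟨fun f hf => ⟨hKY.subset hf.1, hf.2⟩, fun h => ?_⟩
        (hYfin.diff (t := X))
      have : e ∈ K \ X := h ⟨heY, heX⟩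
      exact (hK.subset this.1).2 rfl
    omega
  exact ⟨by omega, by omega⟩
end

section
/- Let M be a finite matroid with rank function r and closure operator cl, and let X and Y be cyclic flats of M. Let W be the union of all circuits of M contained in X ∩ Y. Then r(X) + r(Y) ≥ r(cl(X ∪ Y)) + r(W) + |(X ∩ Y) \ W|. -/
namespace Matroid

variable {α : Type*} {M : Matroid α} {I J X : Set α}

lemma aux_dep_circuit (M : Matroid α) [M.Finite] :
    ∀ n (D : Set α), D.ncard = n → M.Dep D → ∃ C, C ⊆ D ∧ M.IsCircuit' C := by
  intro n
  induction n using Nat.strong_induction_on with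
  | _ n ih =>
    intro D hcard hD
    by_cases h : ∀ D', D' ⊂ D → M.Indep D'
    · exact ⟨D, subset_rfl, hD, h⟩
    push_neg at h
    obtain ⟨D', hss, hdep⟩ := h
    have hD' : M.Dep D' := ⟨hdep, hss.subset.trans hD.subset_ground⟩
    have hfin : D.Finite := M.set_finite D hD.subset_ground
    obtain ⟨C, hCD, hC⟩ := ih D'.ncard (hcard ▸ Set.ncard_lt_ncard hss hfin) D' rfl hD'
    exact ⟨C, hCD.trans hss.subset, hC⟩

lemma aux_bdd [M.Finite] : BddAbove {n | ∃ I, M.Indep I ∧ I ⊆ X ∧ I.ncard = n} := by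
  refine ⟨M.E.ncard, ?_⟩
  rintro n ⟨I, hI, -, rfl⟩
  exact Set.ncard_le_ncard hI.subset_ground M.ground_finite

lemma aux_rk_basis' [M.Finite] (hI : M.IsBasis' I X) : M.rk X = I.ncard := by
  apply le_antisymm
  · refine csSup_le ⟨I.ncard, I, hI.indep, hI.subset, rfl⟩ ?_
    rintro n ⟨J, hJ, hJX, rfl⟩
    obtain ⟨J', hJ', hJJ'⟩ := hJ.subset_isBasis'_of_subset hJX
    have h1 : J'.ncard = I.ncard := by
      have := hJ'.encard_eq_encard hI
      rw [Set.ncard_def, this, ← Set.ncard_def]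
    exact h1 ▸ Set.ncard_le_ncard hJJ' (M.set_finite J' hJ'.indep.subset_ground)
  · exact le_csSup aux_bdd ⟨I, hI.indep, hI.subset, rfl⟩

lemma aux_indep_le_rk [M.Finite] (hJ : M.Indep J) (hJX : J ⊆ X) : J.ncard ≤ M.rk X :=
  le_csSup aux_bdd ⟨J, hJ, hJX, rfl⟩

lemma aux_rk_closure [M.Finite] (A : Set α) : M.rk (M.closure A) = M.rk A := by
  obtain ⟨I, hI⟩ := M.exists_isBasis' A
  rw [aux_rk_basis' hI, aux_rk_basis' hI.isBasis_closure_right.isBasis']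

end Matroid

/-- For cyclic flats `X` and `Y` of a finite matroid `M`, with `W` the union of all circuits
contained in `X ∩ Y`, we have `r X + r Y ≥ r (cl (X ∪ Y)) + r W + |(X ∩ Y) \ W|`. -/
theorem cyclicFlat_submodular {α : Type*} (M : Matroid α) [M.Finite]
    (X Y : Set α) (hX : M.CyclicFlat X) (hY : M.CyclicFlat Y) :
    M.rk (M.closure (X ∪ Y)) + M.rk (⋃₀ {C | M.IsCircuit' C ∧ C ⊆ X ∩ Y}) +
        ((X ∩ Y) \ ⋃₀ {C | M.IsCircuit' C ∧ C ⊆ X ∩ Y}).ncard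
      ≤ M.rk X + M.rk Y := by
  set W : Set α := ⋃₀ {C | M.IsCircuit' C ∧ C ⊆ X ∩ Y} with hW
  set Z : Set α := (X ∩ Y) \ W with hZ
  have hXE : X ⊆ M.E := hX.1.subset_ground
  have hYE : Y ⊆ M.E := hY.1.subset_ground
  have hXYE : X ∪ Y ⊆ M.E := Set.union_subset hXE hYE
  have hWXY : W ⊆ X ∩ Y := by
    rintro e ⟨C, ⟨-, hC⟩, he⟩
    exact hC he
  -- basis of W
  obtain ⟨I₀, hI₀⟩ := M.exists_isBasis' W
  have hI₀W : I₀ ⊆ W := hI₀.subset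
  -- I := I₀ ∪ Z is independent
  have hIXY : I₀ ∪ Z ⊆ X ∩ Y :=
    Set.union_subset (hI₀W.trans hWXY) Set.diff_subset
  have hIindep : M.Indep (I₀ ∪ Z) := by
    by_contra hdep
    have hDep : M.Dep (I₀ ∪ Z) := ⟨hdep, hIXY.trans (Set.inter_subset_left.trans hXE)⟩
    obtain ⟨C, hCI, hC⟩ := M.aux_dep_circuit _ _ rfl hDep
    have hCXY : C ⊆ X ∩ Y := hCI.trans hIXY
    have hCW : C ⊆ W := fun e he => Set.mem_sUnion.2 ⟨C, ⟨hC, hCXY⟩, he⟩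
    have hCI₀ : C ⊆ I₀ := by
      intro e he
      rcases hCI he with h | h
      · exact h
      · exact absurd (hCW he) h.2
    exact hC.1.not_indep (hI₀.indep.subset hCI₀)
  -- extend to a basis J of X ∪ Y
  obtain ⟨J, hJ, hIJ⟩ := hIindep.subset_isBasis_of_subset
    (hIXY.trans (Set.inter_subset_left.trans Set.subset_union_left)) hXYE
  have hJE : J ⊆ M.E := hJ.indep.subset_ground
  have hJfin : J.Finite := M.set_finite J hJE
  -- ranks
  have h1 : M.rk (M.closure (X ∪ Y)) = J.ncard := by
    rw [Matroid.aux_rk_closure, Matroid.aux_rk_basis' hJ.isBasis']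
  have h2 : M.rk W = I₀.ncard := Matroid.aux_rk_basis' hI₀
  have hI₀Z : Disjoint I₀ Z := Set.disjoint_left.2 fun e he hz => hz.2 (hI₀W he)
  have hI₀fin : I₀.Finite := M.set_finite I₀ hI₀.indep.subset_ground
  have hZfin : Z.Finite := M.set_finite Z ((Set.diff_subset.trans Set.inter_subset_left).trans hXE)
  have hIcard : (I₀ ∪ Z).ncard = I₀.ncard + Z.ncard :=
    Set.ncard_union_eq hI₀Z hI₀fin hZfin
  -- J ∩ X and J ∩ Y
  have hJX : (J ∩ X).ncard ≤ M.rk X :=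
    Matroid.aux_indep_le_rk (hJ.indep.subset Set.inter_subset_left) Set.inter_subset_right
  have hJY : (J ∩ Y).ncard ≤ M.rk Y :=
    Matroid.aux_indep_le_rk (hJ.indep.subset Set.inter_subset_left) Set.inter_subset_right
  have hunion : (J ∩ X) ∪ (J ∩ Y) = J := by
    rw [← Set.inter_union_distrib_left, Set.inter_eq_left.2 hJ.subset]
  have hinter : (J ∩ X) ∩ (J ∩ Y) = J ∩ (X ∩ Y) := by
    ext e; constructor
    · rintro ⟨⟨h1, h2⟩, ⟨h3, h4⟩⟩; exact ⟨h1, h2, h4⟩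
    · rintro ⟨h1, h2, h3⟩; exact ⟨⟨h1, h2⟩, ⟨h1, h3⟩⟩
  have hkey : (J ∩ X).ncard + (J ∩ Y).ncard = J.ncard + (J ∩ (X ∩ Y)).ncard := by
    rw [← Set.ncard_union_add_ncard_inter (J ∩ X) (J ∩ Y)
      (hJfin.subset Set.inter_subset_left) (hJfin.subset Set.inter_subset_left),
      hunion, hinter]
  have hIsub : I₀ ∪ Z ⊆ J ∩ (X ∩ Y) := Set.subset_inter hIJ hIXY
  have hIle : I₀.ncard + Z.ncard ≤ (J ∩ (X ∩ Y)).ncard := by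
    rw [← hIcard]
    exact Set.ncard_le_ncard hIsub (hJfin.subset Set.inter_subset_left)
  calc M.rk (M.closure (X ∪ Y)) + M.rk W + Z.ncard
      = J.ncard + (I₀.ncard + Z.ncard) := by rw [h1, h2]; ring
    _ ≤ J.ncard + (J ∩ (X ∩ Y)).ncard := by omega
    _ = (J ∩ X).ncard + (J ∩ Y).ncard := hkey.symm
    _ ≤ M.rk X + M.rk Y := add_le_add hJX hJY
end

section
/- Let S be a finite set, let Z be a collection of subsets of S, and let r : Z → ℤ. There exists a matroid M on S whose collection of cyclic flats is exactly Z and whose rank function restricted to Z is r, if and only if the following hold: (Z0) Z, ordered by inclusion, is a lattice (Z is nonempty and any two members of Z have a least upper bound X ∨ Y and a greatest lower bound X ∧ Y among the members of Z, with respect to inclusion); (Z1) r(0_Z) = 0, where 0_Z is the least member of Z; (Z2) for all X, Y ∈ Z with X ⊊ Y, 0 < r(Y) − r(X) < |Y \ X|; (Z3) for all X, Y ∈ Z, r(X) + r(Y) ≥ r(X ∨ Y) + r(X ∧ Y) + |(X ∩ Y) \ (X ∧ Y)|. -/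
namespace CFProof
open Matroid Set

variable {α : Type*} {M : Matroid α} {X Y I J C D B : Set α} {e f : α}

lemma rkSet_bddAbove (hE : M.E.Finite) (X : Set α) :
    BddAbove {n | ∃ I, M.Indep I ∧ I ⊆ X ∧ I.ncard = n} := by
  refine ⟨M.E.ncard, fun n ⟨I, hI, _, hn⟩ => ?_⟩
  exact hn ▸ ncard_le_ncard hI.subset_ground hE

lemma rk_eq_of_basis (hE : M.E.Finite) (hI : M.IsBasis I X) : M.rk X = I.ncard := by
  refine le_antisymm (csSup_le ⟨0, ∅, M.empty_indep, empty_subset _, by simp⟩ ?_)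
    (le_csSup (rkSet_bddAbove hE X) ⟨I, hI.indep, hI.subset, rfl⟩)
  rintro n ⟨J, hJ, hJX, rfl⟩
  obtain ⟨J', hJ', hJJ'⟩ := hJ.subset_isBasis_of_subset hJX hI.subset_ground
  have h1 : J'.encard = I.encard := hJ'.encard_eq_encard hI
  have h2 : J.ncard ≤ J'.ncard := ncard_le_ncard hJJ' (hE.subset hJ'.indep.subset_ground)
  rwa [show J'.ncard = I.ncard by rw [Set.ncard_def, h1, ← Set.ncard_def]] at h2

lemma rk_indep (hE : M.E.Finite) (hI : M.Indep I) : M.rk I = I.ncard :=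
  rk_eq_of_basis hE hI.isBasis_self

lemma le_rk_of_indep (hE : M.E.Finite) (hI : M.Indep I) (hIX : I ⊆ X) : I.ncard ≤ M.rk X :=
  le_csSup (rkSet_bddAbove hE X) ⟨I, hI, hIX, rfl⟩

lemma rk_mono (hE : M.E.Finite) (hXY : X ⊆ Y) : M.rk X ≤ M.rk Y := by
  refine csSup_le ⟨0, ∅, M.empty_indep, empty_subset _, by simp⟩ ?_
  rintro n ⟨J, hJ, hJX, rfl⟩
  exact le_rk_of_indep hE hJ (hJX.trans hXY)

lemma rk_closure (hE : M.E.Finite) (hX : X ⊆ M.E) : M.rk (M.closure X) = M.rk X := by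
  obtain ⟨I, hI⟩ := M.exists_isBasis X hX
  rw [rk_eq_of_basis hE hI.isBasis_closure_right, rk_eq_of_basis hE hI]

lemma rk_union_le (hE : M.E.Finite) (hX : X ⊆ M.E) (hB : B ⊆ M.E) :
    M.rk (X ∪ B) ≤ M.rk X + B.ncard := by
  obtain ⟨J, hJ⟩ := M.exists_isBasis (X ∪ B) (union_subset hX hB)
  rw [rk_eq_of_basis hE hJ]
  have hJfin : J.Finite := hE.subset hJ.indep.subset_ground
  have h1 : (J \ B).ncard ≤ M.rk X :=
    le_rk_of_indep hE (hJ.indep.subset diff_subset) (by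
      rintro x ⟨hxJ, hxB⟩; rcases hJ.subset hxJ with h | h; exact h; exact absurd h hxB)
  have h2 : (J ∩ B).ncard ≤ B.ncard := ncard_le_ncard inter_subset_right (hE.subset hB)
  have : J.ncard = (J \ B).ncard + (J ∩ B).ncard := by
    rw [← ncard_union_eq (disjoint_of_subset_right inter_subset_right disjoint_sdiff_left)
      (hJfin.subset diff_subset) (hJfin.subset inter_subset_left), diff_union_inter]
  omega

lemma rk_insert_le (hE : M.E.Finite) (hX : X ⊆ M.E) (he : e ∈ M.E) :
    M.rk (insert e X) ≤ M.rk X + 1 := by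
  have := rk_union_le hE hX (B := {e}) (by simpa)
  simpa [union_singleton, union_comm] using this

lemma rk_submod (hE : M.E.Finite) (hX : X ⊆ M.E) (hY : Y ⊆ M.E) :
    M.rk (X ∪ Y) + M.rk (X ∩ Y) ≤ M.rk X + M.rk Y := by
  obtain ⟨I, hI⟩ := M.exists_isBasis (X ∩ Y) ((inter_subset_left).trans hX)
  obtain ⟨J, hJ, hIJ⟩ := hI.indep.subset_isBasis_of_subset
    (hI.subset.trans (inter_subset_left.trans subset_union_left)) (union_subset hX hY)
  have hJfin : J.Finite := hE.subset hJ.indep.subset_ground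
  have hrU : M.rk (X ∪ Y) = J.ncard := rk_eq_of_basis hE hJ
  have hrI : M.rk (X ∩ Y) = I.ncard := rk_eq_of_basis hE hI
  have h1 : (J ∩ X).ncard ≤ M.rk X := le_rk_of_indep hE (hJ.indep.subset inter_subset_left)
    inter_subset_right
  have h2 : (J ∩ Y).ncard ≤ M.rk Y := le_rk_of_indep hE (hJ.indep.subset inter_subset_left)
    inter_subset_right
  have hsum : (J ∩ X).ncard + (J ∩ Y).ncard = ((J ∩ X) ∪ (J ∩ Y)).ncard
      + ((J ∩ X) ∩ (J ∩ Y)).ncard :=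
    (ncard_union_add_ncard_inter _ _ (hJfin.subset inter_subset_left)
      (hJfin.subset inter_subset_left)).symm
  have hU : (J ∩ X) ∪ (J ∩ Y) = J := by
    rw [← inter_union_distrib_left]; exact inter_eq_self_of_subset_left hJ.subset
  have hIsub : I ⊆ (J ∩ X) ∩ (J ∩ Y) := by
    intro x hx
    have hxXY := hI.subset hx
    exact ⟨⟨hIJ hx, hxXY.1⟩, hIJ hx, hxXY.2⟩
  have h3 : I.ncard ≤ ((J ∩ X) ∩ (J ∩ Y)).ncard :=
    ncard_le_ncard hIsub (hJfin.subset (inter_subset_left.trans inter_subset_left))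
  rw [hU] at hsum
  omega


lemma exists_circuit_of_dep (hE : M.E.Finite) (hD : M.Dep D) :
    ∃ C, C ⊆ D ∧ M.IsCircuit' C := by
  have hgen : ∀ n (D : Set α), D.ncard = n → M.Dep D → ∃ C, C ⊆ D ∧ M.IsCircuit' C := by
    intro n
    induction n using Nat.strong_induction_on with
    | _ n ih =>
      intro D hcard hD
      by_cases h : ∀ D' , D' ⊂ D → M.Indep D'
      · exact ⟨D, Subset.rfl, hD, h⟩
      push_neg at h
      obtain ⟨D', hD'sub, hD'⟩ := h
      have hdep : M.Dep D' := ⟨hD', hD'sub.subset.trans hD.subset_ground⟩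
      have hlt : D'.ncard < D.ncard :=
        ncard_lt_ncard hD'sub (hE.subset hD.subset_ground)
      obtain ⟨C, hCD', hC⟩ := ih D'.ncard (hcard ▸ hlt) D' rfl hdep
      exact ⟨C, hCD'.trans hD'sub.subset, hC⟩
  exact hgen D.ncard D rfl hD

lemma circuit_mem_closure (hC : M.IsCircuit' C) (heC : e ∈ C) :
    e ∈ M.closure (C \ {e}) := by
  have hind : M.Indep (C \ {e}) := hC.2 _ (sdiff_singleton_ssubset.mpr heC)
  rw [hind.mem_closure_iff]
  left
  rw [insert_diff_singleton, insert_eq_of_mem heC]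
  exact hC.1

lemma circuit_iff_rk (hE : M.E.Finite) (hX : X ⊆ M.E) (heX : e ∈ X) :
    (∃ C, M.IsCircuit' C ∧ C ⊆ X ∧ e ∈ C) ↔ M.rk (X \ {e}) = M.rk X := by
  constructor
  · rintro ⟨C, hC, hCX, heC⟩
    have hcl : e ∈ M.closure (X \ {e}) :=
      M.closure_subset_closure (diff_subset_diff_left hCX) (circuit_mem_closure hC heC)
    have hXcl : X ⊆ M.closure (X \ {e}) := by
      intro x hx
      rcases eq_or_ne x e with rfl | hne
      · exact hcl
      · exact M.subset_closure (X \ {e}) (diff_subset.trans hX) ⟨hx, hne⟩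
    refine le_antisymm (rk_mono hE diff_subset) ?_
    calc M.rk X ≤ M.rk (M.closure (X \ {e})) := rk_mono hE hXcl
    _ = M.rk (X \ {e}) := rk_closure hE (diff_subset.trans hX)
  · intro hrk
    obtain ⟨I, hI⟩ := M.exists_isBasis (X \ {e}) (diff_subset.trans hX)
    have heI : e ∉ I := fun h => (hI.subset h).2 rfl
    have hIfin : I.Finite := hE.subset hI.indep.subset_ground
    have hdep : M.Dep (insert e I) := by
      rw [← not_indep_iff (insert_subset (hX heX) hI.indep.subset_ground)]
      intro hind
      have h1 : (insert e I).ncard ≤ M.rk X :=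
        le_rk_of_indep hE hind (insert_subset heX (hI.subset.trans diff_subset))
      rw [ncard_insert_of_notMem heI hIfin] at h1
      have h2 : M.rk (X \ {e}) = I.ncard := rk_eq_of_basis hE hI
      omega
    obtain ⟨C, hCsub, hC⟩ := exists_circuit_of_dep hE hdep
    refine ⟨C, hC, ?_, ?_⟩
    · refine hCsub.trans (insert_subset heX (hI.subset.trans diff_subset))
    · by_contra heC
      have : C ⊆ I := fun x hx => ((hCsub hx).resolve_left (fun h => heC (h ▸ hx)))
      exact hC.1.1 (hI.indep.subset this)

lemma closure_flat' (M : Matroid α) (X : Set α) : M.IsFlat (M.closure X) := by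
  rw [closure_def, sInter_eq_iInter]
  have : Nonempty {F // F ∈ {F | M.IsFlat F ∧ X ∩ M.E ⊆ F}} :=
    ⟨⟨M.E, M.ground_isFlat, inter_subset_right⟩⟩
  exact IsFlat.iInter (fun F => F.2.1)

lemma mem_closure_iff_rk (hE : M.E.Finite) (hX : X ⊆ M.E) (he : e ∈ M.E) :
    e ∈ M.closure X ↔ M.rk (insert e X) = M.rk X := by
  constructor
  · intro hcl
    refine le_antisymm ?_ (rk_mono hE (subset_insert e X))
    calc M.rk (insert e X) ≤ M.rk (M.closure X) :=
          rk_mono hE (insert_subset hcl (M.subset_closure X hX))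
    _ = M.rk X := rk_closure hE hX
  · intro hrk
    obtain ⟨I, hI⟩ := M.exists_isBasis X hX
    have hI' : M.IsBasis I (insert e X) := by
      rw [isBasis_iff (insert_subset he hX)]
      refine ⟨hI.indep, hI.subset.trans (subset_insert e X), fun J hJ hIJ hJX => ?_⟩
      refine eq_of_subset_of_ncard_le hIJ ?_ (hE.subset hJ.subset_ground)
      calc J.ncard ≤ M.rk (insert e X) := le_rk_of_indep hE hJ hJX
      _ = M.rk X := hrk
      _ = I.ncard := rk_eq_of_basis hE hI
    have := hI'.subset_closure (mem_insert e X)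
    rwa [hI.closure_eq_closure] at this

lemma flat_iff_rk (hE : M.E.Finite) (hX : X ⊆ M.E) :
    M.IsFlat X ↔ ∀ e ∈ M.E \ X, M.rk (insert e X) = M.rk X + 1 := by
  constructor
  · rintro hF e ⟨heE, heX⟩
    have hne : M.rk (insert e X) ≠ M.rk X := fun h =>
      heX (hF.closure ▸ (mem_closure_iff_rk hE hX heE).mpr h)
    have h1 := rk_mono hE (M := M) (subset_insert e X)
    have h2 := rk_insert_le hE hX heE
    omega
  · intro h
    have hcl : M.closure X = X := by
      refine subset_antisymm ?_ (M.subset_closure X hX)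
      intro x hx
      have hxE : x ∈ M.E := M.closure_subset_ground X hx
      by_contra hxX
      have h1 := (mem_closure_iff_rk hE hX hxE).mp hx
      have h2 := h x ⟨hxE, hxX⟩
      omega
    rw [← hcl]
    exact closure_flat' M X

lemma cyclicFlat_iff_rk (hE : M.E.Finite) :
    M.CyclicFlat X ↔ X ⊆ M.E ∧ (∀ e ∈ X, M.rk (X \ {e}) = M.rk X) ∧
      (∀ e ∈ M.E \ X, M.rk (insert e X) = M.rk X + 1) := by
  constructor
  · rintro ⟨hF, hcyc⟩
    refine ⟨hF.subset_ground, fun e he => ?_, (flat_iff_rk hE hF.subset_ground).mp hF⟩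
    exact (circuit_iff_rk hE hF.subset_ground he).mp (hcyc e he)
  · rintro ⟨hX, h1, h2⟩
    exact ⟨(flat_iff_rk hE hX).mpr h2, fun e he => (circuit_iff_rk hE hX he).mpr (h1 e he)⟩


lemma rk_le_rk_diff_singleton_add_one (hE : M.E.Finite) (hX : X ⊆ M.E) (heX : e ∈ X) :
    M.rk X ≤ M.rk (X \ {e}) + 1 := by
  have h := rk_union_le hE (X := X \ {e}) (diff_subset.trans hX) (B := {e}) (by simpa using hX heX)
  have hu : X \ {e} ∪ {e} = X := by
    rw [diff_union_self, union_eq_self_of_subset_right (by simpa using heX)]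
  rw [hu] at h
  simpa using h

lemma rk_diff_coloops (hE : M.E.Finite) (hX : X ⊆ M.E) {T : Set α} (hT : T ⊆ X)
    (hco : ∀ e ∈ T, M.rk (X \ {e}) ≠ M.rk X) : M.rk (X \ T) + T.ncard ≤ M.rk X := by
  have hgen : ∀ n (T : Set α), T.ncard = n → T ⊆ X → (∀ e ∈ T, M.rk (X \ {e}) ≠ M.rk X) →
      M.rk (X \ T) + T.ncard ≤ M.rk X := by
    intro n
    induction n using Nat.strong_induction_on with
    | _ n ih =>
      intro T hcard hT hco
      rcases T.eq_empty_or_nonempty with rfl | ⟨e, heT⟩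
      · simp [rk_mono hE (diff_subset (s := X) (t := (∅ : Set α)))]
      have hTfin : T.Finite := (hE.subset hX).subset hT
      set T' := T \ {e} with hT'def
      have hT'card : T'.ncard < T.ncard := ncard_diff_singleton_lt_of_mem heT hTfin
      have ih' : M.rk (X \ T') + T'.ncard ≤ M.rk X :=
        ih T'.ncard (hcard ▸ hT'card) T' rfl (diff_subset.trans hT)
          (fun f hf => hco f (diff_subset hf))
      have hco_e : M.rk (X \ {e}) < M.rk X :=
        lt_of_le_of_ne (rk_mono hE diff_subset) (hco e heT)
      have hsub := rk_submod hE (X := X \ T') (Y := X \ {e}) (diff_subset.trans hX)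
        (diff_subset.trans hX)
      have hU : X \ T' ∪ X \ {e} = X := by
        rw [← diff_inter]
        have : T' ∩ {e} = ∅ := by
          ext x; simp only [hT'def, mem_inter_iff, mem_diff, mem_singleton_iff]; tauto
        rw [this, diff_empty]
      have hI : (X \ T') ∩ (X \ {e}) = X \ T := by
        ext x; simp only [hT'def, mem_inter_iff, mem_diff, mem_singleton_iff]
        constructor
        · rintro ⟨⟨h1, h2⟩, _, h4⟩; exact ⟨h1, fun hxT => h2 ⟨hxT, h4⟩⟩
        · rintro ⟨h1, h2⟩; exact ⟨⟨h1, fun h => h2 h.1⟩, h1, fun h => h2 (h ▸ heT)⟩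
      rw [hU, hI] at hsub
      have hTcard : T.ncard = T'.ncard + 1 := by
        rw [hT'def, ncard_diff_singleton_add_one heT hTfin]
      omega
  exact hgen T.ncard T rfl hT hco

/-- The "cyclic part" of a flat is a cyclic flat. -/
lemma cyc_cyclicFlat (hE : M.E.Finite) (hF : M.IsFlat X) :
    M.CyclicFlat {e | e ∈ X ∧ M.rk (X \ {e}) = M.rk X} := by
  set D := {e | e ∈ X ∧ M.rk (X \ {e}) = M.rk X} with hD
  have hXE := hF.subset_ground
  have hDX : D ⊆ X := fun e he => he.1
  have hDE : D ⊆ M.E := hDX.trans hXE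
  -- circuits within X stay within D
  have hcirc : ∀ C, M.IsCircuit' C → C ⊆ X → C ⊆ D := by
    intro C hC hCX f hfC
    exact ⟨hCX hfC, (circuit_iff_rk hE hXE (hCX hfC)).mp ⟨C, hC, hCX, hfC⟩⟩
  have hcyc : ∀ e ∈ D, ∃ C, M.IsCircuit' C ∧ C ⊆ D ∧ e ∈ C := by
    rintro e ⟨heX, hrk⟩
    obtain ⟨C, hC, hCX, heC⟩ := (circuit_iff_rk hE hXE heX).mpr hrk
    exact ⟨C, hC, hcirc C hC hCX, heC⟩
  refine ⟨?_, hcyc⟩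
  rw [flat_iff_rk hE hDE]
  rintro g ⟨hgE, hgD⟩
  have h1 := rk_mono hE (M := M) (subset_insert g D)
  have h2 := rk_insert_le hE hDE hgE
  by_contra hne
  have hgcl : g ∈ M.closure D := (mem_closure_iff_rk hE hDE hgE).mpr (by omega)
  by_cases hgX : g ∈ X
  · -- g is a coloop of X but in the closure of D ⊆ X \ {g}
    have hDXg : D ⊆ X \ {g} := fun x hx => ⟨hx.1, fun h => hgD (h ▸ hx)⟩
    have : g ∈ M.closure (X \ {g}) := M.closure_subset_closure hDXg hgcl
    have h3 : M.rk (insert g (X \ {g})) = M.rk (X \ {g}) :=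
      (mem_closure_iff_rk hE (diff_subset.trans hXE) hgE).mp this
    rw [insert_diff_singleton, insert_eq_of_mem hgX] at h3
    exact hgD ⟨hgX, h3.symm⟩
  · exact hgX (hF.closure ▸ M.closure_subset_closure hDX hgcl)

lemma cyclicFlat_subset_cyc (hE : M.E.Finite) (hXE : X ⊆ M.E) {W : Set α}
    (hW : M.CyclicFlat W) (hWX : W ⊆ X) : W ⊆ {e | e ∈ X ∧ M.rk (X \ {e}) = M.rk X} := by
  intro e heW
  obtain ⟨C, hC, hCW, heC⟩ := hW.2 e heW
  exact ⟨hWX heW, (circuit_iff_rk hE hXE (hWX heW)).mp ⟨C, hC, hCW.trans hWX, heC⟩⟩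

lemma flat_inter (hFX : M.IsFlat X) (hFY : M.IsFlat Y) : M.IsFlat (X ∩ Y) := by
  have h : M.closure (X ∩ Y) = X ∩ Y := by
    refine subset_antisymm ?_ (M.subset_closure _ (inter_subset_left.trans hFX.subset_ground))
    intro x hx
    exact ⟨hFX.closure ▸ M.closure_subset_closure inter_subset_left hx,
      hFY.closure ▸ M.closure_subset_closure inter_subset_right hx⟩
  rw [← h]; exact closure_flat' M _

lemma closure_union_cyclicFlat (hE : M.E.Finite) (hX : M.CyclicFlat X) (hY : M.CyclicFlat Y) :
    M.CyclicFlat (M.closure (X ∪ Y)) := by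
  have hUE : X ∪ Y ⊆ M.E := union_subset hX.1.subset_ground hY.1.subset_ground
  have hsub : X ∪ Y ⊆ M.closure (X ∪ Y) := M.subset_closure _ hUE
  refine ⟨closure_flat' M _, fun e he => ?_⟩
  by_cases heU : e ∈ X ∪ Y
  · rcases heU with h | h
    · obtain ⟨C, hC, hCX, heC⟩ := hX.2 e h
      exact ⟨C, hC, (hCX.trans subset_union_left).trans hsub, heC⟩
    · obtain ⟨C, hC, hCY, heC⟩ := hY.2 e h
      exact ⟨C, hC, (hCY.trans subset_union_right).trans hsub, heC⟩
  · obtain ⟨I, hI⟩ := M.exists_isBasis (X ∪ Y) hUE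
    have heI : e ∉ I := fun h => heU (hI.subset h)
    have hecl : e ∈ M.closure I := hI.closure_eq_closure ▸ he
    have hdep : M.Dep (insert e I) := by
      rcases (hI.indep.mem_closure_iff).mp hecl with h | h
      · exact h
      · exact absurd h heI
    obtain ⟨C, hCsub, hC⟩ := exists_circuit_of_dep hE hdep
    refine ⟨C, hC, ?_, ?_⟩
    · refine hCsub.trans (insert_subset he (hI.subset.trans hsub))
    · by_contra heC
      have : C ⊆ I := fun x hx => ((hCsub hx).resolve_left (fun h => heC (h ▸ hx)))
      exact hC.1.1 (hI.indep.subset this)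


lemma loops_cyclicFlat (hE : M.E.Finite) : M.CyclicFlat (M.closure ∅) := by
  have hrk0 : M.rk (M.closure ∅) = 0 := by
    rw [rk_closure hE (empty_subset _)]
    simpa using rk_indep hE M.empty_indep
  rw [cyclicFlat_iff_rk hE]
  refine ⟨M.closure_subset_ground _, fun e he => ?_, fun e he => ?_⟩
  · have := rk_mono hE (M := M) (diff_subset (s := M.closure ∅) (t := {e}))
    omega
  · have hne : M.rk (insert e (M.closure ∅)) ≠ M.rk (M.closure ∅) := by
      intro hEq
      refine he.2 ?_
      have := (mem_closure_iff_rk hE (M.closure_subset_ground _) he.1).mpr hEq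
      rwa [closure_closure] at this
    have h1 := rk_mono hE (M := M) (subset_insert e (M.closure ∅))
    have h2 := rk_insert_le hE (M.closure_subset_ground (∅ : Set α)) he.1
    omega

/-- Forward direction of the cyclic flat axioms. -/
lemma forward {α : Type*} {S : Set α} (hS : S.Finite) {Z : Set (Set α)} {r : Set α → ℤ}
    (M : Matroid α) (hME : M.E = S) (hcf : {X : Set α | M.CyclicFlat X} = Z)
    (hr : ∀ X ∈ Z, (M.rk X : ℤ) = r X) :
    (Z.Nonempty ∧
        (∀ X ∈ Z, ∀ Y ∈ Z, ∃ J ∈ Z, X ⊆ J ∧ Y ⊆ J ∧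
          ∀ W ∈ Z, X ⊆ W → Y ⊆ W → J ⊆ W) ∧
        (∀ X ∈ Z, ∀ Y ∈ Z, ∃ G ∈ Z, G ⊆ X ∧ G ⊆ Y ∧
          ∀ W ∈ Z, W ⊆ X → W ⊆ Y → W ⊆ G) ∧
        (∀ B ∈ Z, (∀ X ∈ Z, B ⊆ X) → r B = 0) ∧
        (∀ X ∈ Z, ∀ Y ∈ Z, X ⊂ Y →
          0 < r Y - r X ∧ r Y - r X < ((Y \ X).ncard : ℤ)) ∧
        (∀ X ∈ Z, ∀ Y ∈ Z, ∀ J ∈ Z, ∀ G ∈ Z,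
          (X ⊆ J ∧ Y ⊆ J ∧ ∀ W ∈ Z, X ⊆ W → Y ⊆ W → J ⊆ W) →
          (G ⊆ X ∧ G ⊆ Y ∧ ∀ W ∈ Z, W ⊆ X → W ⊆ Y → W ⊆ G) →
          r J + r G + (((X ∩ Y) \ G).ncard : ℤ) ≤ r X + r Y)) := by
  have hE : M.E.Finite := hME ▸ hS
  have hmem : ∀ W : Set α, M.CyclicFlat W ↔ W ∈ Z := fun W => Set.ext_iff.mp hcf W
  -- the canonical join
  have hJoin : ∀ X ∈ Z, ∀ Y ∈ Z, ∃ J ∈ Z, X ⊆ J ∧ Y ⊆ J ∧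
      ∀ W ∈ Z, X ⊆ W → Y ⊆ W → J ⊆ W := by
    intro X hX Y hY
    have cfX := (hmem X).mpr hX
    have cfY := (hmem Y).mpr hY
    have hUE : X ∪ Y ⊆ M.E := union_subset cfX.1.subset_ground cfY.1.subset_ground
    refine ⟨M.closure (X ∪ Y), (hmem _).mp (closure_union_cyclicFlat hE cfX cfY),
      subset_union_left.trans (M.subset_closure _ hUE),
      subset_union_right.trans (M.subset_closure _ hUE), fun W hW hXW hYW => ?_⟩
    have cfW := (hmem W).mpr hW
    have := M.closure_subset_closure (union_subset hXW hYW)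
    rwa [cfW.1.closure] at this
  -- the canonical meet
  have hMeet : ∀ X ∈ Z, ∀ Y ∈ Z, ∃ G ∈ Z, G ⊆ X ∧ G ⊆ Y ∧
      ∀ W ∈ Z, W ⊆ X → W ⊆ Y → W ⊆ G := by
    intro X hX Y hY
    have cfX := (hmem X).mpr hX
    have cfY := (hmem Y).mpr hY
    have hIF : M.IsFlat (X ∩ Y) := flat_inter cfX.1 cfY.1
    refine ⟨_, (hmem _).mp (cyc_cyclicFlat hE hIF), fun e he => he.1.1, fun e he => he.1.2,
      fun W hW hWX hWY => cyclicFlat_subset_cyc hE hIF.subset_ground ((hmem W).mpr hW)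
        (subset_inter hWX hWY)⟩
  refine ⟨⟨_, (hmem _).mp (loops_cyclicFlat hE)⟩, hJoin, hMeet, ?_, ?_, ?_⟩
  · -- Z1
    intro B hB hBle
    have hL : M.closure ∅ ∈ Z := (hmem _).mp (loops_cyclicFlat hE)
    have hBL : B ⊆ M.closure ∅ := hBle _ hL
    have h1 : M.rk B ≤ M.rk (M.closure ∅) := rk_mono hE hBL
    have h2 : M.rk (M.closure ∅) = 0 := by
      rw [rk_closure hE (empty_subset _)]
      simpa using rk_indep hE M.empty_indep
    have h3 := hr B hB
    omega
  · -- Z2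
    intro X hX Y hY hXY
    have cfX := (hmem X).mpr hX
    have cfY := (hmem Y).mpr hY
    have hYE := cfY.1.subset_ground
    have hXE := cfX.1.subset_ground
    obtain ⟨e, heY, heX⟩ := exists_of_ssubset hXY
    have hYXfin : (Y \ X).Finite := (hE.subset hYE).subset diff_subset
    -- strict increase
    have h1 : M.rk (insert e X) = M.rk X + 1 :=
      (flat_iff_rk hE hXE).mp cfX.1 e ⟨hYE heY, heX⟩
    have h2 : M.rk (insert e X) ≤ M.rk Y := rk_mono hE (insert_subset heY hXY.subset)
    -- upper bound
    have h3 : M.rk (Y \ {e}) = M.rk Y := ((cyclicFlat_iff_rk hE).mp cfY).2.1 e heY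
    have h4 : M.rk (Y \ {e}) ≤ M.rk (X ∪ ((Y \ X) \ {e})) := by
      refine rk_mono hE ?_
      rintro x ⟨hxY, hxe⟩
      by_cases hxX : x ∈ X
      · exact Or.inl hxX
      · exact Or.inr ⟨⟨hxY, hxX⟩, hxe⟩
    have h5 : M.rk (X ∪ ((Y \ X) \ {e})) ≤ M.rk X + ((Y \ X) \ {e}).ncard :=
      rk_union_le hE hXE ((diff_subset.trans diff_subset).trans hYE)
    have h6 : ((Y \ X) \ {e}).ncard + 1 = (Y \ X).ncard :=
      ncard_diff_singleton_add_one ⟨heY, heX⟩ hYXfin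
    have hrX := hr X hX
    have hrY := hr Y hY
    push_cast at *
    omega
  · -- Z3
    intro X hX Y hY J hJ G hG hJprop hGprop
    have cfX := (hmem X).mpr hX
    have cfY := (hmem Y).mpr hY
    have hXE := cfX.1.subset_ground
    have hYE := cfY.1.subset_ground
    have hIF : M.IsFlat (X ∩ Y) := flat_inter cfX.1 cfY.1
    set G0 := {e | e ∈ X ∩ Y ∧ M.rk ((X ∩ Y) \ {e}) = M.rk (X ∩ Y)} with hG0def
    have hG0 : G0 ∈ Z := (hmem _).mp (cyc_cyclicFlat hE hIF)
    have hJ0 : M.closure (X ∪ Y) ∈ Z := by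
      obtain ⟨J', hJ', _⟩ := hJoin X hX Y hY
      exact (hmem _).mp (closure_union_cyclicFlat hE cfX cfY)
    -- J is the closure of the union
    have hUE : X ∪ Y ⊆ M.E := union_subset hXE hYE
    have hJeq : J = M.closure (X ∪ Y) := by
      refine subset_antisymm
        (hJprop.2.2 _ hJ0 (subset_union_left.trans (M.subset_closure _ hUE))
          (subset_union_right.trans (M.subset_closure _ hUE))) ?_
      have cfJ := (hmem J).mpr hJ
      have := M.closure_subset_closure (union_subset hJprop.1 hJprop.2.1)
      rwa [cfJ.1.closure] at this
    -- G is the cyclic part of the intersection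
    have hGeq : G = G0 := by
      refine subset_antisymm
        (cyclicFlat_subset_cyc hE hIF.subset_ground ((hmem G).mpr hG)
          (subset_inter hGprop.1 hGprop.2.1)) ?_
      exact hGprop.2.2 _ hG0 (fun e he => he.1.1) (fun e he => he.1.2)
    have hsub := rk_submod hE hXE hYE
    have hclo : M.rk (M.closure (X ∪ Y)) = M.rk (X ∪ Y) := rk_closure hE hUE
    have hcol : M.rk ((X ∩ Y) \ ((X ∩ Y) \ G0)) + ((X ∩ Y) \ G0).ncard ≤ M.rk (X ∩ Y) := by
      refine rk_diff_coloops hE (inter_subset_left.trans hXE) diff_subset ?_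
      rintro e ⟨heXY, heG0⟩
      intro hEq
      exact heG0 ⟨heXY, hEq⟩
    have hG0sub : G0 ⊆ X ∩ Y := fun e he => he.1
    have hdd : (X ∩ Y) \ ((X ∩ Y) \ G0) = G0 := by
      rw [diff_diff_cancel_left hG0sub]
    rw [hdd] at hcol
    have hrX := hr X hX
    have hrY := hr Y hY
    have hrJ := hr J hJ
    have hrG := hr G hG
    rw [hJeq] at hrJ
    rw [hGeq] at hrG
    rw [hJeq, hGeq]
    rw [hclo] at hrJ
    push_cast at *
    omega


end CFProof

namespace CFBack
open Matroid Set

variable {α : Type*} {S : Set α} {Z : Set (Set α)} {r : Set α → ℤ}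

structure Hyp (S : Set α) (Z : Set (Set α)) (r : Set α → ℤ) : Prop where
  hS : S.Finite
  hZS : ∀ X ∈ Z, X ⊆ S
  hne : Z.Nonempty
  hjoin : ∀ X ∈ Z, ∀ Y ∈ Z, ∃ J ∈ Z, X ⊆ J ∧ Y ⊆ J ∧ ∀ W ∈ Z, X ⊆ W → Y ⊆ W → J ⊆ W
  hmeet : ∀ X ∈ Z, ∀ Y ∈ Z, ∃ G ∈ Z, G ⊆ X ∧ G ⊆ Y ∧ ∀ W ∈ Z, W ⊆ X → W ⊆ Y → W ⊆ G
  hZ1 : ∀ B ∈ Z, (∀ X ∈ Z, B ⊆ X) → r B = 0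
  hZ2 : ∀ X ∈ Z, ∀ Y ∈ Z, X ⊂ Y → 0 < r Y - r X ∧ r Y - r X < ((Y \ X).ncard : ℤ)
  hZ3 : ∀ X ∈ Z, ∀ Y ∈ Z, ∀ J ∈ Z, ∀ G ∈ Z,
      (X ⊆ J ∧ Y ⊆ J ∧ ∀ W ∈ Z, X ⊆ W → Y ⊆ W → J ⊆ W) →
      (G ⊆ X ∧ G ⊆ Y ∧ ∀ W ∈ Z, W ⊆ X → W ⊆ Y → W ⊆ G) →
      r J + r G + (((X ∩ Y) \ G).ncard : ℤ) ≤ r X + r Y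

namespace Hyp

variable (h : Hyp S Z r)
include h

lemma Zfin : Z.Finite := h.hS.finite_subsets.subset h.hZS

lemma exists_bot : ∃ B ∈ Z, ∀ X ∈ Z, B ⊆ X := by
  obtain ⟨B, hB, hmin⟩ := Set.Finite.exists_minimal h.Zfin h.hne
  refine ⟨B, hB, fun X hX => ?_⟩
  obtain ⟨G, hG, hGB, hGX, -⟩ := h.hmeet B hB X hX
  have := hmin hG hGB
  exact this.trans hGX

lemma rmono {X Y : Set α} (hX : X ∈ Z) (hY : Y ∈ Z) (hXY : X ⊆ Y) : r X ≤ r Y := by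
  rcases eq_or_ne X Y with rfl | hne
  · exact le_refl _
  · have := (h.hZ2 X hX Y hY ⟨hXY, fun hYX => hne (subset_antisymm hXY hYX)⟩).1
    omega

lemma rdiff_le {X Y : Set α} (hX : X ∈ Z) (hY : Y ∈ Z) (hXY : X ⊆ Y) :
    r Y ≤ r X + ((Y \ X).ncard : ℤ) := by
  rcases eq_or_ne X Y with rfl | hne
  · simp
  · have := (h.hZ2 X hX Y hY ⟨hXY, fun hYX => hne (subset_antisymm hXY hYX)⟩).2
    omega

lemma rnonneg {X : Set α} (hX : X ∈ Z) : 0 ≤ r X := by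
  obtain ⟨B, hB, hBle⟩ := h.exists_bot
  have h0 := h.hZ1 B hB hBle
  have := h.rmono hB hX (hBle X hX)
  omega

/-- The main chain inequality: `r F ≤ r G + |F \ G|`, with a strict version. -/
lemma chain {F G : Set α} (hF : F ∈ Z) (hG : G ∈ Z) (strict : Bool)
    (hstrict : strict → F ≠ G) :
    r F + (if strict then 1 else 0) ≤ r G + ((F \ G).ncard : ℤ) := by
  obtain ⟨J, hJ, hFJ, hGJ, hJmin⟩ := h.hjoin F hF G hG
  obtain ⟨H, hH, hHF, hHG, hHmax⟩ := h.hmeet F hF G hG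
  have hZ3 := h.hZ3 F hF G hG J hJ H hH ⟨hFJ, hGJ, hJmin⟩ ⟨hHF, hHG, hHmax⟩
  have hJF : r F ≤ r J := h.rmono hF hJ hFJ
  have hHFr : r F ≤ r H + ((F \ H).ncard : ℤ) := h.rdiff_le hH hF hHF
  -- decompose |F \ H| = |F \ G| + |(F ∩ G) \ H|
  have hdecomp : (F \ H).ncard = (F \ G).ncard + ((F ∩ G) \ H).ncard := by
    rw [← ncard_union_eq ?_ ((h.hS.subset (h.hZS F hF)).subset diff_subset)
        ((h.hS.subset ((h.hZS F hF).trans' inter_subset_left)).subset diff_subset)]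
    · congr 1
      ext x
      simp only [mem_diff, mem_union, mem_inter_iff]
      constructor
      · rintro ⟨hxF, hxH⟩
        by_cases hxG : x ∈ G
        · exact Or.inr ⟨⟨hxF, hxG⟩, hxH⟩
        · exact Or.inl ⟨hxF, hxG⟩
      · rintro (⟨hxF, hxG⟩ | ⟨⟨hxF, hxG⟩, hxH⟩)
        · exact ⟨hxF, fun hxH => hxG (hHG hxH)⟩
        · exact ⟨hxF, hxH⟩
    · exact disjoint_left.mpr (fun x hx hx' => hx.2 hx'.1.2)
  rcases strict with _ | _
  · simp only [if_neg Bool.false_ne_true, add_zero]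
    omega
  · simp only [if_pos rfl]
    have hneq := hstrict rfl
    -- either F \ G is nonempty or G \ F is nonempty
    by_cases hFG : F ⊆ G
    · -- then G \ F nonempty, F ⊊ J
      have hGF : ¬ G ⊆ F := fun hGF => hneq (subset_antisymm hFG hGF)
      obtain ⟨e, heG, heF⟩ := not_subset.mp hGF
      have hFJ' : F ⊂ J := ⟨hFJ, fun hJF' => heF (hJF' (hGJ heG))⟩
      have := (h.hZ2 F hF J hJ hFJ').1
      omega
    · -- F \ G nonempty, H ⊊ F
      obtain ⟨e, heF, heG⟩ := not_subset.mp hFG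
      have hHF' : H ⊂ F := ⟨hHF, fun hFH => heG (hHG (hFH heF))⟩
      have := (h.hZ2 H hH F hF hHF').2
      have hd2 : (F \ H).ncard = ((F \ G).ncard + ((F ∩ G) \ H).ncard) := hdecomp
      omega

lemma key1 {F G : Set α} (hF : F ∈ Z) (hG : G ∈ Z) : r F ≤ r G + ((F \ G).ncard : ℤ) := by
  have := h.chain hF hG false (by simp)
  simpa using this

lemma key2 {F G : Set α} (hF : F ∈ Z) (hG : G ∈ Z) (hne : F ≠ G) :
    r F + 1 ≤ r G + ((F \ G).ncard : ℤ) := by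
  have := h.chain hF hG true (fun _ => hne)
  simpa using this

end Hyp

/-- The candidate rank function. -/
noncomputable def rho (Z : Set (Set α)) (r : Set α → ℤ) (A : Set α) : ℤ :=
  sInf ((fun F => r F + ((A \ F).ncard : ℤ)) '' Z)

namespace Hyp
variable (h : Hyp S Z r)
include h

lemma rho_le {A F : Set α} (hF : F ∈ Z) : rho Z r A ≤ r F + ((A \ F).ncard : ℤ) :=
  csInf_le ((h.Zfin.image _).bddBelow) ⟨F, hF, rfl⟩

lemma rho_spec (A : Set α) : ∃ F ∈ Z, rho Z r A = r F + ((A \ F).ncard : ℤ) := by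
  have hmem : rho Z r A ∈ (fun F => r F + ((A \ F).ncard : ℤ)) '' Z :=
    Set.Nonempty.csInf_mem (h.hne.image _) (h.Zfin.image _)
  obtain ⟨F, hF, hEq⟩ := hmem
  exact ⟨F, hF, hEq.symm⟩

lemma rho_nonneg (A : Set α) : 0 ≤ rho Z r A := by
  obtain ⟨F, hF, hEq⟩ := h.rho_spec A
  have := h.rnonneg hF
  have : (0 : ℤ) ≤ ((A \ F).ncard : ℤ) := Int.natCast_nonneg _
  omega

lemma rho_mono {A B : Set α} (hB : B ⊆ S) (hAB : A ⊆ B) : rho Z r A ≤ rho Z r B := by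
  obtain ⟨F, hF, hEq⟩ := h.rho_spec B
  have hle : ((A \ F).ncard : ℤ) ≤ ((B \ F).ncard : ℤ) := by
    exact_mod_cast ncard_le_ncard (diff_subset_diff_left hAB) ((h.hS.subset hB).subset diff_subset)
  have := h.rho_le (A := A) hF
  omega

lemma rho_union_le {A B : Set α} (hA : A ⊆ S) (hB : B.Finite) :
    rho Z r (A ∪ B) ≤ rho Z r A + (B.ncard : ℤ) := by
  obtain ⟨F, hF, hEq⟩ := h.rho_spec A
  have hsub : (A ∪ B) \ F ⊆ (A \ F) ∪ B := by
    rintro x ⟨hx | hx, hxF⟩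
    · exact Or.inl ⟨hx, hxF⟩
    · exact Or.inr hx
  have h1 : ((A ∪ B) \ F).ncard ≤ (A \ F).ncard + B.ncard := by
    calc ((A ∪ B) \ F).ncard ≤ ((A \ F) ∪ B).ncard := by
          
          exact ncard_le_ncard hsub (Finite.union ((h.hS.subset hA).subset diff_subset) hB)
    _ ≤ (A \ F).ncard + B.ncard := ncard_union_le _ _
  have := h.rho_le (A := A ∪ B) hF
  omega

lemma rho_empty : rho Z r (∅ : Set α) = 0 := by
  obtain ⟨B, hB, hBle⟩ := h.exists_bot
  have h1 : rho Z r (∅ : Set α) ≤ 0 := by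
    have := h.rho_le (A := (∅ : Set α)) hB
    rw [h.hZ1 B hB hBle] at this
    simpa using this
  exact le_antisymm h1 (h.rho_nonneg _)

lemma rho_le_card (A : Set α) : rho Z r A ≤ (A.ncard : ℤ) := by
  obtain ⟨B, hB, hBle⟩ := h.exists_bot
  have := h.rho_le (A := A) hB
  rw [h.hZ1 B hB hBle] at this
  have h2 : (A \ B).ncard ≤ A.ncard := by
    rcases A.finite_or_infinite with hfin | hinf
    · exact ncard_le_ncard diff_subset hfin
    · rw [hinf.ncard]
      rcases (A \ B).finite_or_infinite with hfin2 | hinf2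
      · exfalso
        refine hinf ((hfin2.union (h.hS.subset (h.hZS B hB))).subset ?_)
        intro x hx
        by_cases hxB : x ∈ B
        · exact Or.inr hxB
        · exact Or.inl ⟨hx, hxB⟩
      · rw [hinf2.ncard]
  omega

lemma rho_eq_r {F : Set α} (hF : F ∈ Z) : rho Z r F = r F := by
  refine le_antisymm (by simpa using h.rho_le (A := F) hF) ?_
  obtain ⟨G, hG, hEq⟩ := h.rho_spec F
  rw [hEq]
  exact h.key1 hF hG

lemma rho_diff_singleton {F : Set α} (hF : F ∈ Z) {e : α} (he : e ∈ F) :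
    rho Z r (F \ {e}) = rho Z r F := by
  refine le_antisymm (h.rho_mono (h.hZS F hF) diff_subset) ?_
  obtain ⟨G, hG, hEq⟩ := h.rho_spec (F \ {e})
  rw [hEq, h.rho_eq_r hF]
  by_cases heG : e ∈ G
  · have hFG : (F \ {e}) \ G = F \ G := by
      ext x; simp only [mem_diff, mem_singleton_iff]
      exact ⟨fun ⟨⟨h1, _⟩, h3⟩ => ⟨h1, h3⟩,
        fun ⟨h1, h3⟩ => ⟨⟨h1, fun hx => h3 (hx ▸ heG)⟩, h3⟩⟩
    rw [hFG]
    exact h.key1 hF hG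
  · have hne : F ≠ G := fun hEq' => heG (hEq' ▸ he)
    have hkey := h.key2 hF hG hne
    have hFG : (F \ {e}) \ G = (F \ G) \ {e} := by
      ext x; simp only [mem_diff, mem_singleton_iff]; tauto
    have hcard : ((F \ G) \ {e}).ncard + 1 = (F \ G).ncard :=
      ncard_diff_singleton_add_one ⟨he, heG⟩ ((h.hS.subset (h.hZS F hF)).subset diff_subset)
    rw [hFG]
    omega

lemma rho_insert {F : Set α} (hF : F ∈ Z) {e : α} (heS : e ∈ S) (heF : e ∉ F) :
    rho Z r (insert e F) = rho Z r F + 1 := by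
  have hFS := h.hZS F hF
  refine le_antisymm ?_ ?_
  · have := h.rho_union_le (A := F) (B := {e}) hFS (finite_singleton e)
    rw [union_singleton] at this
    simpa using this
  · obtain ⟨G, hG, hEq⟩ := h.rho_spec (insert e F)
    rw [hEq, h.rho_eq_r hF]
    by_cases heG : e ∈ G
    · have hne : F ≠ G := fun hEq' => heF (hEq' ▸ heG)
      have hkey := h.key2 hF hG hne
      have hFG : insert e F \ G = F \ G := by
        ext x; simp only [mem_insert_iff, mem_diff]
        constructor
        · rintro ⟨rfl | hx, h3⟩
          · exact absurd heG h3
          · exact ⟨hx, h3⟩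
        · rintro ⟨h1, h3⟩; exact ⟨Or.inr h1, h3⟩
      rw [hFG]
      omega
    · have hkey := h.key1 hF hG
      have hFG : insert e F \ G = insert e (F \ G) := by
        rw [insert_diff_of_notMem _ heG]
      have hcard : (insert e (F \ G)).ncard = (F \ G).ncard + 1 :=
        ncard_insert_of_notMem (fun hx => heF hx.1)
          ((h.hS.subset hFS).subset diff_subset)
      rw [hFG, hcard]
      push_cast
      omega

end Hyp

/-- Inclusion-exclusion counting helper. -/
lemma ncard_add_ncard_le {α : Type*} {P Q U V : Set α} (hU : U.Finite) (hV : V.Finite)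
    (hPQU : P ∪ Q ⊆ U ∪ V) (hPQI : P ∩ Q ⊆ U ∩ V) :
    P.ncard + Q.ncard ≤ U.ncard + V.ncard := by
  have hPfin : P.Finite := (hU.union hV).subset (subset_union_left.trans hPQU)
  have hQfin : Q.Finite := (hU.union hV).subset (subset_union_right.trans hPQU)
  have h1 : P.ncard + Q.ncard = (P ∪ Q).ncard + (P ∩ Q).ncard :=
    (ncard_union_add_ncard_inter P Q hPfin hQfin).symm
  have h2 : U.ncard + V.ncard = (U ∪ V).ncard + (U ∩ V).ncard :=
    (ncard_union_add_ncard_inter U V hU hV).symm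
  have h3 : (P ∪ Q).ncard ≤ (U ∪ V).ncard := ncard_le_ncard hPQU (hU.union hV)
  have h4 : (P ∩ Q).ncard ≤ (U ∩ V).ncard :=
    ncard_le_ncard hPQI (hU.subset inter_subset_left)
  omega

namespace Hyp
variable (h : Hyp S Z r)
include h

lemma rho_submod {A B : Set α} (hA : A ⊆ S) (hB : B ⊆ S) :
    rho Z r (A ∪ B) + rho Z r (A ∩ B) ≤ rho Z r A + rho Z r B := by
  obtain ⟨F, hF, hFEq⟩ := h.rho_spec A
  obtain ⟨G, hG, hGEq⟩ := h.rho_spec B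
  obtain ⟨J, hJ, hFJ, hGJ, hJmin⟩ := h.hjoin F hF G hG
  obtain ⟨H, hH, hHF, hHG, hHmax⟩ := h.hmeet F hF G hG
  have hZ3 := h.hZ3 F hF G hG J hJ H hH ⟨hFJ, hGJ, hJmin⟩ ⟨hHF, hHG, hHmax⟩
  have hub := h.rho_le (A := A ∪ B) hJ
  have hlb := h.rho_le (A := A ∩ B) hH
  -- counting
  have hAfin : A.Finite := h.hS.subset hA
  have hBfin : B.Finite := h.hS.subset hB
  have c1 : ((A ∪ B) \ J).ncard ≤ ((A ∪ B) \ (F ∪ G)).ncard :=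
    ncard_le_ncard (diff_subset_diff_right (union_subset hFJ hGJ))
      ((hAfin.union hBfin).subset diff_subset)
  have c2 : ((A ∩ B) \ H).ncard ≤ ((A ∩ B) \ (F ∩ G)).ncard + ((F ∩ G) \ H).ncard := by
    have hsub : (A ∩ B) \ H ⊆ ((A ∩ B) \ (F ∩ G)) ∪ ((F ∩ G) \ H) := by
      rintro x ⟨hxAB, hxH⟩
      by_cases hxFG : x ∈ F ∩ G
      · exact Or.inr ⟨hxFG, hxH⟩
      · exact Or.inl ⟨hxAB, hxFG⟩
    calc ((A ∩ B) \ H).ncard ≤ (((A ∩ B) \ (F ∩ G)) ∪ ((F ∩ G) \ H)).ncard :=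
          ncard_le_ncard hsub (Finite.union ((hAfin.subset inter_subset_left).subset diff_subset)
            (((h.hS.subset (h.hZS F hF)).subset inter_subset_left).subset diff_subset))
    _ ≤ _ := ncard_union_le _ _
  have c3 : ((A ∪ B) \ (F ∪ G)).ncard + ((A ∩ B) \ (F ∩ G)).ncard ≤
      (A \ F).ncard + (B \ G).ncard := by
    refine ncard_add_ncard_le (hAfin.subset diff_subset) (hBfin.subset diff_subset) ?_ ?_
    · rintro x (⟨hx, hxFG⟩ | ⟨hx, hxFG⟩)
      · rcases hx with hx | hx
        · exact Or.inl ⟨hx, fun hF' => hxFG (Or.inl hF')⟩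
        · exact Or.inr ⟨hx, fun hG' => hxFG (Or.inr hG')⟩
      · by_cases hxF : x ∈ F
        · exact Or.inr ⟨hx.2, fun hG' => hxFG ⟨hxF, hG'⟩⟩
        · exact Or.inl ⟨hx.1, hxF⟩
    · rintro x ⟨⟨hx1, hxFG⟩, hx2, hxFG'⟩
      rcases hx2 with ⟨hxA, hxB⟩
      exact ⟨⟨hxA, fun hF' => hxFG (Or.inl hF')⟩, ⟨hxB, fun hG' => hxFG (Or.inr hG')⟩⟩
  push_cast at *
  omega

lemma rho_spanning {A T : Set α} (hA : A ⊆ S) (hT : T ⊆ S)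
    (hsp : ∀ e ∈ T, rho Z r (insert e A) = rho Z r A) : rho Z r (A ∪ T) = rho Z r A := by
  have hgen : ∀ n (T : Set α), T.ncard = n → T ⊆ S → (∀ e ∈ T, rho Z r (insert e A) = rho Z r A) →
      rho Z r (A ∪ T) = rho Z r A := by
    intro n
    induction n using Nat.strong_induction_on with
    | _ n ih =>
      intro T hcard hT hsp
      rcases T.eq_empty_or_nonempty with rfl | ⟨e, heT⟩
      · simp
      have hTfin : T.Finite := h.hS.subset hT
      set T' := T \ {e} with hT'def
      have hT'lt : T'.ncard < T.ncard := ncard_diff_singleton_lt_of_mem heT hTfin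
      have ih' : rho Z r (A ∪ T') = rho Z r A :=
        ih T'.ncard (hcard ▸ hT'lt) T' rfl (diff_subset.trans hT)
          (fun f hf => hsp f (diff_subset hf))
      have hsub := h.rho_submod (A := A ∪ T') (B := insert e A)
        (union_subset hA (diff_subset.trans hT)) (insert_subset (hT heT) hA)
      have hU : (A ∪ T') ∪ insert e A = A ∪ T := by
        ext x
        simp only [hT'def, mem_union, mem_insert_iff, mem_diff, mem_singleton_iff]
        constructor
        · rintro ((hx | ⟨hx, _⟩) | (rfl | hx)) <;> tauto
        · rintro (hx | hx)
          · tauto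
          · by_cases hxe : x = e
            · tauto
            · exact Or.inl (Or.inr ⟨hx, hxe⟩)
      have hmono : rho Z r A ≤ rho Z r ((A ∪ T') ∩ insert e A) :=
        h.rho_mono (inter_subset_right.trans (insert_subset (hT heT) hA))
          (subset_inter subset_union_left (subset_insert e A))
      have hmono2 : rho Z r A ≤ rho Z r (A ∪ T) :=
        h.rho_mono (union_subset hA hT) subset_union_left
      rw [hU, ih', hsp e heT] at hsub
      omega
  exact hgen T.ncard T rfl hT hsp

end Hyp


namespace Hyp
variable (h : Hyp S Z r)
include h

lemma indep_subset' {I J : Set α} (hJ : J ⊆ S ∧ rho Z r J = (J.ncard : ℤ)) (hIJ : I ⊆ J) :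
    I ⊆ S ∧ rho Z r I = (I.ncard : ℤ) := by
  have hIS : I ⊆ S := hIJ.trans hJ.1
  have hJfin : J.Finite := h.hS.subset hJ.1
  refine ⟨hIS, le_antisymm (h.rho_le_card I) ?_⟩
  have h1 : rho Z r (I ∪ (J \ I)) ≤ rho Z r I + (((J \ I)).ncard : ℤ) :=
    h.rho_union_le hIS (hJfin.subset diff_subset)
  rw [union_diff_cancel hIJ] at h1
  have h2 : J.ncard = I.ncard + (J \ I).ncard := by
    rw [← ncard_union_eq disjoint_sdiff_right (hJfin.subset hIJ) (hJfin.subset diff_subset),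
      union_diff_cancel hIJ]
  rw [hJ.2] at *
  push_cast at *
  omega

lemma indep_insert_rho {I : Set α} (hI : I ⊆ S ∧ rho Z r I = (I.ncard : ℤ)) {e : α}
    (heS : e ∈ S) (heI : e ∉ I)
    (hnot : ¬ (insert e I ⊆ S ∧ rho Z r (insert e I) = ((insert e I).ncard : ℤ))) :
    rho Z r (insert e I) = rho Z r I := by
  have hins : insert e I ⊆ S := insert_subset heS hI.1
  have hcard : (insert e I).ncard = I.ncard + 1 :=
    ncard_insert_of_notMem heI (h.hS.subset hI.1)
  have h1 : rho Z r I ≤ rho Z r (insert e I) := h.rho_mono hins (subset_insert e I)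
  have h2 : rho Z r (insert e I) ≤ rho Z r I + 1 := by
    have := h.rho_union_le (A := I) (B := {e}) hI.1 (finite_singleton e)
    rw [union_singleton] at this
    simpa using this
  have hne : rho Z r (insert e I) ≠ ((insert e I).ncard : ℤ) := fun hEq => hnot ⟨hins, hEq⟩
  rw [hcard] at hne
  push_cast at hne
  omega

/-- The matroid constructed from `(Z, r)`. -/
noncomputable def mat : Matroid α :=
  (IndepMatroid.ofFinite h.hS (fun I => I ⊆ S ∧ rho Z r I = (I.ncard : ℤ))
    ⟨empty_subset S, by simpa using h.rho_empty⟩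
    (fun I J hJ hIJ => h.indep_subset' hJ hIJ)
    (by
      intro I J hI hJ hlt
      by_contra hcon
      push_neg at hcon
      have hstep : ∀ e ∈ J \ I, rho Z r (insert e I) = rho Z r I := by
        rintro e ⟨heJ, heI⟩
        exact h.indep_insert_rho hI (hJ.1 heJ) heI (fun hh => hcon e heJ heI hh.1 hh.2)
      have hspan : rho Z r (I ∪ (J \ I)) = rho Z r I :=
        h.rho_spanning hI.1 (diff_subset.trans hJ.1) hstep
      rw [union_diff_self] at hspan
      have hmono : rho Z r J ≤ rho Z r (I ∪ J) :=
        h.rho_mono (union_subset hI.1 hJ.1) subset_union_right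
      rw [hspan, hI.2, hJ.2] at *
      omega)
    (fun I hI => hI.1)).matroid

end Hyp

namespace Hyp
variable (h : Hyp S Z r)
include h

lemma mat_E : h.mat.E = S := by
  simp [Hyp.mat]

lemma mat_indep_iff {I : Set α} :
    h.mat.Indep I ↔ (I ⊆ S ∧ rho Z r I = (I.ncard : ℤ)) := by
  simp [Hyp.mat]

lemma mat_E_finite : h.mat.E.Finite := by rw [h.mat_E]; exact h.hS

lemma rk_mat {A : Set α} (hA : A ⊆ S) : ((h.mat.rk A : ℤ)) = rho Z r A := by
  obtain ⟨I, hI⟩ := h.mat.exists_isBasis A (by rw [h.mat_E]; exact hA)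
  rw [CFProof.rk_eq_of_basis h.mat_E_finite hI]
  have hIind := h.mat_indep_iff.mp hI.indep
  have hstep : ∀ e ∈ A \ I, rho Z r (insert e I) = rho Z r I := by
    rintro e ⟨heA, heI⟩
    have hnot := hI.isBasis'.insert_not_indep (e := e) ⟨heA, heI⟩
    rw [h.mat_indep_iff] at hnot
    exact h.indep_insert_rho hIind (hA heA) heI hnot
  have hspan : rho Z r (I ∪ (A \ I)) = rho Z r I :=
    h.rho_spanning hIind.1 (diff_subset.trans hA) hstep
  rw [union_diff_cancel hI.subset] at hspan
  rw [hspan, hIind.2]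

lemma mat_cyclicFlat_iff {X : Set α} : h.mat.CyclicFlat X ↔ X ∈ Z := by
  rw [CFProof.cyclicFlat_iff_rk h.mat_E_finite, h.mat_E]
  constructor
  · rintro ⟨hXS, hcyc, hflat⟩
    obtain ⟨F, hF, hFEq⟩ := h.rho_spec X
    have hXfin : X.Finite := h.hS.subset hXS
    have hXF : X ⊆ F := by
      by_contra hcon
      obtain ⟨e, heX, heF⟩ := not_subset.mp hcon
      have h1 : (h.mat.rk (X \ {e}) : ℤ) = (h.mat.rk X : ℤ) := by
        exact_mod_cast hcyc e heX
      rw [h.rk_mat (diff_subset.trans hXS), h.rk_mat hXS] at h1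
      have h2 : rho Z r (X \ {e}) ≤ r F + (((X \ {e}) \ F).ncard : ℤ) := h.rho_le hF
      have h3 : (X \ {e}) \ F = (X \ F) \ {e} := by
        ext x; simp only [mem_diff, mem_singleton_iff]; tauto
      have h4 : ((X \ F) \ {e}).ncard + 1 = (X \ F).ncard :=
        ncard_diff_singleton_add_one ⟨heX, heF⟩ (hXfin.subset diff_subset)
      rw [h3] at h2
      rw [h1, hFEq] at *
      omega
    have hXFr : rho Z r X = r F := by
      rw [hFEq, diff_eq_empty.mpr hXF]
      simp
    have hFX : F ⊆ X := by
      by_contra hcon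
      obtain ⟨e, heF, heX⟩ := not_subset.mp hcon
      have heS : e ∈ S := h.hZS F hF heF
      have h1 : (h.mat.rk (insert e X) : ℤ) = (h.mat.rk X : ℤ) + 1 := by
        exact_mod_cast hflat e ⟨heS, heX⟩
      rw [h.rk_mat (insert_subset heS hXS), h.rk_mat hXS] at h1
      have h2 : rho Z r (insert e X) ≤ r F + (((insert e X) \ F).ncard : ℤ) := h.rho_le hF
      have h3 : (insert e X) \ F = X \ F := by
        ext x; simp only [mem_insert_iff, mem_diff]
        constructor
        · rintro ⟨rfl | hx, h3⟩
          · exact absurd heF h3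
          · exact ⟨hx, h3⟩
        · rintro ⟨h1', h3⟩; exact ⟨Or.inr h1', h3⟩
      rw [h3, diff_eq_empty.mpr hXF] at h2
      simp at h2
      rw [hXFr] at h1
      omega
    rwa [subset_antisymm hXF hFX]
  · intro hX
    have hXS := h.hZS X hX
    refine ⟨hXS, fun e he => ?_, fun e he => ?_⟩
    · have : ((h.mat.rk (X \ {e}) : ℤ)) = ((h.mat.rk X : ℤ)) := by
        rw [h.rk_mat (diff_subset.trans hXS), h.rk_mat hXS]
        exact h.rho_diff_singleton hX he
      exact_mod_cast this
    · have : ((h.mat.rk (insert e X) : ℤ)) = ((h.mat.rk X : ℤ)) + 1 := by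
        rw [h.rk_mat (insert_subset he.1 hXS), h.rk_mat hXS]
        exact h.rho_insert hX he.1 he.2
      exact_mod_cast this

lemma mat_rk_eq {X : Set α} (hX : X ∈ Z) : ((h.mat.rk X : ℤ)) = r X := by
  rw [h.rk_mat (h.hZS X hX)]
  exact h.rho_eq_r hX

end Hyp

end CFBack

/-- Axiom scheme for cyclic flats: for a finite set `S`, a collection `Z` of subsets of `S`,
and `r : Z → ℤ`, there is a matroid on `S` whose cyclic flats are exactly the members of `Z`
and whose rank function restricted to `Z` is `r`, iff (Z0) `Z` is a lattice under inclusion,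
(Z1) `r 0_Z = 0`, (Z2) `0 < r Y - r X < |Y \ X|` whenever `X ⊊ Y` in `Z`, and (Z3) the
specialized semimodular inequality holds. -/
theorem matroid_cyclicFlat_axioms {α : Type*} (S : Set α) (hS : S.Finite)
    (Z : Set (Set α)) (hZS : ∀ X ∈ Z, X ⊆ S) (r : Set α → ℤ) :
    (∃ M : Matroid α, M.E = S ∧ {X : Set α | M.CyclicFlat X} = Z ∧
        ∀ X ∈ Z, (M.rk X : ℤ) = r X) ↔
      (Z.Nonempty ∧
        (∀ X ∈ Z, ∀ Y ∈ Z, ∃ J ∈ Z, X ⊆ J ∧ Y ⊆ J ∧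
          ∀ W ∈ Z, X ⊆ W → Y ⊆ W → J ⊆ W) ∧
        (∀ X ∈ Z, ∀ Y ∈ Z, ∃ G ∈ Z, G ⊆ X ∧ G ⊆ Y ∧
          ∀ W ∈ Z, W ⊆ X → W ⊆ Y → W ⊆ G) ∧
        (∀ B ∈ Z, (∀ X ∈ Z, B ⊆ X) → r B = 0) ∧
        (∀ X ∈ Z, ∀ Y ∈ Z, X ⊂ Y →
          0 < r Y - r X ∧ r Y - r X < ((Y \ X).ncard : ℤ)) ∧
        (∀ X ∈ Z, ∀ Y ∈ Z, ∀ J ∈ Z, ∀ G ∈ Z,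
          (X ⊆ J ∧ Y ⊆ J ∧ ∀ W ∈ Z, X ⊆ W → Y ⊆ W → J ⊆ W) →
          (G ⊆ X ∧ G ⊆ Y ∧ ∀ W ∈ Z, W ⊆ X → W ⊆ Y → W ⊆ G) →
          r J + r G + (((X ∩ Y) \ G).ncard : ℤ) ≤ r X + r Y)) := by
  constructor
  · rintro ⟨M, hME, hcf, hr⟩
    exact CFProof.forward hS M hME hcf hr
  · rintro ⟨hne, hjoin, hmeet, hZ1, hZ2, hZ3⟩
    have h : CFBack.Hyp S Z r := ⟨hS, hZS, hne, hjoin, hmeet, hZ1, hZ2, hZ3⟩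
    exact ⟨h.mat, h.mat_E, Set.ext (fun X => h.mat_cyclicFlat_iff), fun X hX => h.mat_rk_eq hX⟩
end

section
/- Let M be a finite matroid with rank function r, and let X be a cyclic flat of M that is neither the least nor the greatest cyclic flat of M, and such that every cyclic flat of M other than X, the least cyclic flat, and the greatest cyclic flat is incomparable with X under inclusion. Then there exists a matroid M' on E(M) whose collection of cyclic flats is exactly the collection of cyclic flats of M with X removed, and whose rank function agrees with r on every cyclic flat of M other than X. -/
/-! ### Auxiliary development -/

namespace Matroid

open Set

variable {α : Type*} {N M : Matroid α} {S T I J B C D F G Y A K : Set α} {e x : α}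

lemma rk_def (N : Matroid α) (S : Set α) :
    N.rk S = sSup {n | ∃ I, N.Indep I ∧ I ⊆ S ∧ I.ncard = n} := rfl

/-- The basic "spec" of the rank function for finite matroids. -/
lemma rk_spec (N : Matroid α) [N.Finite] (S : Set α) :
    ∃ B, N.Indep B ∧ B ⊆ S ∧ B.ncard = N.rk S ∧
      ∀ J, N.Indep J → J ⊆ S → J.ncard ≤ B.ncard := by
  obtain ⟨B, hB⟩ := (N ↾ S).exists_isBase
  obtain ⟨hBi, hBS⟩ := restrict_indep_iff.1 hB.indep
  have hmax : ∀ J, N.Indep J → J ⊆ S → J.ncard ≤ B.ncard := by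
    intro J hJ hJS
    obtain ⟨B', hB', hJB'⟩ :=
      (restrict_indep_iff.2 ⟨hJ, hJS⟩ : (N ↾ S).Indep J).exists_isBase_superset
    have hfin : B'.Finite :=
      N.ground_finite.subset (restrict_indep_iff.1 hB'.indep).1.subset_ground
    exact (Set.ncard_le_ncard hJB' hfin).trans (hB'.ncard_eq_ncard_of_isBase hB).le
  refine ⟨B, hBi, hBS, ?_, hmax⟩
  rw [rk_def]
  have hbdd : BddAbove {n | ∃ I, N.Indep I ∧ I ⊆ S ∧ I.ncard = n} := by
    refine ⟨B.ncard, ?_⟩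
    rintro n ⟨I, hI, hIS, rfl⟩
    exact hmax I hI hIS
  refine le_antisymm (le_csSup hbdd ⟨B, hBi, hBS, rfl⟩) ?_
  refine csSup_le ⟨0, ∅, N.empty_indep, empty_subset S, by simp⟩ ?_
  rintro n ⟨I, hI, hIS, rfl⟩
  exact hmax I hI hIS

lemma ncard_le_rk [N.Finite] (hJ : N.Indep J) (hJS : J ⊆ S) : J.ncard ≤ N.rk S := by
  obtain ⟨B, _, _, hBcard, hmax⟩ := N.rk_spec S
  exact (hmax J hJ hJS).trans hBcard.le

lemma rk_mono [N.Finite] (h : S ⊆ T) : N.rk S ≤ N.rk T := by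
  obtain ⟨B, hBi, hBS, hBcard, _⟩ := N.rk_spec S
  rw [← hBcard]
  exact ncard_le_rk hBi (hBS.trans h)

lemma rk_le_ncard [N.Finite] (hS : S.Finite) : N.rk S ≤ S.ncard := by
  obtain ⟨B, hBi, hBS, hBcard, _⟩ := N.rk_spec S
  rw [← hBcard]
  exact Set.ncard_le_ncard hBS hS

lemma Indep.rk_self [N.Finite] (hI : N.Indep I) : N.rk I = I.ncard :=
  le_antisymm (rk_le_ncard (N.ground_finite.subset hI.subset_ground))
    (ncard_le_rk hI subset_rfl)

lemma indep_of_rk_eq [N.Finite] (hIE : I ⊆ N.E) (h : N.rk I = I.ncard) : N.Indep I := by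
  obtain ⟨B, hBi, hBI, hBcard, _⟩ := N.rk_spec I
  have hfin : I.Finite := N.ground_finite.subset hIE
  have : B = I := Set.eq_of_subset_of_ncard_le hBI (by rw [← h, hBcard]) hfin
  rwa [← this]

lemma rk_union_le [N.Finite] (hT : T.Finite) : N.rk (S ∪ T) ≤ N.rk S + T.ncard := by
  obtain ⟨B, hBi, hBS, hBcard, _⟩ := N.rk_spec (S ∪ T)
  rw [← hBcard]
  have hBfin : B.Finite := N.ground_finite.subset hBi.subset_ground
  have h1 : B \ T ⊆ S := fun x hx => (hBS hx.1).resolve_right hx.2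
  calc B.ncard = ((B \ T) ∪ (B ∩ T)).ncard := by rw [Set.diff_union_inter]
    _ ≤ (B \ T).ncard + (B ∩ T).ncard := Set.ncard_union_le _ _
    _ ≤ N.rk S + T.ncard :=
        add_le_add (ncard_le_rk (hBi.subset diff_subset) h1)
          (Set.ncard_le_ncard inter_subset_right hT)

lemma rk_insert_le [N.Finite] : N.rk (insert e S) ≤ N.rk S + 1 := by
  have := N.rk_union_le (S := S) (T := {e}) (finite_singleton e)
  rw [Set.union_singleton, Set.ncard_singleton] at this
  exact this

lemma rk_eq_of_basis_s10 [N.Finite] (h : N.IsBasis I S) : N.rk S = I.ncard := by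
  have hB : (N ↾ S).IsBase I := (isBase_restrict_iff h.subset_ground).2 h
  refine le_antisymm ?_ (ncard_le_rk h.indep h.subset)
  obtain ⟨B, hBi, hBS, hBcard, hmax⟩ := N.rk_spec S
  rw [← hBcard]
  obtain ⟨B', hB', hBB'⟩ := (restrict_indep_iff.2 ⟨hBi, hBS⟩).exists_isBase_superset
  have hfin : B'.Finite :=
    N.ground_finite.subset (restrict_indep_iff.1 hB'.indep).1.subset_ground
  calc B.ncard ≤ B'.ncard := Set.ncard_le_ncard hBB' hfin
    _ = I.ncard := hB'.ncard_eq_ncard_of_isBase hB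

lemma rk_closure_eq [N.Finite] (hS : S ⊆ N.E) : N.rk (N.closure S) = N.rk S := by
  obtain ⟨I, hI⟩ := N.exists_isBasis S hS
  rw [rk_eq_of_basis_s10 hI.isBasis_closure_right, rk_eq_of_basis_s10 hI]

lemma closure_flat' (N : Matroid α) (S : Set α) : N.IsFlat (N.closure S) := by
  rw [closure_def, sInter_eq_iInter]
  haveI : Nonempty {F // F ∈ {F | N.IsFlat F ∧ S ∩ N.E ⊆ F}} :=
    ⟨⟨N.E, N.ground_isFlat, inter_subset_right⟩⟩
  exact IsFlat.iInter fun F => F.2.1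

lemma flat_of_closure_subset (h : N.closure F ⊆ F) (hF : F ⊆ N.E) : N.IsFlat F := by
  have : N.closure F = F := h.antisymm (N.subset_closure F hF)
  rw [← this]
  exact N.closure_flat' F

lemma mem_closure_iff_rk [N.Finite] (hS : S ⊆ N.E) (he : e ∈ N.E) :
    e ∈ N.closure S ↔ N.rk (insert e S) = N.rk S := by
  constructor
  · intro h
    refine le_antisymm ?_ (rk_mono (subset_insert _ _))
    have hins : insert e S ⊆ N.closure S := insert_subset h (N.subset_closure S hS)
    exact (rk_mono hins).trans_eq (rk_closure_eq hS)
  · intro h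
    by_contra hecl
    obtain ⟨I, hI⟩ := N.exists_isBasis S hS
    have heS : e ∉ S := fun heS => hecl (N.subset_closure S hS heS)
    have heI : e ∉ I := fun hc => heS (hI.subset hc)
    have hind : N.Indep (insert e I) := by
      rw [hI.indep.insert_indep_iff]
      exact Or.inl ⟨he, fun hc => hecl (by rwa [hI.closure_eq_closure] at hc)⟩
    have hIfin : I.Finite := N.ground_finite.subset hI.indep.subset_ground
    have hcard : I.ncard + 1 ≤ N.rk (insert e S) := by
      have hle := ncard_le_rk hind (insert_subset_insert hI.subset)
      rwa [Set.ncard_insert_of_notMem heI hIfin] at hle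
    rw [h, rk_eq_of_basis_s10 hI] at hcard
    omega

/-! ### Circuits -/

lemma IsCircuit'.subset_ground' (hC : N.IsCircuit' C) : C ⊆ N.E := hC.1.subset_ground

lemma IsCircuit'.diff_singleton_indep (hC : N.IsCircuit' C) (he : e ∈ C) :
    N.Indep (C \ {e}) := hC.2 _ (Set.sdiff_singleton_ssubset.2 he)

lemma IsCircuit'.mem_closure_diff (hC : N.IsCircuit' C) (he : e ∈ C) :
    e ∈ N.closure (C \ {e}) := by
  have hi := hC.diff_singleton_indep he
  rw [hi.mem_closure_iff]
  left
  rw [insert_diff_singleton, insert_eq_of_mem he]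
  exact hC.1

lemma exists_circuit_subset [N.Finite] (hD : N.Dep D) : ∃ C, N.IsCircuit' C ∧ C ⊆ D := by
  have hPne : {n | ∃ A, A ⊆ D ∧ N.Dep A ∧ A.ncard = n}.Nonempty :=
    ⟨D.ncard, D, subset_rfl, hD, rfl⟩
  obtain ⟨A, hAD, hADep, hAcard⟩ := Nat.sInf_mem hPne
  refine ⟨A, ⟨hADep, fun D' hD' => ?_⟩, hAD⟩
  have hD'E : D' ⊆ N.E := hD'.subset.trans hADep.subset_ground
  by_contra hni
  have hDep : N.Dep D' := (not_indep_iff hD'E).1 hni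
  have hAfin : A.Finite := N.ground_finite.subset hADep.subset_ground
  have hlt : D'.ncard < A.ncard := Set.ncard_lt_ncard hD' hAfin
  have hle : sInf {n | ∃ A, A ⊆ D ∧ N.Dep A ∧ A.ncard = n} ≤ D'.ncard :=
    Nat.sInf_le ⟨D', hD'.subset.trans hAD, hDep, rfl⟩
  omega

lemma indep_of_forall_circuit [N.Finite] (hIE : I ⊆ N.E)
    (h : ∀ C, N.IsCircuit' C → ¬C ⊆ I) : N.Indep I := by
  by_contra hni
  obtain ⟨C, hC, hCI⟩ := exists_circuit_subset ((not_indep_iff hIE).1 hni)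
  exact h C hC hCI

lemma rk_diff_singleton_of_circuit [N.Finite] (hF : F ⊆ N.E) (hC : N.IsCircuit' C)
    (hCF : C ⊆ F) (he : e ∈ C) : N.rk (F \ {e}) = N.rk F := by
  refine le_antisymm (rk_mono diff_subset) ?_
  have h1 : F ⊆ N.closure (F \ {e}) := by
    intro x hx
    rcases eq_or_ne x e with rfl | hne
    · exact N.closure_subset_closure (diff_subset_diff_left hCF) (hC.mem_closure_diff he)
    · exact N.subset_closure (F \ {e}) (diff_subset.trans hF) ⟨hx, hne⟩
  exact (rk_mono h1).trans_eq (rk_closure_eq (diff_subset.trans hF))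

lemma exists_circuit_of_rk_diff [N.Finite] (hF : F ⊆ N.E) (he : e ∈ F)
    (h : N.rk (F \ {e}) = N.rk F) : ∃ C, N.IsCircuit' C ∧ C ⊆ F ∧ e ∈ C := by
  obtain ⟨B, hBi, hBS, hBcard, _⟩ := N.rk_spec (F \ {e})
  have heB : e ∉ B := fun hc => (hBS hc).2 rfl
  have hBfin : B.Finite := N.ground_finite.subset hBi.subset_ground
  have hins : insert e B ⊆ F := insert_subset he (hBS.trans diff_subset)
  have hd : N.Dep (insert e B) := by
    rw [← not_indep_iff (hins.trans hF)]
    intro hind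
    have hle := ncard_le_rk hind hins
    rw [Set.ncard_insert_of_notMem heB hBfin, hBcard, h] at hle
    omega
  obtain ⟨C, hC, hCB⟩ := exists_circuit_subset hd
  refine ⟨C, hC, hCB.trans hins, ?_⟩
  by_contra hec
  have hCB' : C ⊆ B := fun x hx => (hCB hx).resolve_left fun hxe => hec (hxe ▸ hx)
  exact (hBi.subset hCB').not_dep hC.1

/-! ### Basic cyclic flats -/

lemma closure_empty_cyclicFlat (N : Matroid α) : N.CyclicFlat (N.closure ∅) := by
  refine ⟨N.closure_flat' ∅, fun e he => ?_⟩
  have hd : N.Dep {e} := by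
    have h := (N.empty_indep.mem_closure_iff (x := e)).1 he
    simpa using h
  exact ⟨{e}, ⟨hd, fun D' hD' => by
    rw [Set.ssubset_singleton_iff.1 hD']; exact N.empty_indep⟩,
    singleton_subset_iff.2 he, rfl⟩

lemma IsFlat.closure_empty_subset (hF : N.IsFlat F) : N.closure ∅ ⊆ F := by
  have h := N.closure_subset_closure (empty_subset F)
  rwa [hF.closure] at h

lemma rk_closure_empty (N : Matroid α) [N.Finite] :
    N.rk (N.closure ∅) = 0 := by
  rw [rk_closure_eq (empty_subset _)]
  have := N.rk_le_ncard (S := ∅) finite_empty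
  simpa using this

lemma sUnion_circuits_cyclicFlat (N : Matroid α) [N.Finite] :
    N.CyclicFlat (⋃₀ {C | N.IsCircuit' C}) := by
  have hZE : ⋃₀ {C | N.IsCircuit' C} ⊆ N.E :=
    sUnion_subset fun C hC => hC.subset_ground'
  have hmem : ∀ C, N.IsCircuit' C → C ⊆ ⋃₀ {C | N.IsCircuit' C} :=
    fun C hC x hx => ⟨C, hC, hx⟩
  refine ⟨flat_of_closure_subset ?_ hZE, fun e he => ?_⟩
  · intro e he
    obtain ⟨I, hI⟩ := N.exists_isBasis _ hZE
    rw [← hI.closure_eq_closure] at he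
    rcases (hI.indep.mem_closure_iff).1 he with hd | heI
    · obtain ⟨C, hC, hCI⟩ := exists_circuit_subset hd
      have heC : e ∈ C := by
        by_contra hec
        have hCI' : C ⊆ I := fun x hx => (hCI hx).resolve_left fun hxe => hec (hxe ▸ hx)
        exact (hI.indep.subset hCI').not_dep hC.1
      exact hmem C hC heC
    · exact hI.subset heI
  · obtain ⟨C, hC, heC⟩ := he
    exact ⟨C, hC, hmem C hC, heC⟩

lemma CyclicFlat.subset_sUnion (hF : N.CyclicFlat F) : F ⊆ ⋃₀ {C | N.IsCircuit' C} := by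
  intro e he
  obtain ⟨C, hC, _, heC⟩ := hF.2 e he
  exact ⟨C, hC, heC⟩

lemma IsFlat.inter' (hF : N.IsFlat F) (hG : N.IsFlat G) : N.IsFlat (F ∩ G) := by
  refine flat_of_closure_subset ?_ (inter_subset_left.trans hF.subset_ground)
  intro x hx
  constructor
  · have := N.closure_subset_closure (inter_subset_left (t := G)) hx
    rwa [hF.closure] at this
  · have := N.closure_subset_closure (inter_subset_right (s := F)) hx
    rwa [hG.closure] at this

lemma closure_union_cyclicFlat [N.Finite] (hF : N.CyclicFlat F) (hG : N.CyclicFlat G) :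
    N.CyclicFlat (N.closure (F ∪ G)) := by
  have hUE : F ∪ G ⊆ N.E := union_subset hF.1.subset_ground hG.1.subset_ground
  refine ⟨N.closure_flat' _, fun e he => ?_⟩
  obtain ⟨I, hI⟩ := N.exists_isBasis _ hUE
  have hsubcl : F ∪ G ⊆ N.closure (F ∪ G) := N.subset_closure _ hUE
  rcases (by rwa [← hI.closure_eq_closure] at he :
      e ∈ N.closure I) |> (hI.indep.mem_closure_iff).1 with hd | heI
  · obtain ⟨C, hC, hCI⟩ := exists_circuit_subset hd
    have heC : e ∈ C := by
      by_contra hec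
      have hCI' : C ⊆ I := fun x hx => (hCI hx).resolve_left fun hxe => hec (hxe ▸ hx)
      exact (hI.indep.subset hCI').not_dep hC.1
    refine ⟨C, hC, ?_, heC⟩
    exact hCI.trans (insert_subset he (hI.subset.trans hsubcl))
  · rcases hI.subset heI with hF' | hG'
    · obtain ⟨C, hC, hCF, heC⟩ := hF.2 e hF'
      exact ⟨C, hC, hCF.trans ((subset_union_left).trans hsubcl), heC⟩
    · obtain ⟨C, hC, hCG, heC⟩ := hG.2 e hG'
      exact ⟨C, hC, hCG.trans ((subset_union_right).trans hsubcl), heC⟩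

/-- The "cyclic core" of a set: union of all circuits contained in it. -/
def matCyc (N : Matroid α) (A : Set α) : Set α := ⋃₀ {C | N.IsCircuit' C ∧ C ⊆ A}

lemma matCyc_subset : N.matCyc A ⊆ A := by
  rintro x ⟨C, ⟨hC, hCA⟩, hx⟩
  exact hCA hx

lemma circuit_subset_matCyc (hC : N.IsCircuit' C) (hCA : C ⊆ A) : C ⊆ N.matCyc A :=
  fun x hx => ⟨C, ⟨hC, hCA⟩, hx⟩

lemma matCyc_cyclicFlat [N.Finite] (hA : N.IsFlat A) : N.CyclicFlat (N.matCyc A) := by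
  have hcE : N.matCyc A ⊆ N.E := matCyc_subset.trans hA.subset_ground
  refine ⟨flat_of_closure_subset ?_ hcE, fun e he => ?_⟩
  · intro e he
    have heA : e ∈ A := by
      have := N.closure_subset_closure (matCyc_subset (N := N) (A := A)) he
      rwa [hA.closure] at this
    obtain ⟨I, hI⟩ := N.exists_isBasis _ hcE
    rcases (by rwa [← hI.closure_eq_closure] at he :
        e ∈ N.closure I) |> (hI.indep.mem_closure_iff).1 with hd | heI
    · obtain ⟨C, hC, hCI⟩ := exists_circuit_subset hd
      have heC : e ∈ C := by
        by_contra hec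
        have hCI' : C ⊆ I := fun x hx => (hCI hx).resolve_left fun hxe => hec (hxe ▸ hx)
        exact (hI.indep.subset hCI').not_dep hC.1
      have hCA : C ⊆ A := hCI.trans (insert_subset heA (hI.subset.trans matCyc_subset))
      exact circuit_subset_matCyc hC hCA heC
    · exact hI.subset heI
  · obtain ⟨C, ⟨hC, hCA⟩, heC⟩ := he
    exact ⟨C, hC, circuit_subset_matCyc hC hCA, heC⟩

lemma matCyc_sUnion_circuits (N : Matroid α) :
    N.matCyc (⋃₀ {C | N.IsCircuit' C}) = ⋃₀ {C | N.IsCircuit' C} := by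
  refine matCyc_subset.antisymm ?_
  rintro x ⟨C, hC, hx⟩
  exact ⟨C, ⟨hC, fun y hy => ⟨C, hC, hy⟩⟩, hx⟩

lemma rk_matCyc_add [N.Finite] (hA : A ⊆ N.E) :
    N.rk (N.matCyc A) + (A \ N.matCyc A).ncard ≤ N.rk A := by
  obtain ⟨B, hBi, hBS, hBcard, _⟩ := N.rk_spec (N.matCyc A)
  have hBfin : B.Finite := N.ground_finite.subset hBi.subset_ground
  have hKfin : (A \ N.matCyc A).Finite := (N.ground_finite.subset hA).diff
  have hBK : N.Indep (B ∪ (A \ N.matCyc A)) := by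
    refine indep_of_forall_circuit
      (union_subset (hBS.trans (matCyc_subset.trans hA)) (diff_subset.trans hA))
      fun C hC hCsub => ?_
    have hCA : C ⊆ A := hCsub.trans (union_subset (hBS.trans matCyc_subset) diff_subset)
    have hCcyc : C ⊆ N.matCyc A := circuit_subset_matCyc hC hCA
    have hCB : C ⊆ B := fun x hx => (hCsub hx).resolve_right fun hK => hK.2 (hCcyc hx)
    exact (hBi.subset hCB).not_dep hC.1
  have hdisj : Disjoint B (A \ N.matCyc A) :=
    disjoint_left.2 fun x hxB hxK => hxK.2 (hBS hxB)
  have hle := ncard_le_rk hBK (union_subset (hBS.trans matCyc_subset) diff_subset)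
  rwa [Set.ncard_union_eq hdisj hBfin hKfin, hBcard] at hle

lemma rk_submod [N.Finite] (hS : S ⊆ N.E) (hT : T ⊆ N.E) :
    N.rk (S ∪ T) + N.rk (S ∩ T) ≤ N.rk S + N.rk T := by
  obtain ⟨I, hI⟩ := N.exists_isBasis (S ∩ T) (inter_subset_left.trans hS)
  obtain ⟨J, hJ, hIJ⟩ := hI.indep.subset_isBasis_of_subset
    (hI.subset.trans (inter_subset_left.trans subset_union_left)) (union_subset hS hT)
  have hJfin : J.Finite := N.ground_finite.subset hJ.indep.subset_ground
  rw [rk_eq_of_basis_s10 hJ, rk_eq_of_basis_s10 hI]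
  have h1 : (J ∩ S).ncard ≤ N.rk S :=
    ncard_le_rk (hJ.indep.subset inter_subset_left) inter_subset_right
  have h2 : (J ∩ T).ncard ≤ N.rk T :=
    ncard_le_rk (hJ.indep.subset inter_subset_left) inter_subset_right
  have hid : (J ∩ S) ∪ (J ∩ T) = J := by
    rw [← inter_union_distrib_left]
    exact inter_eq_left.2 hJ.subset
  have hid2 : (J ∩ S) ∩ (J ∩ T) = J ∩ (S ∩ T) := by
    ext x
    simp only [mem_inter_iff]
    tauto
  have hI' : I ⊆ J ∩ (S ∩ T) := subset_inter hIJ hI.subset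
  have hkey : J.ncard + I.ncard ≤ (J ∩ S).ncard + (J ∩ T).ncard := by
    calc J.ncard + I.ncard ≤ J.ncard + (J ∩ (S ∩ T)).ncard :=
          Nat.add_le_add_left (Set.ncard_le_ncard hI' (hJfin.inter_of_left _)) _
      _ = ((J ∩ S) ∪ (J ∩ T)).ncard + ((J ∩ S) ∩ (J ∩ T)).ncard := by rw [hid, hid2]
      _ = (J ∩ S).ncard + (J ∩ T).ncard :=
          Set.ncard_union_add_ncard_inter _ _ (hJfin.inter_of_left _) (hJfin.inter_of_left _)
  omega

lemma zlem [N.Finite] (hF : N.IsFlat F) (hG : N.IsFlat G) :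
    N.rk (N.closure (F ∪ G)) + (N.rk (N.matCyc (F ∩ G)) + ((F ∩ G) \ N.matCyc (F ∩ G)).ncard)
      ≤ N.rk F + N.rk G := by
  have h1 : N.rk (N.closure (F ∪ G)) = N.rk (F ∪ G) :=
    rk_closure_eq (union_subset hF.subset_ground hG.subset_ground)
  have h2 := N.rk_matCyc_add (A := F ∩ G) (inter_subset_left.trans hF.subset_ground)
  have h3 := N.rk_submod hF.subset_ground hG.subset_ground
  omega

lemma count_lemma {S T F G H1 H2 : Set α} (hSf : S.Finite) (hTf : T.Finite)
    (hFf : F.Finite) (hGf : G.Finite) (hH1 : F ∪ G ⊆ H1) (hH2 : H2 ⊆ F ∩ G) :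
    ((S ∪ T) \ H1).ncard + ((S ∩ T) \ H2).ncard
      ≤ (S \ F).ncard + (T \ G).ncard + ((F ∩ G) \ H2).ncard := by
  have hAfin : ((S ∪ T) \ (F ∪ G)).Finite := (hSf.union hTf).diff
  have hBfin : ((S ∩ T) \ (F ∩ G)).Finite := (hSf.inter_of_left _).diff
  have hFG2fin : ((F ∩ G) \ H2).Finite := (hFf.inter_of_left _).diff
  have h1 : ((S ∪ T) \ H1).ncard ≤ ((S ∪ T) \ (F ∪ G)).ncard :=
    Set.ncard_le_ncard (diff_subset_diff_right hH1) hAfin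
  have h2sub : (S ∩ T) \ H2 ⊆ ((S ∩ T) \ (F ∩ G)) ∪ ((F ∩ G) \ H2) := by
    intro x hx
    by_cases hxFG : x ∈ F ∩ G
    · exact Or.inr ⟨hxFG, hx.2⟩
    · exact Or.inl ⟨hx.1, hxFG⟩
  have h2 : ((S ∩ T) \ H2).ncard ≤ ((S ∩ T) \ (F ∩ G)).ncard + ((F ∩ G) \ H2).ncard :=
    (Set.ncard_le_ncard h2sub (hBfin.union hFG2fin)).trans
      (Set.ncard_union_le _ _)
  have hmain : ((S ∪ T) \ (F ∪ G)).ncard + ((S ∩ T) \ (F ∩ G)).ncard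
      ≤ (S \ F).ncard + (T \ G).ncard := by
    set A := (S ∪ T) \ (F ∪ G) with hA
    set B := (S ∩ T) \ (F ∩ G) with hB
    have hu : A ∪ B ⊆ (S \ F) ∪ (T \ G) := by
      rintro x (⟨hx1, hx2⟩ | ⟨hx1, hx2⟩)
      · rcases hx1 with hxS | hxT
        · exact Or.inl ⟨hxS, fun h => hx2 (Or.inl h)⟩
        · exact Or.inr ⟨hxT, fun h => hx2 (Or.inr h)⟩
      · by_cases hxF : x ∈ F
        · exact Or.inr ⟨hx1.2, fun h => hx2 ⟨hxF, h⟩⟩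
        · exact Or.inl ⟨hx1.1, hxF⟩
    have hi : A ∩ B ⊆ (S \ F) ∩ (T \ G) := by
      rintro x ⟨⟨hx1, hx2⟩, ⟨hx3, _⟩⟩
      exact ⟨⟨hx3.1, fun h => hx2 (Or.inl h)⟩, ⟨hx3.2, fun h => hx2 (Or.inr h)⟩⟩
    have hSF : (S \ F).Finite := hSf.diff
    have hTG : (T \ G).Finite := hTf.diff
    calc A.ncard + B.ncard = (A ∪ B).ncard + (A ∩ B).ncard :=
          (Set.ncard_union_add_ncard_inter _ _ hAfin hBfin).symm
      _ ≤ ((S \ F) ∪ (T \ G)).ncard + ((S \ F) ∩ (T \ G)).ncard :=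
          add_le_add (Set.ncard_le_ncard hu (hSF.union hTG))
            (Set.ncard_le_ncard hi (hSF.inter_of_left _))
      _ = (S \ F).ncard + (T \ G).ncard :=
          Set.ncard_union_add_ncard_inter _ _ hSF hTG
  omega

/-! ### The relaxed rank function -/

/-- The would-be rank function of the matroid obtained by removing the cyclic flat `X`. -/
noncomputable def relaxRk (M : Matroid α) (X : Set α) (S : Set α) : ℕ :=
  sInf {n | ∃ G, M.CyclicFlat G ∧ G ≠ X ∧ n = M.rk G + (S \ G).ncard}

variable {X : Set α}

lemma relaxRk_le (hG : M.CyclicFlat G) (hGX : G ≠ X) :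
    relaxRk M X S ≤ M.rk G + (S \ G).ncard :=
  Nat.sInf_le ⟨G, hG, hGX, rfl⟩

lemma relaxRk_attained (h0 : M.closure ∅ ≠ X) (S : Set α) :
    ∃ G, M.CyclicFlat G ∧ G ≠ X ∧ relaxRk M X S = M.rk G + (S \ G).ncard := by
  have hne : {n | ∃ G, M.CyclicFlat G ∧ G ≠ X ∧ n = M.rk G + (S \ G).ncard}.Nonempty :=
    ⟨_, M.closure ∅, M.closure_empty_cyclicFlat, h0, rfl⟩
  exact Nat.sInf_mem hne

lemma rk_le_relaxRk [M.Finite] (h0 : M.closure ∅ ≠ X) (hS : S ⊆ M.E) :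
    M.rk S ≤ relaxRk M X S := by
  obtain ⟨G, hG, hGX, h⟩ := relaxRk_attained h0 S
  rw [h]
  have hSfin : (S \ G).Finite := (M.ground_finite.subset hS).diff
  have hsub : S ⊆ G ∪ (S \ G) := by
    intro x hx
    by_cases hxG : x ∈ G
    · exact Or.inl hxG
    · exact Or.inr ⟨hx, hxG⟩
  exact (rk_mono hsub).trans (rk_union_le hSfin)

lemma relaxRk_eq_rk_of_cyclicFlat [M.Finite] (h0 : M.closure ∅ ≠ X)
    (hG : M.CyclicFlat G) (hGX : G ≠ X) : relaxRk M X G = M.rk G := by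
  refine le_antisymm ?_ (rk_le_relaxRk h0 hG.1.subset_ground)
  have := relaxRk_le (S := G) hG hGX
  simpa using this

lemma relaxRk_mono (h0 : M.closure ∅ ≠ X) (hST : S ⊆ T) (hT : T.Finite) :
    relaxRk M X S ≤ relaxRk M X T := by
  obtain ⟨G, hG, hGX, h⟩ := relaxRk_attained h0 T
  rw [h]
  exact (relaxRk_le hG hGX).trans
    (Nat.add_le_add_left (Set.ncard_le_ncard (diff_subset_diff_left hST) (hT.diff)) _)

lemma relaxRk_union_le (h0 : M.closure ∅ ≠ X) (hS : S.Finite) (hT : T.Finite) :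
    relaxRk M X (S ∪ T) ≤ relaxRk M X S + T.ncard := by
  obtain ⟨G, hG, hGX, h⟩ := relaxRk_attained h0 S
  have hle : relaxRk M X (S ∪ T) ≤ M.rk G + ((S ∪ T) \ G).ncard := relaxRk_le hG hGX
  have hcard : ((S ∪ T) \ G).ncard ≤ (S \ G).ncard + T.ncard := by
    rw [Set.union_diff_distrib]
    exact (Set.ncard_union_le _ _).trans
      (Nat.add_le_add_left (Set.ncard_le_ncard diff_subset hT) _)
  omega

lemma relaxRk_le_ncard [M.Finite] (h0 : M.closure ∅ ≠ X) (hS : S.Finite) :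
    relaxRk M X S ≤ S.ncard := by
  have h := relaxRk_le (S := S) M.closure_empty_cyclicFlat h0
  have h2 : M.rk (M.closure ∅) = 0 := M.rk_closure_empty
  have h3 : (S \ M.closure ∅).ncard ≤ S.ncard := Set.ncard_le_ncard diff_subset hS
  omega

lemma relaxRk_empty [M.Finite] (h0 : M.closure ∅ ≠ X) : relaxRk M X ∅ = 0 := by
  have := relaxRk_le_ncard (M := M) (X := X) h0 finite_empty
  simpa using this

section Hyps

variable [M.Finite] (hXc : M.CyclicFlat X) (hX0 : X ≠ M.closure ∅)
  (hX1 : X ≠ ⋃₀ {C : Set α | M.IsCircuit' C})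
  (hinc : ∀ Y : Set α, M.CyclicFlat Y → Y ≠ X → Y ≠ M.closure ∅ →
      Y ≠ ⋃₀ {C : Set α | M.IsCircuit' C} → ¬ Y ⊆ X ∧ ¬ X ⊆ Y)

include hXc hX0 hX1 hinc

lemma join_ne (hF : M.CyclicFlat F) (hFX : F ≠ X) (hG : M.CyclicFlat G) (hGX : G ≠ X) :
    M.closure (F ∪ G) ≠ X := by
  intro hEq
  have hUE : F ∪ G ⊆ M.E := union_subset hF.1.subset_ground hG.1.subset_ground
  have hsub : ∀ (H : Set α), M.CyclicFlat H → H ≠ X → H ⊆ X → H = M.closure ∅ := by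
    intro H hH hHX hHsub
    by_cases hH0 : H = M.closure ∅
    · exact hH0
    by_cases hH1 : H = ⋃₀ {C : Set α | M.IsCircuit' C}
    · exfalso
      have hXsub : X ⊆ ⋃₀ {C : Set α | M.IsCircuit' C} := hXc.subset_sUnion
      rw [← hH1] at hXsub
      exact hHX (hHsub.antisymm hXsub)
    · exact absurd hHsub (hinc H hH hHX hH0 hH1).1
  have hFsub : F ⊆ X := hEq ▸ (subset_union_left.trans (M.subset_closure _ hUE))
  have hGsub : G ⊆ X := hEq ▸ (subset_union_right.trans (M.subset_closure _ hUE))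
  have hF0 := hsub F hF hFX hFsub
  have hG0 := hsub G hG hGX hGsub
  rw [hF0, hG0, union_self, closure_closure] at hEq
  exact hX0 hEq.symm

lemma meet_ne (hF : M.CyclicFlat F) (hFX : F ≠ X) (hG : M.CyclicFlat G) (hGX : G ≠ X) :
    M.matCyc (F ∩ G) ≠ X := by
  intro hEq
  have hXsub : X ⊆ F ∩ G := hEq ▸ (matCyc_subset (N := M) (A := F ∩ G))
  have hsup : ∀ (H : Set α), M.CyclicFlat H → H ≠ X → X ⊆ H →
      H = ⋃₀ {C : Set α | M.IsCircuit' C} := by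
    intro H hH hHX hHsup
    by_cases hH1 : H = ⋃₀ {C : Set α | M.IsCircuit' C}
    · exact hH1
    by_cases hH0 : H = M.closure ∅
    · exfalso
      have h1 : H ⊆ X := hH0 ▸ hXc.1.closure_empty_subset
      exact hHX (h1.antisymm hHsup)
    · exact absurd hHsup (hinc H hH hHX hH0 hH1).2
  have hF1 := hsup F hF hFX (hXsub.trans inter_subset_left)
  have hG1 := hsup G hG hGX (hXsub.trans inter_subset_right)
  rw [hF1, hG1, inter_self, matCyc_sUnion_circuits] at hEq
  exact hX1 hEq.symm

lemma relaxRk_submod (hS : S ⊆ M.E) (hT : T ⊆ M.E) :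
    relaxRk M X (S ∪ T) + relaxRk M X (S ∩ T) ≤ relaxRk M X S + relaxRk M X T := by
  have h0 : M.closure ∅ ≠ X := hX0.symm
  obtain ⟨F, hF, hFX, hFeq⟩ := relaxRk_attained h0 S
  obtain ⟨G, hG, hGX, hGeq⟩ := relaxRk_attained h0 T
  have hH1c : M.CyclicFlat (M.closure (F ∪ G)) := closure_union_cyclicFlat hF hG
  have hH1X : M.closure (F ∪ G) ≠ X := join_ne hXc hX0 hX1 hinc hF hFX hG hGX
  have hH2c : M.CyclicFlat (M.matCyc (F ∩ G)) := matCyc_cyclicFlat (hF.1.inter' hG.1)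
  have hH2X : M.matCyc (F ∩ G) ≠ X := meet_ne hXc hX0 hX1 hinc hF hFX hG hGX
  have e1 : relaxRk M X (S ∪ T) ≤ M.rk (M.closure (F ∪ G)) + ((S ∪ T) \ M.closure (F ∪ G)).ncard :=
    relaxRk_le hH1c hH1X
  have e2 : relaxRk M X (S ∩ T) ≤ M.rk (M.matCyc (F ∩ G)) + ((S ∩ T) \ M.matCyc (F ∩ G)).ncard :=
    relaxRk_le hH2c hH2X
  have e3 := M.zlem hF.1 hG.1
  have hSfin : S.Finite := M.ground_finite.subset hS
  have hTfin : T.Finite := M.ground_finite.subset hT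
  have hFfin : F.Finite := M.ground_finite.subset hF.1.subset_ground
  have hGfin : G.Finite := M.ground_finite.subset hG.1.subset_ground
  have hUE : F ∪ G ⊆ M.E := union_subset hF.1.subset_ground hG.1.subset_ground
  have e4 := count_lemma (H1 := M.closure (F ∪ G)) (H2 := M.matCyc (F ∩ G))
    hSfin hTfin hFfin hGfin (M.subset_closure _ hUE) matCyc_subset
  omega

lemma relaxRk_union_eq (hI : I ⊆ M.E) (hK : K ⊆ M.E)
    (h : ∀ e ∈ K, relaxRk M X (insert e I) = relaxRk M X I) :
    relaxRk M X (I ∪ K) = relaxRk M X I := by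
  have h0 : M.closure ∅ ≠ X := hX0.symm
  have hKfin : K.Finite := M.ground_finite.subset hK
  refine Set.Finite.induction_on
    (motive := fun K _ => K ⊆ M.E → (∀ e ∈ K, relaxRk M X (insert e I) = relaxRk M X I) →
      relaxRk M X (I ∪ K) = relaxRk M X I) K hKfin (fun _ _ => by simp) ?_ hK h
  intro a s ha hsfin ih hsub hall
  have haE : a ∈ M.E := hsub (mem_insert _ _)
  have hsE : s ⊆ M.E := (subset_insert _ _).trans hsub
  have h1 : relaxRk M X (I ∪ s) = relaxRk M X I := ih hsE fun e he => hall e (mem_insert_of_mem _ he)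
  have h2 : relaxRk M X (insert a I) = relaxRk M X I := hall a (mem_insert _ _)
  have hsubmod := relaxRk_submod hXc hX0 hX1 hinc
    (S := I ∪ s) (T := insert a I) (union_subset hI hsE) (insert_subset haE hI)
  have hU : (I ∪ s) ∪ insert a I = I ∪ insert a s := by
    ext x
    simp only [mem_union, mem_insert_iff]
    tauto
  have hI2 : (I ∪ s) ∩ insert a I = I := by
    ext x
    constructor
    · rintro ⟨hx1, hx2⟩
      rcases hx2 with rfl | hxI
      · rcases hx1 with hxI | hxs
        · exact hxI
        · exact absurd hxs ha
      · exact hxI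
    · intro hxI
      exact ⟨Or.inl hxI, Or.inr hxI⟩
  rw [hU, hI2, h1, h2] at hsubmod
  refine le_antisymm (by omega) ?_
  exact relaxRk_mono h0 subset_union_left
    (M.ground_finite.subset (union_subset hI (insert_subset haE hsE)))

end Hyps

end Matroid

open Set Matroid

/-- If `X` is a cyclic flat of a finite matroid `M` that is neither the least cyclic flat
(`cl ∅`) nor the greatest cyclic flat (the union of all circuits), and every other cyclic flat
besides these is incomparable with `X`, then there is a matroid `M'` on `E(M)` whose cyclic
flats are exactly those of `M` with `X` removed, with the same ranks. -/
theorem exists_matroid_remove_cyclicFlat {α : Type*} (M : Matroid α) [M.Finite]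
    (X : Set α) (hX : M.CyclicFlat X)
    (hX0 : X ≠ M.closure ∅) (hX1 : X ≠ ⋃₀ {C : Set α | M.IsCircuit' C})
    (hinc : ∀ Y : Set α, M.CyclicFlat Y → Y ≠ X → Y ≠ M.closure ∅ →
      Y ≠ ⋃₀ {C : Set α | M.IsCircuit' C} → ¬ Y ⊆ X ∧ ¬ X ⊆ Y) :
    ∃ M' : Matroid α, M'.E = M.E ∧
      {Y : Set α | M'.CyclicFlat Y} = {Y : Set α | M.CyclicFlat Y} \ {X} ∧
      ∀ Y : Set α, M.CyclicFlat Y → Y ≠ X → M'.rk Y = M.rk Y := by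
  classical
  have h0 : M.closure ∅ ≠ X := hX0.symm
  -- the independence predicate of the new matroid
  set Ind : Set α → Prop := fun I => I ⊆ M.E ∧ relaxRk M X I = I.ncard with hInd_def
  have hInd_subset : ∀ ⦃I J : Set α⦄, Ind J → I ⊆ J → Ind I := by
    rintro I J ⟨hJE, hJr⟩ hIJ
    have hIE : I ⊆ M.E := hIJ.trans hJE
    have hJfin : J.Finite := M.ground_finite.subset hJE
    have hIfin : I.Finite := hJfin.subset hIJ
    refine ⟨hIE, le_antisymm (relaxRk_le_ncard h0 hIfin) ?_⟩
    have hle : relaxRk M X J ≤ relaxRk M X I + (J \ I).ncard := by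
      have := relaxRk_union_le (M := M) (X := X) h0 hIfin (hJfin.diff (t := I))
      rwa [union_diff_cancel hIJ] at this
    have hcard : (J \ I).ncard + I.ncard = J.ncard := Set.ncard_diff_add_ncard_of_subset hIJ hJfin
    omega
  set IM : IndepMatroid α := IndepMatroid.ofFinite M.ground_finite Ind
    (indep_empty := ⟨empty_subset _, by rw [relaxRk_empty h0]; simp⟩)
    (indep_subset := hInd_subset)
    (indep_aug := by
      rintro I J ⟨hIE, hIr⟩ ⟨hJE, hJr⟩ hcard
      by_contra hcon
      push_neg at hcon
      have hIfin : I.Finite := M.ground_finite.subset hIE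
      have key : ∀ e ∈ J \ I, relaxRk M X (insert e I) = relaxRk M X I := by
        rintro e ⟨heJ, heI⟩
        have heE : e ∈ M.E := hJE heJ
        have hni : ¬ Ind (insert e I) := fun h => hcon e heJ heI h
        have hne : relaxRk M X (insert e I) ≠ (insert e I).ncard := by
          intro h
          exact hni ⟨insert_subset heE hIE, h⟩
        have hcard2 : (insert e I).ncard = I.ncard + 1 :=
          Set.ncard_insert_of_notMem heI hIfin
        have hub : relaxRk M X (insert e I) ≤ (insert e I).ncard :=
          relaxRk_le_ncard h0 (hIfin.insert e)
        have hlb : relaxRk M X I ≤ relaxRk M X (insert e I) :=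
          relaxRk_mono h0 (subset_insert _ _) (hIfin.insert e)
        omega
      have hun := relaxRk_union_eq hX hX0 hX1 hinc hIE (diff_subset.trans hJE) key
      rw [union_diff_self] at hun
      have hJle : relaxRk M X J ≤ relaxRk M X (I ∪ J) :=
        relaxRk_mono h0 subset_union_right
          (M.ground_finite.subset (union_subset hIE hJE))
      omega)
    (subset_ground := fun I hI => hI.1)
  set M' : Matroid α := IM.matroid with hM'_def
  have hE : M'.E = M.E := rfl
  haveI : M'.Finite := ⟨by rw [hE]; exact M.ground_finite⟩
  have hIndep : ∀ I : Set α, M'.Indep I ↔ Ind I := by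
    intro I
    simp [hM'_def, IM]
  -- the rank of M' equals relaxRk on subsets of the ground set
  have hrk' : ∀ S : Set α, S ⊆ M.E → M'.rk S = relaxRk M X S := by
    intro S hSE
    have hSfin : S.Finite := M.ground_finite.subset hSE
    obtain ⟨B, hBi, hBS, hBcard, hmax⟩ := M'.rk_spec S
    obtain ⟨hBE, hBr⟩ := (hIndep B).1 hBi
    have hBfin : B.Finite := hSfin.subset hBS
    have key : ∀ e ∈ S \ B, relaxRk M X (insert e B) = relaxRk M X B := by
      rintro e ⟨heS, heB⟩
      have hins : insert e B ⊆ S := insert_subset heS hBS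
      have hnid : ¬ M'.Indep (insert e B) := by
        intro hind
        have := hmax _ hind hins
        rw [Set.ncard_insert_of_notMem heB hBfin] at this
        omega
      have hne : relaxRk M X (insert e B) ≠ (insert e B).ncard := by
        intro h
        exact hnid ((hIndep _).2 ⟨hins.trans hSE, h⟩)
      have hcard2 : (insert e B).ncard = B.ncard + 1 :=
        Set.ncard_insert_of_notMem heB hBfin
      have hub : relaxRk M X (insert e B) ≤ (insert e B).ncard :=
        relaxRk_le_ncard h0 (hBfin.insert e)
      have hlb : relaxRk M X B ≤ relaxRk M X (insert e B) :=
        relaxRk_mono h0 (subset_insert _ _) (hBfin.insert e)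
      omega
    have hun := relaxRk_union_eq hX hX0 hX1 hinc (hBS.trans hSE)
      (diff_subset.trans hSE) key
    rw [union_diff_cancel hBS] at hun
    rw [← hBcard, hun, hBr]
  refine ⟨M', hE, ?_, ?_⟩
  · -- cyclic flats of M' are exactly those of M minus X
    ext Y
    simp only [Set.mem_setOf_eq, Set.mem_diff, Set.mem_singleton_iff]
    constructor
    · -- M'.CyclicFlat Y → M.CyclicFlat Y ∧ Y ≠ X
      intro hY'
      have hYE : Y ⊆ M.E := hE ▸ hY'.1.subset_ground
      have hYfin : Y.Finite := M.ground_finite.subset hYE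
      obtain ⟨G, hG, hGX, hGeq⟩ := relaxRk_attained h0 Y
      have hYG : Y ⊆ G := by
        by_contra hns
        obtain ⟨e, heY, heG⟩ := not_subset.1 hns
        obtain ⟨C, hC, hCY, heC⟩ := hY'.2 e heY
        have h2 : M'.rk (Y \ {e}) = M'.rk Y :=
          rk_diff_singleton_of_circuit (hE ▸ hYE) hC hCY heC
        rw [hrk' _ (diff_subset.trans hYE), hrk' _ hYE] at h2
        have hle : relaxRk M X (Y \ {e}) ≤ M.rk G + ((Y \ {e}) \ G).ncard :=
          relaxRk_le hG hGX
        have hcard : ((Y \ {e}) \ G).ncard + 1 = (Y \ G).ncard := by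
          rw [diff_diff_comm]
          exact Set.ncard_diff_singleton_add_one ⟨heY, heG⟩ (hYfin.diff)
        omega
      have hGY : G ⊆ Y := by
        by_contra hns
        obtain ⟨e, heG, heY⟩ := not_subset.1 hns
        have heE : e ∈ M.E := hG.1.subset_ground heG
        have hne : M'.rk (insert e Y) ≠ M'.rk Y := by
          intro hcontra
          have hmem := (mem_closure_iff_rk (N := M') (hE ▸ hYE) (hE ▸ heE)).2 hcontra
          rw [hY'.1.closure] at hmem
          exact heY hmem
        apply hne
        rw [hrk' _ (insert_subset heE hYE), hrk' _ hYE]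
        refine le_antisymm ?_ (relaxRk_mono h0 (subset_insert _ _) (hYfin.insert e))
        calc relaxRk M X (insert e Y) ≤ M.rk G + ((insert e Y) \ G).ncard :=
              relaxRk_le hG hGX
          _ = M.rk G + (Y \ G).ncard := by rw [Set.insert_diff_of_mem _ heG]
          _ = relaxRk M X Y := hGeq.symm
      have : Y = G := hYG.antisymm hGY
      rw [this]
      exact ⟨hG, hGX⟩
    · -- M.CyclicFlat Y ∧ Y ≠ X → M'.CyclicFlat Y
      rintro ⟨hY, hYX⟩
      have hYE : Y ⊆ M.E := hY.1.subset_ground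
      have hYfin : Y.Finite := M.ground_finite.subset hYE
      have hYrel : relaxRk M X Y = M.rk Y := relaxRk_eq_rk_of_cyclicFlat h0 hY hYX
      constructor
      · -- Y is a flat of M'
        refine flat_of_closure_subset ?_ (hE ▸ hYE)
        intro e he
        have heE : e ∈ M.E := hE ▸ M'.closure_subset_ground Y he
        by_contra heY
        have hrkeq := (mem_closure_iff_rk (N := M') (hE ▸ hYE) (hE ▸ heE)).1 he
        rw [hrk' _ (insert_subset heE hYE), hrk' _ hYE, hYrel] at hrkeq
        -- but in M, the rank of insert e Y is rk Y + 1 since Y is a flat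
        have hne : M.rk (insert e Y) ≠ M.rk Y := by
          intro hcontra
          have hmem := (mem_closure_iff_rk (N := M) hYE heE).2 hcontra
          rw [hY.1.closure] at hmem
          exact heY hmem
        have hub : M.rk (insert e Y) ≤ M.rk Y + 1 := rk_insert_le
        have hlbM : M.rk Y ≤ M.rk (insert e Y) := rk_mono (subset_insert _ _)
        have hge : M.rk (insert e Y) ≤ relaxRk M X (insert e Y) :=
          rk_le_relaxRk h0 (insert_subset heE hYE)
        omega
      · -- Y is cyclic in M'
        intro e heY
        obtain ⟨C, hC, hCY, heC⟩ := hY.2 e heY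
        have h1 : M.rk (Y \ {e}) = M.rk Y :=
          rk_diff_singleton_of_circuit hYE hC hCY heC
        have h2 : M'.rk (Y \ {e}) = M'.rk Y := by
          rw [hrk' _ (diff_subset.trans hYE), hrk' _ hYE, hYrel]
          refine le_antisymm ?_ ?_
          · have hle := relaxRk_le (S := Y \ {e}) hY hYX
            have hempty : (Y \ {e}) \ Y = ∅ := by
              rw [diff_diff_comm]
              simp
            rw [hempty] at hle
            simpa using hle
          · have hge := rk_le_relaxRk (M := M) (X := X) (S := Y \ {e}) h0
              (diff_subset.trans hYE)
            omega
        exact exists_circuit_of_rk_diff (N := M') (hE ▸ hYE) heY h2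
  · -- ranks agree
    intro Y hY hYX
    rw [hrk' Y hY.1.subset_ground, relaxRk_eq_rk_of_cyclicFlat h0 hY hYX]
end
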